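/- arXiv:1101.4446 — 7 statements merged into one kernel-verified Lean document; each statement's English description precedes it below -/
import Mathlib

section
/- For every ε ∈ (0,1) and every γ > 0 there exists a frog-strategy S such that Succ(S, A_{ε-ws}) > 1 − ε − γ, and moreover S has the safety property that for every b ∈ {0,1}^ω the death probability satisfies DP(S, b) ≤ ε + γ. -/
/-- A frog-strategy: for each infinite binary sequence `b` (0-indexed: `b i` is bit `b_{i+1}`),
a probability distribution on `ℕ ∪ {∞}`, where `some i` means "cross at minute `i+1`" and
`none` means "wait forever".  The distribution at minute `i+1` may depend only on the
first `i` bits of `b`. -/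
structure FrogStrategy where
  prob : (ℕ → Bool) → Option ℕ → ℝ
  nonneg : ∀ b o, 0 ≤ prob b o
  total : ∀ b, ∑' o : Option ℕ, prob b o = 1
  adapted : ∀ b b' : ℕ → Bool, ∀ i : ℕ,
    (∀ j, j < i → b j = b' j) → prob b (some i) = prob b' (some i)

/-- Success probability: total probability of crossing at a minute with no car. -/
noncomputable def succProb (S : FrogStrategy) (b : ℕ → Bool) : ℝ :=
  ∑' i : ℕ, if b i = false then S.prob b (some i) else 0

/-- Death probability: total probability of crossing at a minute with a car. -/
noncomputable def deathProb (S : FrogStrategy) (b : ℕ → Bool) : ℝ :=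
  ∑' i : ℕ, if b i = true then S.prob b (some i) else 0

/-- `cars b t` is `N_t(b) = b_1 + ⋯ + b_t`, the number of cars among the first `t` minutes. -/
def cars (b : ℕ → Bool) (t : ℕ) : ℕ :=
  ((Finset.range t).filter (fun i => b i = true)).card

/-- `b` is `ε`-weakly sparse if `lim_{s→∞} inf_{t ≥ s} N_t(b)/t ≤ ε`. -/
def epsWeaklySparse (ε : ℝ) (b : ℕ → Bool) : Prop :=
  Filter.liminf (fun t : ℕ => (cars b t : ℝ) / t) Filter.atTop ≤ ε

open Filter Finset

namespace FrogAux

/-- State after `n` minutes: (success mass so far, death mass so far). -/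
noncomputable def fS (lam g' k : ℝ) (b : ℕ → Bool) : ℕ → ℝ × ℝ
  | 0 => (0, 0)
  | n + 1 =>
      if b n then
        ((fS lam g' k b n).1,
          (fS lam g' k b n).2 +
            min (k * (g' + lam * (fS lam g' k b n).1 - (fS lam g' k b n).2))
              (1 - (fS lam g' k b n).1 - (fS lam g' k b n).2))
      else
        ((fS lam g' k b n).1 +
            min (k * (g' + lam * (fS lam g' k b n).1 - (fS lam g' k b n).2))
              (1 - (fS lam g' k b n).1 - (fS lam g' k b n).2),
          (fS lam g' k b n).2)

/-- Slack variable. -/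
noncomputable def sig (lam g' k : ℝ) (b : ℕ → Bool) (n : ℕ) : ℝ :=
  g' + lam * (fS lam g' k b n).1 - (fS lam g' k b n).2

/-- Remaining mass. -/
noncomputable def rem (lam g' k : ℝ) (b : ℕ → Bool) (n : ℕ) : ℝ :=
  1 - (fS lam g' k b n).1 - (fS lam g' k b n).2

/-- Mass placed at minute `n`. -/
noncomputable def fM (lam g' k : ℝ) (b : ℕ → Bool) (n : ℕ) : ℝ :=
  min (k * sig lam g' k b n) (rem lam g' k b n)

variable {lam g' k : ℝ} {b : ℕ → Bool}

lemma fS_zero : fS lam g' k b 0 = (0, 0) := rfl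

lemma fS_succ (n : ℕ) :
    fS lam g' k b (n + 1) =
      if b n then ((fS lam g' k b n).1, (fS lam g' k b n).2 + fM lam g' k b n)
      else ((fS lam g' k b n).1 + fM lam g' k b n, (fS lam g' k b n).2) := by
  simp only [fS, fM, sig, rem]

lemma fS_succ_true {n : ℕ} (h : b n = true) :
    fS lam g' k b (n + 1) =
      ((fS lam g' k b n).1, (fS lam g' k b n).2 + fM lam g' k b n) := by
  rw [fS_succ, h]; simp

lemma fS_succ_false {n : ℕ} (h : b n = false) :
    fS lam g' k b (n + 1) =
      ((fS lam g' k b n).1 + fM lam g' k b n, (fS lam g' k b n).2) := by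
  rw [fS_succ, h]; simp

lemma sig_def (n : ℕ) :
    sig lam g' k b n = g' + lam * (fS lam g' k b n).1 - (fS lam g' k b n).2 := rfl

lemma rem_def (n : ℕ) :
    rem lam g' k b n = 1 - (fS lam g' k b n).1 - (fS lam g' k b n).2 := rfl

section Inv

variable (hlam : 0 < lam) (hg' : 0 < g') (hk0 : 0 < k) (hk1 : k < 1)

include hlam hg' hk0 hk1 in
lemma fS_inv (n : ℕ) :
    0 ≤ (fS lam g' k b n).1 ∧ 0 ≤ (fS lam g' k b n).2 ∧
      0 ≤ rem lam g' k b n ∧ 0 < sig lam g' k b n := by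
  induction n with
  | zero =>
      refine ⟨le_refl _, le_refl _, ?_, ?_⟩ <;> simp [rem_def, sig_def, fS_zero] <;> linarith
  | succ n ih =>
      obtain ⟨h1, h2, h3, h4⟩ := ih
      have hm0 : 0 ≤ fM lam g' k b n :=
        le_min (mul_nonneg hk0.le h4.le) h3
      have hmR : fM lam g' k b n ≤ rem lam g' k b n := min_le_right _ _
      have hms : fM lam g' k b n ≤ k * sig lam g' k b n := min_le_left _ _
      rw [rem_def] at h3 hmR
      rw [sig_def] at h4 hms
      have hk1' : (0:ℝ) < 1 - k := by linarith
      cases hb : b n with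
      | true =>
          have e : fS lam g' k b (n + 1) =
              ((fS lam g' k b n).1, (fS lam g' k b n).2 + fM lam g' k b n) :=
            fS_succ_true hb
          refine ⟨?_, ?_, ?_, ?_⟩
          · rw [e]; exact h1
          · rw [e]; dsimp only; linarith
          · rw [rem_def, e]; dsimp only; linarith
          · rw [sig_def, e]; dsimp only; nlinarith [mul_pos hk1' h4]
      | false =>
          have e : fS lam g' k b (n + 1) =
              ((fS lam g' k b n).1 + fM lam g' k b n, (fS lam g' k b n).2) :=
            fS_succ_false hb
          refine ⟨?_, ?_, ?_, ?_⟩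
          · rw [e]; dsimp only; linarith
          · rw [e]; exact h2
          · rw [rem_def, e]; dsimp only; linarith
          · rw [sig_def, e]; dsimp only; nlinarith

include hlam hg' hk0 hk1 in
lemma fM_nonneg (n : ℕ) : 0 ≤ fM lam g' k b n :=
  le_min (mul_nonneg hk0.le (fS_inv hlam hg' hk0 hk1 n).2.2.2.le)
    (fS_inv hlam hg' hk0 hk1 n).2.2.1

lemma sum_range_fM (n : ℕ) :
    ∑ i ∈ Finset.range n, fM lam g' k b i = (fS lam g' k b n).1 + (fS lam g' k b n).2 := by
  induction n with
  | zero => simp [fS_zero]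
  | succ n ih =>
      rw [Finset.sum_range_succ, ih]
      cases hb : b n with
      | true => rw [fS_succ_true hb]; dsimp only; ring
      | false => rw [fS_succ_false hb]; dsimp only; ring

lemma sum_range_succ_part (n : ℕ) :
    ∑ i ∈ Finset.range n, (if b i = false then fM lam g' k b i else 0) =
      (fS lam g' k b n).1 := by
  induction n with
  | zero => simp [fS_zero]
  | succ n ih =>
      rw [Finset.sum_range_succ, ih]
      cases hb : b n with
      | true => rw [fS_succ_true hb]; simp [hb]
      | false => rw [fS_succ_false hb]; simp [hb]

lemma sum_range_death_part (n : ℕ) :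
    ∑ i ∈ Finset.range n, (if b i = true then fM lam g' k b i else 0) =
      (fS lam g' k b n).2 := by
  induction n with
  | zero => simp [fS_zero]
  | succ n ih =>
      rw [Finset.sum_range_succ, ih]
      cases hb : b n with
      | true => rw [fS_succ_true hb]; simp [hb]
      | false => rw [fS_succ_false hb]; simp [hb]

include hlam hg' hk0 hk1 in
lemma sum_range_fM_le_one (n : ℕ) : ∑ i ∈ Finset.range n, fM lam g' k b i ≤ 1 := by
  rw [sum_range_fM]
  have h := (fS_inv (b := b) hlam hg' hk0 hk1 n).2.2.1
  rw [rem_def] at h; linarith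

include hlam hg' hk0 hk1 in
lemma summable_fM : Summable (fM lam g' k b) :=
  summable_of_sum_range_le (fM_nonneg hlam hg' hk0 hk1) (sum_range_fM_le_one hlam hg' hk0 hk1)

include hlam hg' hk0 hk1 in
lemma tsum_fM_le_one : ∑' i, fM lam g' k b i ≤ 1 :=
  Real.tsum_le_of_sum_range_le (fM_nonneg hlam hg' hk0 hk1) (sum_range_fM_le_one hlam hg' hk0 hk1)

/-- Adaptedness: the state only depends on the bits read so far. -/
lemma fS_congr {b' : ℕ → Bool} {i : ℕ} (h : ∀ j, j < i → b j = b' j) :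
    ∀ n, n ≤ i → fS lam g' k b n = fS lam g' k b' n := by
  intro n
  induction n with
  | zero => intro _; rfl
  | succ n ih =>
      intro hn
      have hb : b n = b' n := h n (by omega)
      have hfs : fS lam g' k b n = fS lam g' k b' n := ih (by omega)
      rw [fS_succ, fS_succ, hb, hfs]
      cases b' n <;> simp [fM, sig_def, rem_def, hfs]

lemma fM_congr {b' : ℕ → Bool} {i : ℕ} (h : ∀ j, j < i → b j = b' j) :
    fM lam g' k b i = fM lam g' k b' i := by
  rw [fM, fM, sig_def, sig_def, rem_def, rem_def, fS_congr h i le_rfl]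

lemma sig_succ_true {n : ℕ} (hb : b n = true) :
    sig lam g' k b (n + 1) = sig lam g' k b n - fM lam g' k b n := by
  rw [sig_def, sig_def, fS_succ_true hb]; dsimp only; ring

lemma sig_succ_false {n : ℕ} (hb : b n = false) :
    sig lam g' k b (n + 1) = sig lam g' k b n + lam * fM lam g' k b n := by
  rw [sig_def, sig_def, fS_succ_false hb]; dsimp only; ring

/-- Exact multiplicative formula for the slack, once all placements are `k * sig`. -/
lemma sig_growth (I : ℕ)
    (H : ∀ j, I ≤ j → fM lam g' k b j = k * sig lam g' k b j) :
    ∀ n, I ≤ n → sig lam g' k b n =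
      sig lam g' k b I *
        ((1 + lam * k) ^ ((Finset.Ico I n).filter (fun i => b i = false)).card *
          (1 - k) ^ ((Finset.Ico I n).filter (fun i => b i = true)).card) := by
  intro n hn
  induction n, hn using Nat.le_induction with
  | base => simp
  | succ n hn ih =>
      have hins : Finset.Ico I (n + 1) = insert n (Finset.Ico I n) :=
        Nat.Ico_succ_right_eq_insert_Ico hn
      have hnmem : n ∉ Finset.Ico I n := by simp
      cases hb : b n with
      | true =>
          have e1 : ((Finset.Ico I (n+1)).filter (fun i => b i = true)).card =
              ((Finset.Ico I n).filter (fun i => b i = true)).card + 1 := by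
            rw [hins, Finset.filter_insert, if_pos hb,
              Finset.card_insert_of_notMem (fun h => hnmem (Finset.mem_of_mem_filter _ h))]
          have e2 : ((Finset.Ico I (n+1)).filter (fun i => b i = false)).card =
              ((Finset.Ico I n).filter (fun i => b i = false)).card := by
            rw [hins, Finset.filter_insert, if_neg (by simp [hb])]
          rw [sig_succ_true hb, H n hn, e1, e2, ih, pow_succ]
          ring
      | false =>
          have e1 : ((Finset.Ico I (n+1)).filter (fun i => b i = true)).card =
              ((Finset.Ico I n).filter (fun i => b i = true)).card := by
            rw [hins, Finset.filter_insert, if_neg (by simp [hb])]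
          have e2 : ((Finset.Ico I (n+1)).filter (fun i => b i = false)).card =
              ((Finset.Ico I n).filter (fun i => b i = false)).card + 1 := by
            rw [hins, Finset.filter_insert, if_pos hb,
              Finset.card_insert_of_notMem (fun h => hnmem (Finset.mem_of_mem_filter _ h))]
          rw [sig_succ_false hb, H n hn, e1, e2, ih, pow_succ]
          ring

lemma count_ZO (I n : ℕ) :
    ((Finset.Ico I n).filter (fun i => b i = false)).card +
      ((Finset.Ico I n).filter (fun i => b i = true)).card = n - I := by
  classical
  have : ((Finset.Ico I n).filter (fun i => b i = false)).card =
      ((Finset.Ico I n).filter (fun i => ¬(b i = true))).card := by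
    apply congrArg
    apply Finset.filter_congr
    intro i _
    simp
  rw [this, add_comm, Finset.card_filter_add_card_filter_not, Nat.card_Ico]

lemma count_O_le_cars (I n : ℕ) :
    ((Finset.Ico I n).filter (fun i => b i = true)).card ≤ cars b n := by
  apply Finset.card_le_card
  apply Finset.filter_subset_filter
  rw [Finset.range_eq_Ico]
  exact Finset.Ico_subset_Ico (Nat.zero_le I) le_rfl

include hlam hg' hk0 hk1 in
lemma sig_le (n : ℕ) : sig lam g' k b n ≤ g' + lam := by
  obtain ⟨h1, h2, h3, _⟩ := fS_inv (b := b) hlam hg' hk0 hk1 n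
  rw [rem_def] at h3
  rw [sig_def]
  nlinarith

include hlam hg' hk0 hk1 in
/-- The heart of the theorem: on sequences with density dips below `p`,
all mass eventually gets placed. -/
lemma tsum_fM_eq_one {p : ℝ} (hp0 : 0 ≤ p)
    (hglog : 0 < (1 - p) * Real.log (1 + lam * k) + p * Real.log (1 - k))
    (hdip : ∀ N : ℕ, ∃ t, N ≤ t ∧ (cars b t : ℝ) ≤ p * t) :
    ∑' i, fM lam g' k b i = 1 := by
  set gq := (1 - p) * Real.log (1 + lam * k) + p * Real.log (1 - k) with hgq
  have hT : ∑' i, fM lam g' k b i ≤ 1 := tsum_fM_le_one hlam hg' hk0 hk1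
  by_contra hne
  have hTlt : ∑' i, fM lam g' k b i < 1 := lt_of_le_of_ne hT hne
  set r := 1 - ∑' i, fM lam g' k b i with hrdef
  have hr : 0 < r := by rw [hrdef]; linarith
  have hremge : ∀ n, r ≤ rem lam g' k b n := by
    intro n
    have hs := Summable.sum_le_tsum (Finset.range n) (fun i _ => fM_nonneg hlam hg' hk0 hk1 i)
      (summable_fM (b := b) hlam hg' hk0 hk1)
    rw [sum_range_fM] at hs
    rw [rem_def, hrdef]
    linarith
  have hm0 : Filter.Tendsto (fM lam g' k b) atTop (nhds 0) :=
    (summable_fM (b := b) hlam hg' hk0 hk1).tendsto_atTop_zero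
  obtain ⟨I, hI⟩ := Filter.eventually_atTop.mp (hm0.eventually (gt_mem_nhds hr))
  have hH : ∀ j, I ≤ j → fM lam g' k b j = k * sig lam g' k b j := by
    intro j hj
    rcases le_or_gt (k * sig lam g' k b j) (rem lam g' k b j) with h | h
    · exact min_eq_left h
    · exfalso
      have : fM lam g' k b j = rem lam g' k b j := min_eq_right h.le
      have := hI j hj
      have := hremge j
      linarith
  have hgrow := sig_growth (b := b) I hH
  have hsigI : 0 < sig lam g' k b I := (fS_inv hlam hg' hk0 hk1 I).2.2.2
  have hA : (1:ℝ) < 1 + lam * k := by nlinarith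
  have hB0 : (0:ℝ) < 1 - k := by linarith
  have hB1 : (1:ℝ) - k ≤ 1 := by linarith
  have hlogA : 0 ≤ Real.log (1 + lam * k) := Real.log_nonneg hA.le
  have hlogB : Real.log (1 - k) ≤ 0 := Real.log_nonpos hB0.le hB1
  obtain ⟨N₁, hN₁⟩ := exists_nat_gt
    ((Real.log (g' + lam) - Real.log (sig lam g' k b I) + I * Real.log (1 + lam * k)) / gq)
  obtain ⟨t, htN, htp⟩ := hdip (max N₁ I)
  have htI : I ≤ t := le_trans (le_max_right _ _) htN
  have htN1 : (N₁:ℝ) ≤ (t:ℝ) := Nat.cast_le.mpr (le_trans (le_max_left _ _) htN)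
  set Z := ((Finset.Ico I t).filter (fun i => b i = false)).card with hZdef
  set O := ((Finset.Ico I t).filter (fun i => b i = true)).card with hOdef
  have hZO : Z + O = t - I := count_ZO I t
  have hZr : (Z:ℝ) = (t:ℝ) - (I:ℝ) - (O:ℝ) := by
    have : ((Z + O : ℕ):ℝ) = ((t - I : ℕ):ℝ) := by rw [hZO]
    rw [Nat.cast_add, Nat.cast_sub htI] at this
    linarith
  have hOr : (O:ℝ) ≤ p * t := by
    calc (O:ℝ) ≤ (cars b t : ℝ) := Nat.cast_le.mpr (count_O_le_cars I t)
    _ ≤ p * t := htp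
  -- the log of the slack at time t
  have hst := hgrow t htI
  have hpowZ : (0:ℝ) < (1 + lam * k) ^ Z := pow_pos (by linarith) Z
  have hpowO : (0:ℝ) < (1 - k) ^ O := pow_pos hB0 O
  have hsigt : 0 < sig lam g' k b t := (fS_inv hlam hg' hk0 hk1 t).2.2.2
  have hlog : Real.log (sig lam g' k b t) =
      Real.log (sig lam g' k b I) +
        ((Z:ℝ) * Real.log (1 + lam * k) + (O:ℝ) * Real.log (1 - k)) := by
    rw [hst, Real.log_mul hsigI.ne' (by positivity), Real.log_mul hpowZ.ne' hpowO.ne',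
      Real.log_pow, Real.log_pow]
  have hbound : (t:ℝ) * gq - (I:ℝ) * Real.log (1 + lam * k) ≤
      (Z:ℝ) * Real.log (1 + lam * k) + (O:ℝ) * Real.log (1 - k) := by
    have h1 : (p * t) * (Real.log (1 - k) - Real.log (1 + lam * k)) ≤
        (O:ℝ) * (Real.log (1 - k) - Real.log (1 + lam * k)) :=
      mul_le_mul_of_nonpos_right hOr (by linarith)
    rw [hgq]
    nlinarith [h1, hZr]
  have htgq : Real.log (g' + lam) - Real.log (sig lam g' k b I) +
      (I:ℝ) * Real.log (1 + lam * k) < (t:ℝ) * gq := by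
    have := (div_lt_iff₀ hglog).mp (lt_of_lt_of_le hN₁ htN1)
    linarith
  have hfinal : Real.log (g' + lam) < Real.log (sig lam g' k b t) := by
    rw [hlog]; linarith
  have hgl : (0:ℝ) < g' + lam := by linarith
  have : g' + lam < sig lam g' k b t := by
    have h2 := Real.exp_lt_exp.mpr hfinal
    rwa [Real.exp_log hgl, Real.exp_log hsigt] at h2
  have := sig_le (b := b) hlam hg' hk0 hk1 t
  linarith

/-- The strategy's probability function. -/
noncomputable def theProb (lam g' k : ℝ) (b : ℕ → Bool) : Option ℕ → ℝ
  | none => 1 - ∑' i, fM lam g' k b i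
  | some i => fM lam g' k b i

@[simp] lemma theProb_some (i : ℕ) :
    theProb lam g' k b (some i) = fM lam g' k b i := rfl

@[simp] lemma theProb_none :
    theProb lam g' k b none = 1 - ∑' i, fM lam g' k b i := rfl

include hlam hg' hk0 hk1 in
lemma tsum_theProb : ∑' o : Option ℕ, theProb lam g' k b o = 1 := by
  have hsum : Summable (fM lam g' k b) := summable_fM hlam hg' hk0 hk1
  have hsupp : ∀ x : Option ℕ,
      x ∉ Set.range (some : ℕ → Option ℕ) → Option.elim x 0 (fM lam g' k b) = 0 := by
    intro x hx
    cases x with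
    | none => rfl
    | some i => exact absurd ⟨i, rfl⟩ hx
  have hg2 : Summable (fun o : Option ℕ => Option.elim o 0 (fM lam g' k b)) := by
    have := (Function.Injective.summable_iff (Option.some_injective ℕ) hsupp).mp
    exact this hsum
  have ht2 : ∑' o : Option ℕ, Option.elim o 0 (fM lam g' k b) = ∑' i, fM lam g' k b i := by
    have hsupp' : Function.support (fun o : Option ℕ => Option.elim o 0 (fM lam g' k b)) ⊆
        Set.range (some : ℕ → Option ℕ) := by
      intro x hx
      by_contra hxr
      exact hx (hsupp x hxr)
    exact ((Option.some_injective ℕ).tsum_eq hsupp').symm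
  have hg1 : Summable (fun o : Option ℕ =>
      if o = none then (1 - ∑' i, fM lam g' k b i) else 0) := by
    apply summable_of_ne_finset_zero (s := {(none : Option ℕ)})
    intro o ho
    simp only [Finset.mem_singleton] at ho
    simp [ho]
  have ht1 : ∑' o : Option ℕ,
      (if o = none then (1 - ∑' i, fM lam g' k b i) else 0) =
        1 - ∑' i, fM lam g' k b i := tsum_ite_eq none _
  have hfun : ∀ o : Option ℕ, theProb lam g' k b o =
      (if o = none then (1 - ∑' i, fM lam g' k b i) else 0) +
        Option.elim o 0 (fM lam g' k b) := by
    intro o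
    cases o with
    | none => simp
    | some i => simp
  calc ∑' o : Option ℕ, theProb lam g' k b o
      = ∑' o : Option ℕ,
          ((if o = none then (1 - ∑' i, fM lam g' k b i) else 0) +
            Option.elim o 0 (fM lam g' k b)) := tsum_congr hfun
    _ = (∑' o : Option ℕ, (if o = none then (1 - ∑' i, fM lam g' k b i) else 0)) +
          ∑' o : Option ℕ, Option.elim o 0 (fM lam g' k b) := Summable.tsum_add hg1 hg2
    _ = 1 := by rw [ht1, ht2]; ring

/-- The frog strategy. -/
noncomputable def theStrategy (lam g' k : ℝ) (hlam : 0 < lam) (hg' : 0 < g')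
    (hk0 : 0 < k) (hk1 : k < 1) : FrogStrategy where
  prob := theProb lam g' k
  nonneg := by
    intro b o
    cases o with
    | none =>
        have := tsum_fM_le_one (b := b) hlam hg' hk0 hk1
        simp only [theProb_none]
        linarith
    | some i => exact fM_nonneg hlam hg' hk0 hk1 i
  total := fun b => tsum_theProb hlam hg' hk0 hk1
  adapted := fun b b' i h => fM_congr h

lemma succ_theStrategy :
    succProb (theStrategy lam g' k hlam hg' hk0 hk1) b =
      ∑' i, (if b i = false then fM lam g' k b i else 0) := rfl

lemma death_theStrategy :
    deathProb (theStrategy lam g' k hlam hg' hk0 hk1) b =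
      ∑' i, (if b i = true then fM lam g' k b i else 0) := rfl

include hlam hg' hk0 hk1 in
lemma summable_succ_part : Summable (fun i => if b i = false then fM lam g' k b i else 0) := by
  refine Summable.of_nonneg_of_le ?_ ?_ (summable_fM (b := b) hlam hg' hk0 hk1)
  · intro i
    split <;> [exact fM_nonneg hlam hg' hk0 hk1 i; exact le_refl 0]
  · intro i
    split <;> [exact le_refl _; exact fM_nonneg hlam hg' hk0 hk1 i]

include hlam hg' hk0 hk1 in
lemma summable_death_part : Summable (fun i => if b i = true then fM lam g' k b i else 0) := by
  refine Summable.of_nonneg_of_le ?_ ?_ (summable_fM (b := b) hlam hg' hk0 hk1)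
  · intro i
    split <;> [exact fM_nonneg hlam hg' hk0 hk1 i; exact le_refl 0]
  · intro i
    split <;> [exact le_refl _; exact fM_nonneg hlam hg' hk0 hk1 i]

include hlam hg' hk0 hk1 in
/-- Absolute death bound, valid on every sequence. -/
lemma death_le : ∑' i, (if b i = true then fM lam g' k b i else 0) ≤ (lam + g') / (1 + lam) := by
  apply Real.tsum_le_of_sum_range_le
  · intro i
    split <;> [exact fM_nonneg hlam hg' hk0 hk1 i; exact le_refl 0]
  · intro n
    rw [sum_range_death_part]
    obtain ⟨h1, h2, h3, h4⟩ := fS_inv (b := b) hlam hg' hk0 hk1 n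
    rw [rem_def] at h3
    rw [sig_def] at h4
    rw [le_div_iff₀ (by linarith : (0:ℝ) < 1 + lam)]
    nlinarith

include hlam hg' hk0 hk1 in
/-- Death is at most `lam * success + g'`. -/
lemma death_le_slack :
    ∑' i, (if b i = true then fM lam g' k b i else 0) ≤
      lam * (∑' i, (if b i = false then fM lam g' k b i else 0)) + g' := by
  apply Real.tsum_le_of_sum_range_le
  · intro i
    split <;> [exact fM_nonneg hlam hg' hk0 hk1 i; exact le_refl 0]
  · intro n
    rw [sum_range_death_part]
    obtain ⟨h1, h2, h3, h4⟩ := fS_inv (b := b) hlam hg' hk0 hk1 n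
    rw [sig_def] at h4
    have hSM : (fS lam g' k b n).1 ≤ ∑' i, (if b i = false then fM lam g' k b i else 0) := by
      have := Summable.sum_le_tsum (Finset.range n)
        (fun i _ => by split <;> [exact fM_nonneg hlam hg' hk0 hk1 i; exact le_refl 0])
        (summable_succ_part (b := b) hlam hg' hk0 hk1)
      rwa [sum_range_succ_part] at this
    nlinarith

include hlam hg' hk0 hk1 in
/-- On sequences where all mass is placed, success + death = 1. -/
lemma succ_add_death (hts : ∑' i, fM lam g' k b i = 1) :
    (∑' i, (if b i = false then fM lam g' k b i else 0)) +
      (∑' i, (if b i = true then fM lam g' k b i else 0)) = 1 := by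
  rw [← Summable.tsum_add (summable_succ_part hlam hg' hk0 hk1) (summable_death_part hlam hg' hk0 hk1)]
  rw [← hts]
  apply tsum_congr
  intro i
  cases hb : b i <;> simp [hb]

end Inv

end FrogAux

set_option maxHeartbeats 1000000

/-- Theorem 2.2 (main theorem): for every `ε ∈ (0,1)` and `γ > 0` there is a frog-strategy
whose success probability is `> 1 - ε - γ` uniformly on all `ε`-weakly sparse sequences
(i.e. `Succ(S, A_{ε-ws}) > 1 - ε - γ`), and whose death probability is `≤ ε + γ` on
every sequence. -/
theorem main_theorem (ε γ : ℝ) (hε0 : 0 < ε) (hε1 : ε < 1) (hγ : 0 < γ) :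
    ∃ S : FrogStrategy,
      (∃ c : ℝ, 1 - ε - γ < c ∧ ∀ b : ℕ → Bool, epsWeaklySparse ε b → c ≤ succProb S b) ∧
      (∀ b : ℕ → Bool, deathProb S b ≤ ε + γ) := by
  by_cases hcase : ε + γ / 2 < 1
  case neg =>
    -- trivial strategy: never cross
    have h1 : 1 ≤ ε + γ / 2 := not_lt.mp hcase
    refine ⟨⟨fun _ o => if o = none then 1 else 0, ?_, ?_, ?_⟩, ?_, ?_⟩
    · intro b o; split <;> norm_num
    · intro b; exact tsum_ite_eq (none : Option ℕ) 1
    · intro b b' i h; rfl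
    · refine ⟨(1 - ε - γ) / 2, by linarith, ?_⟩
      intro b _
      have : succProb ⟨fun _ o => if o = none then 1 else 0, by intro b o; split <;> norm_num,
          fun b => tsum_ite_eq (none : Option ℕ) 1, fun b b' i h => rfl⟩ b = 0 := by
        simp [succProb]
      rw [this]
      linarith
    · intro b
      have : deathProb ⟨fun _ o => if o = none then 1 else 0, by intro b o; split <;> norm_num,
          fun b => tsum_ite_eq (none : Option ℕ) 1, fun b b' i h => rfl⟩ b = 0 := by
        simp [deathProb]
      rw [this]
      linarith
  case pos =>
    have hu : (0:ℝ) < 1 - ε - γ / 2 := by linarith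
    set lam : ℝ := (ε + γ / 2) / (1 - ε - γ / 2) with hlamdef
    have hlam : 0 < lam := div_pos (by linarith) hu
    have hlamu : lam * (1 - ε - γ / 2) = ε + γ / 2 := div_mul_cancel₀ _ hu.ne'
    set g' : ℝ := γ / 4 with hg'def
    have hg' : 0 < g' := by rw [hg'def]; linarith
    set p : ℝ := ε + γ / 4 with hpdef
    have hp0 : 0 ≤ p := by rw [hpdef]; linarith
    have hp1 : p < 1 := by rw [hpdef]; linarith
    set Δ : ℝ := (1 - p) * lam - p with hDdef
    have hΔu : Δ * (1 - ε - γ / 2) = γ / 4 * (1 - ε - γ / 4) - γ/4 * (1 - ε - γ/4) + γ/4 := by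
      rw [hDdef, hpdef]
      linear_combination (1 - (ε + γ / 4)) * hlamu
    have hΔ : 0 < Δ := by nlinarith
    set k : ℝ := min (1/2 : ℝ) (Δ / (2 * lam)) with hkdef
    have hk0 : 0 < k := lt_min (by norm_num) (div_pos hΔ (by linarith))
    have hk1 : k < 1 := lt_of_le_of_lt (min_le_left _ _) (by norm_num)
    have hlk : lam * k ≤ Δ / 2 := by
      have h1 : k ≤ Δ / (2 * lam) := min_le_right _ _
      have h2 : lam * k ≤ lam * (Δ / (2 * lam)) := mul_le_mul_of_nonneg_left h1 hlam.le
      have h3 : lam * (Δ / (2 * lam)) = Δ / 2 := by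
        field_simp
      linarith
    clear_value lam g' p Δ k
    -- the key logarithmic positivity
    have hA1 : (1:ℝ) < 1 + lam * k := by nlinarith
    have hB0 : (0:ℝ) < 1 - k := by linarith
    have hlogA : lam * k / (1 + lam * k) ≤ Real.log (1 + lam * k) := by
      have h := Real.log_le_sub_one_of_pos (show (0:ℝ) < (1 + lam * k)⁻¹ by positivity)
      rw [Real.log_inv] at h
      have he : 1 - (1 + lam * k)⁻¹ = lam * k / (1 + lam * k) := by
        field_simp; ring
      linarith
    have hlogB : -(k / (1 - k)) ≤ Real.log (1 - k) := by
      have h := Real.log_le_sub_one_of_pos (show (0:ℝ) < (1 - k)⁻¹ by positivity)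
      rw [Real.log_inv] at h
      have he : 1 - (1 - k)⁻¹ = -(k / (1 - k)) := by
        field_simp; ring
      linarith
    have hkey : p * k * (1 + lam * k) < (1 - p) * (lam * k) * (1 - k) := by
      nlinarith [mul_pos hk0 (show 0 < Δ - lam * k by linarith)]
    have hglog : 0 < (1 - p) * Real.log (1 + lam * k) + p * Real.log (1 - k) := by
      have hd1 : p * (k / (1 - k)) < (1 - p) * (lam * k / (1 + lam * k)) := by
        have e1 : p * (k / (1 - k)) = p * k / (1 - k) := by ring
        have e2 : (1 - p) * (lam * k / (1 + lam * k)) = (1 - p) * (lam * k) / (1 + lam * k) := by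
          ring
        rw [e1, e2, div_lt_div_iff₀ hB0 (by linarith : (0:ℝ) < 1 + lam * k)]
        nlinarith [hkey]
      have h2 : (1 - p) * (lam * k / (1 + lam * k)) ≤ (1 - p) * Real.log (1 + lam * k) :=
        mul_le_mul_of_nonneg_left hlogA (by linarith)
      have h3 : p * (-(k / (1 - k))) ≤ p * Real.log (1 - k) :=
        mul_le_mul_of_nonneg_left hlogB hp0
      rw [mul_neg] at h3
      linarith
    refine ⟨FrogAux.theStrategy lam g' k hlam hg' hk0 hk1, ?_, ?_⟩
    · -- success bound
      refine ⟨(1 - g') * (1 - ε - γ / 2), ?_, ?_⟩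
      · rw [hg'def]; nlinarith
      · intro b hb
        -- dips below p
        have hdip : ∀ N : ℕ, ∃ t, N ≤ t ∧ (cars b t : ℝ) ≤ p * t := by
          have hble : ∀ t : ℕ, (cars b t : ℝ) / t ≤ 1 := by
            intro t
            rcases Nat.eq_zero_or_pos t with ht | ht
            · simp [ht]
            · rw [div_le_one (by positivity : (0:ℝ) < (t:ℝ))]
              have : cars b t ≤ t := by
                calc cars b t ≤ (Finset.range t).card := Finset.card_filter_le _ _
                _ = t := Finset.card_range t
              exact_mod_cast this
          have hcob : Filter.IsCoboundedUnder (· ≥ ·) Filter.atTop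
              (fun t : ℕ => (cars b t : ℝ) / t) :=
            Filter.isCoboundedUnder_ge_of_le _ hble
          have hfr : ∃ᶠ t in Filter.atTop, (cars b t : ℝ) / t < p :=
            Filter.frequently_lt_of_liminf_lt hcob (lt_of_le_of_lt hb (by rw [hpdef]; linarith))
          intro N
          obtain ⟨t, ht, hlt⟩ := Filter.frequently_atTop.mp hfr (max N 1)
          refine ⟨t, le_trans (le_max_left _ _) ht, ?_⟩
          have ht1 : (0:ℝ) < (t:ℝ) := by
            have : 1 ≤ t := le_trans (le_max_right _ _) ht
            exact_mod_cast Nat.lt_of_lt_of_le Nat.zero_lt_one this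
          exact le_of_lt ((div_lt_iff₀ ht1).mp hlt)
        have hts : ∑' i, FrogAux.fM lam g' k b i = 1 :=
          FrogAux.tsum_fM_eq_one hlam hg' hk0 hk1 hp0 hglog hdip
        have hsd := FrogAux.succ_add_death (b := b) hlam hg' hk0 hk1 hts
        have hdsl := FrogAux.death_le_slack (b := b) hlam hg' hk0 hk1
        rw [FrogAux.succ_theStrategy]
        set Sv := ∑' i, (if b i = false then FrogAux.fM lam g' k b i else 0) with hSv
        set Dv := ∑' i, (if b i = true then FrogAux.fM lam g' k b i else 0) with hDv
        -- Sv * (1 + lam) ≥ 1 - g'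
        have h4 : 1 - g' ≤ Sv * (1 + lam) := by nlinarith
        have h5 : (1 + lam) * (1 - ε - γ / 2) = 1 := by linear_combination hlamu
        nlinarith [h4, h5, hu]
    · -- death bound
      intro b
      rw [FrogAux.death_theStrategy]
      have h1 := FrogAux.death_le (b := b) hlam hg' hk0 hk1
      have h2 : (lam + g') / (1 + lam) ≤ ε + γ := by
        rw [div_le_iff₀ (by linarith : (0:ℝ) < 1 + lam)]
        nlinarith [hlamu, hlam, hγ]
      linarith
end

section
/- For every δ > 0 and ε > 0 there exists a (δ,ε)-successful forecasting strategy; moreover it can be chosen so that, setting n := ⌈4/(δε²)⌉, every forecast it makes satisfies t + N ≤ 2^n (it only ever forecasts about intervals contained in the first 2^n bits of the sequence). -/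
open scoped Classical

/-- A forecasting strategy: for each sequence `x` (0-indexed: `x i` is bit `x_{i+1}`),
a probability distribution on triples `(t, p, N)`, meaning "after seeing the first `t`
bits, forecast that a `p` fraction of the next `N` bits will be 1s".  The support
consists of triples with `p ∈ ℚ ∩ [0,1]` and `N ≥ 1`, and the probability of a forecast
made at time `t` depends only on the first `t` bits of `x`. -/
structure ForecastStrategy where
  prob : (ℕ → Bool) → ℕ × ℚ × ℕ → ℝ
  nonneg : ∀ x f, 0 ≤ prob x f
  total : ∀ x, ∑' f : ℕ × ℚ × ℕ, prob x f = 1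
  valid : ∀ x (t : ℕ) (p : ℚ) (N : ℕ), prob x (t, p, N) ≠ 0 → 0 ≤ p ∧ p ≤ 1 ∧ 1 ≤ N
  adapted : ∀ x x' : ℕ → Bool, ∀ (t : ℕ) (p : ℚ) (N : ℕ),
    (∀ j, j < t → x j = x' j) → prob x (t, p, N) = prob x' (t, p, N)

/-- The fraction of 1s among `x_{t+1}, …, x_{t+N}` (0-indexed: indices `t, …, t+N-1`). -/
noncomputable def onesFrac (x : ℕ → Bool) (t N : ℕ) : ℝ :=
  (((Finset.Ico t (t + N)).filter (fun j => x j = true)).card : ℝ) / N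

/-- A forecast `(t, p, N)` is `ε`-successful on `x` if the fraction of 1s among
`x_{t+1}, …, x_{t+N}` lies in the open interval `(p - ε, p + ε)`. -/
def epsSuccessful (ε : ℝ) (x : ℕ → Bool) (f : ℕ × ℚ × ℕ) : Prop :=
  (f.2.1 : ℝ) - ε < onesFrac x f.1 f.2.2 ∧ onesFrac x f.1 f.2.2 < (f.2.1 : ℝ) + ε

/-- A forecasting strategy is `(δ, ε)`-successful if on every sequence `x`, the total
probability of making an `ε`-successful forecast is at least `1 - δ`. -/
def successfulStrategy (δ ε : ℝ) (S : ForecastStrategy) : Prop :=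
  ∀ x : ℕ → Bool,
    1 - δ ≤ ∑' f : ℕ × ℚ × ℕ, if epsSuccessful ε x f then S.prob x f else 0

noncomputable section DP

/-- number of ones in `[a, a+L)` -/
def cnt (x : ℕ → Bool) (a L : ℕ) : ℕ :=
  ((Finset.Ico a (a+L)).filter (fun j => x j = true)).card

lemma cnt_le (x : ℕ → Bool) (a L : ℕ) : cnt x a L ≤ L := by
  have := Finset.card_filter_le (Finset.Ico a (a+L)) (fun j => x j = true)
  simpa [cnt] using this

lemma cnt_add (x : ℕ → Bool) (a L M : ℕ) :
    cnt x a (L + M) = cnt x a L + cnt x (a+L) M := by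
  unfold cnt
  have h1 : a + (L + M) = a + L + M := (add_assoc a L M).symm
  rw [h1, ← Finset.Ico_union_Ico_eq_Ico (Nat.le_add_right a L) (Nat.le_add_right (a+L) M),
    Finset.filter_union,
    Finset.card_union_of_disjoint
      (Finset.disjoint_filter_filter (Finset.Ico_disjoint_Ico_consecutive a (a+L) (a+L+M)))]

/-- variance-like quantity -/
def Vr (x : ℕ → Bool) (a L : ℕ) : ℝ := (cnt x a L : ℝ) - (cnt x a L : ℝ)^2 / L

/-- difference of densities of the two halves -/
def dd (x : ℕ → Bool) (a L : ℕ) : ℝ := (cnt x (a+L) L : ℝ)/L - (cnt x a L : ℝ)/L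

lemma Vr_nonneg (x : ℕ → Bool) (a L : ℕ) : 0 ≤ Vr x a L := by
  rcases Nat.eq_zero_or_pos L with h | h
  · simp [Vr, cnt, h]
  · have hs : (cnt x a L : ℝ) ≤ L := by exact_mod_cast cnt_le x a L
    have hL : (0:ℝ) < L := by exact_mod_cast h
    have h0 : (0:ℝ) ≤ (cnt x a L : ℝ) := by positivity
    rw [Vr, sub_nonneg, div_le_iff₀ hL]
    nlinarith

lemma Vr_le (x : ℕ → Bool) (a L : ℕ) : Vr x a L ≤ L / 4 := by
  rcases Nat.eq_zero_or_pos L with h | h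
  · simp [Vr, cnt, h]
  · have hL : (0:ℝ) < L := by exact_mod_cast h
    rw [Vr]
    nlinarith [sq_nonneg ((L:ℝ) - 2 * (cnt x a L:ℝ)),
      div_mul_cancel₀ ((cnt x a L:ℝ)^2) (ne_of_gt hL), hL]

lemma Vr_split (x : ℕ → Bool) (a L : ℕ) (hL : 0 < L) :
    Vr x a (2*L) = Vr x a L + Vr x (a+L) L + (L:ℝ)/2 * (dd x a L)^2 := by
  have h2 : 2*L = L + L := by ring
  have hc : (cnt x a (2*L) : ℝ) = (cnt x a L : ℝ) + (cnt x (a+L) L : ℝ) := by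
    rw [h2, cnt_add]; push_cast; ring
  have hLr : (0:ℝ) < L := by exact_mod_cast hL
  unfold Vr dd
  rw [hc]
  have h2L : ((2*L : ℕ) : ℝ) = 2 * L := by push_cast; ring
  rw [h2L]
  field_simp
  ring

/-- Key energy inequality (Haar decomposition of the variance), by induction on the
number of dyadic levels. -/
lemma energy (x : ℕ → Bool) : ∀ (n a : ℕ),
    ∑ i ∈ Finset.range n, ∑ k ∈ Finset.range (2^i),
      (2^(n-i-1) : ℝ)/2 * (dd x (a + k*2^(n-i)) (2^(n-i-1)))^2 ≤ Vr x a (2^n) := by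
  intro n
  induction n with
  | zero => intro a; simpa using Vr_nonneg x a 1
  | succ n ih =>
    intro a
    rw [Finset.sum_range_succ']
    have htop : ∑ k ∈ Finset.range (2^0),
        (2^(n+1-0-1) : ℝ)/2 * (dd x (a + k*2^(n+1-0)) (2^(n+1-0-1)))^2
        = (2^n : ℝ)/2 * (dd x a (2^n))^2 := by
      simp
    rw [htop]
    simp only [Nat.succ_sub_succ]
    have hrest : ∀ i ∈ Finset.range n, ∑ k ∈ Finset.range (2^(i+1)),
        (2^(n-i-1) : ℝ)/2 * (dd x (a + k*2^(n-i)) (2^(n-i-1)))^2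
        = (∑ k ∈ Finset.range (2^i),
            (2^(n-i-1) : ℝ)/2 * (dd x (a + k*2^(n-i)) (2^(n-i-1)))^2)
          + ∑ k ∈ Finset.range (2^i),
            (2^(n-i-1) : ℝ)/2 * (dd x ((a + 2^n) + k*2^(n-i)) (2^(n-i-1)))^2 := by
      intro i hi
      have hin : i < n := Finset.mem_range.mp hi
      have e3 : 2^(i+1) = 2^i + 2^i := by rw [pow_succ]; ring
      rw [e3, Finset.sum_range_add]
      congr 1
      apply Finset.sum_congr rfl
      intro k _
      have hpw : 2^i * 2^(n-i) = 2^n := by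
        rw [← pow_add]; congr 1; omega
      have hmul : (2^i + k) * 2^(n-i) = 2^i * 2^(n-i) + k * 2^(n-i) := add_mul _ _ _
      have heq : a + (2^i + k) * 2^(n-i) = (a + 2^n) + k * 2^(n-i) := by
        rw [hmul, hpw]; omega
      rw [heq]
    rw [Finset.sum_congr rfl hrest, Finset.sum_add_distrib]
    have h1 := ih a
    have h2 := ih (a + 2^n)
    have hsplit : Vr x a (2^(n+1)) = Vr x a (2^n) + Vr x (a + 2^n) (2^n)
        + (2^n : ℝ)/2 * (dd x a (2^n))^2 := by
      have h21 : 2^(n+1) = 2 * 2^n := by rw [pow_succ]; ring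
      rw [h21, Vr_split x a (2^n) (by positivity)]
      norm_num
    rw [hsplit]
    linarith

lemma energy0 (x : ℕ → Bool) (n : ℕ) :
    ∑ i ∈ Finset.range n, ∑ k ∈ Finset.range (2^i),
      (2^(n-i-1) : ℝ)/2 * (dd x (k*2^(n-i)) (2^(n-i-1)))^2 ≤ (2:ℝ)^n/4 := by
  have h := energy x n 0
  simp only [zero_add] at h
  refine h.trans ((Vr_le x 0 (2^n)).trans (le_of_eq ?_))
  push_cast
  ring

/-- the forecast made at level `i`, block `k`: having seen the first half of the
block `[k·2^(n-i), (k+1)·2^(n-i))`, predict that its second half has the same density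
of ones as its first half. -/
def FC (n : ℕ) (x : ℕ → Bool) (i k : ℕ) : ℕ × ℚ × ℕ :=
  (k*2^(n-i) + 2^(n-i-1),
   (cnt x (k*2^(n-i)) (2^(n-i-1)) : ℚ) / (2^(n-i-1) : ℚ),
   2^(n-i-1))

def probFun (n : ℕ) (x : ℕ → Bool) (f : ℕ × ℚ × ℕ) : ℝ :=
  ∑ i ∈ Finset.range n, ∑ k ∈ Finset.range (2^i),
    if f = FC n x i k then ((n:ℝ) * 2^i)⁻¹ else 0

lemma probFun_nonneg (n : ℕ) (x : ℕ → Bool) (f : ℕ × ℚ × ℕ) : 0 ≤ probFun n x f := by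
  refine Finset.sum_nonneg fun i _ => Finset.sum_nonneg fun k _ => ?_
  split
  · positivity
  · exact le_rfl

lemma summable_ind (b : ℕ×ℚ×ℕ) (c : ℝ) :
    Summable (fun f : ℕ×ℚ×ℕ => if f = b then c else 0) :=
  summable_of_ne_finset_zero (s := {b}) (fun f hf => if_neg (by simpa using hf))

lemma tsum_double (n : ℕ) (x : ℕ → Bool) (g : ℕ → ℕ → ℝ) :
    ∑' f : ℕ×ℚ×ℕ, (∑ i ∈ Finset.range n, ∑ k ∈ Finset.range (2^i),
        if f = FC n x i k then g i k else 0)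
    = ∑ i ∈ Finset.range n, ∑ k ∈ Finset.range (2^i), g i k := by
  rw [Summable.tsum_finsetSum (fun i _ => summable_sum (fun k _ => summable_ind _ _))]
  refine Finset.sum_congr rfl fun i _ => ?_
  rw [Summable.tsum_finsetSum (fun k _ => summable_ind _ _)]
  exact Finset.sum_congr rfl fun k _ => tsum_ite_eq _ _

lemma weights_sum (n : ℕ) (hn : 0 < n) :
    ∑ i ∈ Finset.range n, ∑ _k ∈ Finset.range (2^i), ((n:ℝ) * 2^i)⁻¹ = 1 := by
  have h : ∀ i ∈ Finset.range n, ∑ _k ∈ Finset.range (2^i), ((n:ℝ) * 2^i)⁻¹ = (n:ℝ)⁻¹ := by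
    intro i _
    rw [Finset.sum_const, Finset.card_range, nsmul_eq_mul]
    have h2 : ((2:ℝ)^i) ≠ 0 := by positivity
    push_cast
    field_simp
  rw [Finset.sum_congr rfl h, Finset.sum_const, Finset.card_range, nsmul_eq_mul]
  have : ((n:ℝ)) ≠ 0 := by positivity
  field_simp

lemma probFun_total (n : ℕ) (hn : 0 < n) (x : ℕ → Bool) :
    ∑' f : ℕ×ℚ×ℕ, probFun n x f = 1 := by
  unfold probFun
  rw [tsum_double n x (fun i k => ((n:ℝ) * 2^i)⁻¹)]
  exact weights_sum n hn

lemma cnt_congr (x x' : ℕ → Bool) (b L : ℕ) (h : ∀ j, j < b + L → x j = x' j) :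
    cnt x b L = cnt x' b L := by
  unfold cnt
  exact congrArg Finset.card (Finset.filter_congr (fun j hj => by
    rw [h j (Finset.mem_Ico.mp hj).2]))

lemma FC_congr (n : ℕ) (x x' : ℕ → Bool) (i k : ℕ)
    (h : ∀ j, j < k*2^(n-i) + 2^(n-i-1) → x j = x' j) :
    FC n x i k = FC n x' i k := by
  unfold FC
  rw [cnt_congr x x' (k*2^(n-i)) (2^(n-i-1)) h]

lemma probFun_adapted (n : ℕ) (x x' : ℕ → Bool) (t : ℕ) (p : ℚ) (N : ℕ)
    (hxy : ∀ j, j < t → x j = x' j) :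
    probFun n x (t,p,N) = probFun n x' (t,p,N) := by
  unfold probFun
  refine Finset.sum_congr rfl fun i _ => Finset.sum_congr rfl fun k _ => ?_
  by_cases ht : t = k*2^(n-i) + 2^(n-i-1)
  · have hFC : FC n x i k = FC n x' i k :=
      FC_congr n x x' i k (fun j hj => hxy j (by omega))
    rw [hFC]
  · rw [if_neg (fun hc => ht (congrArg Prod.fst hc)),
      if_neg (fun hc => ht (congrArg Prod.fst hc))]

lemma probFun_supp {n : ℕ} (x : ℕ → Bool) (t : ℕ) (p : ℚ) (N : ℕ)
    (h : probFun n x (t,p,N) ≠ 0) :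
    ∃ i k, i < n ∧ k < 2^i ∧ (t,p,N) = FC n x i k := by
  unfold probFun at h
  obtain ⟨i, hi, h⟩ := Finset.exists_ne_zero_of_sum_ne_zero h
  obtain ⟨k, hk, h⟩ := Finset.exists_ne_zero_of_sum_ne_zero h
  refine ⟨i, k, Finset.mem_range.mp hi, Finset.mem_range.mp hk, ?_⟩
  by_contra hc
  exact h (if_neg hc)

lemma fail_dd {ε : ℝ} {n i k : ℕ} {x : ℕ → Bool}
    (h : ¬ epsSuccessful ε x (FC n x i k)) :
    ε ≤ |dd x (k*2^(n-i)) (2^(n-i-1))| := by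
  have ho : onesFrac x (k*2^(n-i) + 2^(n-i-1)) (2^(n-i-1))
      = (cnt x (k*2^(n-i) + 2^(n-i-1)) (2^(n-i-1)) : ℝ) / ((2^(n-i-1):ℕ):ℝ) := rfl
  have hp : (((cnt x (k*2^(n-i)) (2^(n-i-1)) : ℚ) / (2^(n-i-1) : ℚ) : ℚ) : ℝ)
      = (cnt x (k*2^(n-i)) (2^(n-i-1)) : ℝ) / ((2^(n-i-1):ℕ):ℝ) := by
    push_cast; ring
  unfold epsSuccessful FC at h
  rw [not_and_or] at h
  dsimp only at h
  rw [ho, hp] at h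
  have hdd : dd x (k*2^(n-i)) (2^(n-i-1))
      = (cnt x (k*2^(n-i) + 2^(n-i-1)) (2^(n-i-1)) : ℝ) / ((2^(n-i-1):ℕ):ℝ)
        - (cnt x (k*2^(n-i)) (2^(n-i-1)) : ℝ) / ((2^(n-i-1):ℕ):ℝ) := rfl
  rw [hdd, le_abs]
  rcases h with h1 | h1 <;> push_neg at h1
  · right; linarith
  · left; linarith

lemma key_ineq {ε : ℝ} (hε : 0 < ε) {n i : ℕ} (hn : 0 < n) (hi : i < n) (D : ℝ)
    (hD : ε ≤ |D|) :
    ((n:ℝ) * 2^i)⁻¹ ≤ (4/(ε^2 * n * 2^n)) * ((2^(n-i-1):ℝ)/2 * D^2) := by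
  have h2 : ε^2 ≤ D^2 := by
    have := pow_le_pow_left₀ hε.le hD 2
    rwa [sq_abs] at this
  have e2n : (2:ℝ)^n = 2^(n-i-1) * 2 * 2^i := by
    have hexp : (n-i-1) + 1 + i = n := by omega
    conv_lhs => rw [← hexp]
    rw [pow_add, pow_add, pow_one]
  have hnR : (0:ℝ) < (n:ℝ) := by exact_mod_cast hn
  have hne : (n:ℝ) ≠ 0 := ne_of_gt hnR
  have h2i : ((2:ℝ)^i) ≠ 0 := by positivity
  have h2m : ((2:ℝ)^(n-i-1)) ≠ 0 := by positivity
  have hεne : ε ≠ 0 := ne_of_gt hε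
  calc ((n:ℝ)*2^i)⁻¹ = (4/(ε^2 * n * 2^n)) * ((2^(n-i-1):ℝ)/2 * ε^2) := by
        rw [e2n]; field_simp; ring
    _ ≤ _ := by gcongr

lemma probFun_success {δ ε : ℝ} (hε : 0 < ε) {n : ℕ} (hn : 0 < n)
    (hδn : 1/(ε^2 * n) ≤ δ) (x : ℕ → Bool) :
    1 - δ ≤ ∑' f : ℕ×ℚ×ℕ, if epsSuccessful ε x f then probFun n x f else 0 := by
  have hpoint : ∀ f : ℕ×ℚ×ℕ, (if epsSuccessful ε x f then probFun n x f else 0)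
      = ∑ i ∈ Finset.range n, ∑ k ∈ Finset.range (2^i),
          (if f = FC n x i k then
            (if epsSuccessful ε x (FC n x i k) then ((n:ℝ)*2^i)⁻¹ else 0) else 0) := by
    intro f
    by_cases hs : epsSuccessful ε x f
    · rw [if_pos hs]
      unfold probFun
      refine Finset.sum_congr rfl fun i _ => Finset.sum_congr rfl fun k _ => ?_
      by_cases hf : f = FC n x i k
      · rw [if_pos hf, if_pos hf, if_pos (hf ▸ hs)]
      · rw [if_neg hf, if_neg hf]
    · rw [if_neg hs]
      symm
      refine Finset.sum_eq_zero fun i _ => Finset.sum_eq_zero fun k _ => ?_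
      by_cases hf : f = FC n x i k
      · rw [if_pos hf, if_neg (fun hc => hs (by rw [hf]; exact hc))]
      · exact if_neg hf
  rw [tsum_congr hpoint, tsum_double]
  have hsum : (∑ i ∈ Finset.range n, ∑ k ∈ Finset.range (2^i),
        (if epsSuccessful ε x (FC n x i k) then ((n:ℝ)*2^i)⁻¹ else 0))
      + (∑ i ∈ Finset.range n, ∑ k ∈ Finset.range (2^i),
        (if epsSuccessful ε x (FC n x i k) then 0 else ((n:ℝ)*2^i)⁻¹)) = 1 := by
    rw [← Finset.sum_add_distrib]
    have h : ∀ i ∈ Finset.range n,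
        ((∑ k ∈ Finset.range (2^i), (if epsSuccessful ε x (FC n x i k) then ((n:ℝ)*2^i)⁻¹ else 0))
          + ∑ k ∈ Finset.range (2^i), (if epsSuccessful ε x (FC n x i k) then 0 else ((n:ℝ)*2^i)⁻¹))
        = ∑ _k ∈ Finset.range (2^i), ((n:ℝ)*2^i)⁻¹ := by
      intro i _
      rw [← Finset.sum_add_distrib]
      refine Finset.sum_congr rfl fun k _ => ?_
      by_cases hs : epsSuccessful ε x (FC n x i k) <;> simp [hs]
    rw [Finset.sum_congr rfl h, weights_sum n hn]
  have hfail : (∑ i ∈ Finset.range n, ∑ k ∈ Finset.range (2^i),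
      (if epsSuccessful ε x (FC n x i k) then 0 else ((n:ℝ)*2^i)⁻¹)) ≤ δ := by
    have hCnn : (0:ℝ) ≤ 4/(ε^2 * n * 2^n) := by positivity
    have step1 : (∑ i ∈ Finset.range n, ∑ k ∈ Finset.range (2^i),
        (if epsSuccessful ε x (FC n x i k) then 0 else ((n:ℝ)*2^i)⁻¹))
        ≤ ∑ i ∈ Finset.range n, ∑ k ∈ Finset.range (2^i),
            (4/(ε^2 * n * 2^n)) * ((2^(n-i-1):ℝ)/2 * (dd x (k*2^(n-i)) (2^(n-i-1)))^2) := by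
      refine Finset.sum_le_sum fun i hi => Finset.sum_le_sum fun k _ => ?_
      by_cases hs : epsSuccessful ε x (FC n x i k)
      · rw [if_pos hs]; positivity
      · rw [if_neg hs]
        exact key_ineq hε hn (Finset.mem_range.mp hi) _ (fail_dd hs)
    have step2 : ∑ i ∈ Finset.range n, ∑ k ∈ Finset.range (2^i),
          (4/(ε^2 * n * 2^n)) * ((2^(n-i-1):ℝ)/2 * (dd x (k*2^(n-i)) (2^(n-i-1)))^2)
        = (4/(ε^2 * n * 2^n)) * ∑ i ∈ Finset.range n, ∑ k ∈ Finset.range (2^i),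
            ((2^(n-i-1):ℝ)/2 * (dd x (k*2^(n-i)) (2^(n-i-1)))^2) := by
      rw [Finset.mul_sum]
      refine Finset.sum_congr rfl fun i _ => ?_
      rw [Finset.mul_sum]
    have step3 : (4/(ε^2 * n * 2^n)) * (∑ i ∈ Finset.range n, ∑ k ∈ Finset.range (2^i),
          ((2^(n-i-1):ℝ)/2 * (dd x (k*2^(n-i)) (2^(n-i-1)))^2))
        ≤ (4/(ε^2 * n * 2^n)) * ((2:ℝ)^n/4) :=
      mul_le_mul_of_nonneg_left (energy0 x n) hCnn
    have hnR : (0:ℝ) < (n:ℝ) := by exact_mod_cast hn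
    have step4 : (4/(ε^2 * n * 2^n)) * ((2:ℝ)^n/4) = 1/(ε^2 * n) := by
      have h2n : ((2:ℝ)^n) ≠ 0 := by positivity
      field_simp
    calc (∑ i ∈ Finset.range n, ∑ k ∈ Finset.range (2^i),
        (if epsSuccessful ε x (FC n x i k) then 0 else ((n:ℝ)*2^i)⁻¹))
        ≤ _ := step1
      _ = _ := step2
      _ ≤ _ := step3
      _ = 1/(ε^2 * n) := step4
      _ ≤ δ := hδn
  linarith

theorem density_prediction' (δ ε : ℝ) (hδ : 0 < δ) (hε : 0 < ε) :
    ∃ S : ForecastStrategy, successfulStrategy δ ε S ∧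
      ∀ x : ℕ → Bool, ∀ (t : ℕ) (p : ℚ) (N : ℕ),
        S.prob x (t, p, N) ≠ 0 → t + N ≤ 2 ^ (⌈4 / (δ * ε ^ 2)⌉₊) := by
  set n := ⌈4 / (δ * ε ^ 2)⌉₊ with hndef
  have hn0 : 0 < n := Nat.ceil_pos.mpr (by positivity)
  have hnR : (0:ℝ) < (n:ℝ) := by exact_mod_cast hn0
  have hge : (4/(δ*ε^2) : ℝ) ≤ (n:ℝ) := Nat.le_ceil _
  have h4 : 4 ≤ (n:ℝ) * (δ*ε^2) := by
    rw [div_le_iff₀ (by positivity)] at hge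
    linarith
  have hδn : 1/(ε^2 * (n:ℝ)) ≤ δ := by
    rw [div_le_iff₀ (by positivity)]
    nlinarith
  refine ⟨⟨probFun n, probFun_nonneg n, probFun_total n hn0,
      ?_, fun x x' t p N h => probFun_adapted n x x' t p N h⟩, ?_, ?_⟩
  · -- valid
    intro x t p N h
    obtain ⟨i, k, hi, hk, hF⟩ := probFun_supp x t p N h
    have hp : p = (cnt x (k*2^(n-i)) (2^(n-i-1)) : ℚ) / (2^(n-i-1) : ℚ) := by
      have := congrArg (fun f : ℕ×ℚ×ℕ => f.2.1) hF
      simpa [FC] using this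
    have hN : N = 2^(n-i-1) := by
      have := congrArg (fun f : ℕ×ℚ×ℕ => f.2.2) hF
      simpa [FC] using this
    have hLpos : (0:ℚ) < (2:ℚ)^(n-i-1) := by positivity
    refine ⟨by rw [hp]; positivity, ?_, by rw [hN]; exact Nat.one_le_two_pow⟩
    rw [hp, div_le_one hLpos]
    exact_mod_cast cnt_le x (k*2^(n-i)) (2^(n-i-1))
  · -- successful
    intro x
    exact probFun_success hε hn0 hδn x
  · -- bound
    intro x t p N h
    obtain ⟨i, k, hi, hk, hF⟩ := probFun_supp x t p N h
    have ht : t = k*2^(n-i) + 2^(n-i-1) := congrArg Prod.fst hF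
    have hN : N = 2^(n-i-1) := by
      have := congrArg (fun f : ℕ×ℚ×ℕ => f.2.2) hF
      simpa [FC] using this
    have hhalf : 2^(n-i-1) + 2^(n-i-1) = 2^(n-i) := by
      conv_rhs => rw [show n - i = (n-i-1)+1 from by omega]
      rw [pow_succ]
      ring
    have hk1 : k + 1 ≤ 2^i := hk
    have hmul : (k+1) * 2^(n-i) ≤ 2^i * 2^(n-i) := Nat.mul_le_mul_right _ hk1
    have hpow : 2^i * 2^(n-i) = 2^n := by rw [← pow_add]; congr 1; omega
    have hexp : (k+1) * 2^(n-i) = k*2^(n-i) + 2^(n-i) := by ring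
    omega

/-- Theorem 1.2: for every `δ, ε > 0` there is a `(δ, ε)`-successful forecasting
strategy; moreover, with `n = ⌈4/(δ ε²)⌉`, it only makes forecasts about intervals
contained in the first `2^n` bits of the sequence. -/
theorem density_prediction (δ ε : ℝ) (hδ : 0 < δ) (hε : 0 < ε) :
    ∃ S : ForecastStrategy, successfulStrategy δ ε S ∧
      ∀ x : ℕ → Bool, ∀ (t : ℕ) (p : ℚ) (N : ℕ),
        S.prob x (t, p, N) ≠ 0 → t + N ≤ 2 ^ (⌈4 / (δ * ε ^ 2)⌉₊) :=
  density_prediction' δ ε hδ hε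

end DP
end

section
/- There exist universal constants c > 0 and C > 0 such that for every δ ∈ (0,1) and every integer K > 1 there is a frog-strategy T with the following properties for every b ∈ {0,1}^ω: (i) π_{T,b}(i) = 0 for every i with K < i < ∞; (ii) for every δ' with (b_1 + … + b_{K−1})/(K−1) ≤ δ' < δ, one has π_{T,b}(∞) ≤ 1 − c·(δ − δ')²/δ; (iii) DP(T,b) ≤ (δ/(1−δ))·Succ(T,b) + C·δ/((1−δ)·K). -/
namespace Frog31

open Finset

noncomputable def rho (δ : ℝ) : ℝ := δ / (1 - δ)
noncomputable def mbar (δ : ℝ) (K : ℕ) : ℕ := ⌊δ * ((K : ℝ) - 1)⌋₊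
noncomputable def Ecap (δ : ℝ) (K : ℕ) : ℝ := δ / (2 * K * (mbar δ K + 1))
noncomputable def bet (K : ℕ) : ℝ := 1 / (8 * K ^ 2)
noncomputable def epsB (δ : ℝ) (K : ℕ) : ℝ := 2 * bet K * δ / (1 - δ)
noncomputable def qF (δ : ℝ) (K : ℕ) : ℝ := δ / (4 * (1 - δ) * K ^ 2)

def zrun (b : ℕ → Bool) : ℕ → ℕ
  | 0 => 0
  | i + 1 => if b i then 0 else zrun b i + 1

noncomputable def amar (δ : ℝ) (b : ℕ → Bool) (i : ℕ) : ℝ := δ * i - cars b i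

noncomputable def wA (δ : ℝ) (K : ℕ) (b : ℕ → Bool) (i : ℕ) : ℝ :=
  if cars b i ≤ mbar δ K then Ecap δ K * (1 + rho δ) ^ zrun b i else 0
noncomputable def wB (δ : ℝ) (K : ℕ) (b : ℕ → Bool) (i : ℕ) : ℝ :=
  bet K * max (amar δ b i - 1) 0
noncomputable def w (δ : ℝ) (K : ℕ) (b : ℕ → Bool) (i : ℕ) : ℝ :=
  wA δ K b i + wB δ K b i + qF δ K

noncomputable def P (δ : ℝ) (K : ℕ) (b : ℕ → Bool) : ℕ → ℝ
  | 0 => 0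
  | i + 1 => P δ K b i + min (w δ K b i) (1 - P δ K b i)

noncomputable def pibet (δ : ℝ) (K : ℕ) (b : ℕ → Bool) (i : ℕ) : ℝ :=
  min (w δ K b i) (1 - P δ K b i)

noncomputable def GA (δ : ℝ) (K : ℕ) (b : ℕ → Bool) (j : ℕ) : ℝ :=
  if cars b j ≤ mbar δ K then
    Ecap δ K * (((mbar δ K : ℝ) - cars b j) + (1 + rho δ) ^ zrun b j) else 0
noncomputable def GB (δ : ℝ) (K : ℕ) (b : ℕ → Bool) (j : ℕ) : ℝ :=
  bet K / (2 * (1 - δ)) * (max (amar δ b j) 0) ^ 2 + ((K - j : ℕ) : ℝ) * epsB δ K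
noncomputable def GF (δ : ℝ) (K : ℕ) (j : ℕ) : ℝ := ((K - j : ℕ) : ℝ) * qF δ K
noncomputable def G (δ : ℝ) (K : ℕ) (b : ℕ → Bool) (j : ℕ) : ℝ :=
  GA δ K b j + GB δ K b j + GF δ K j

section basic

variable {δ : ℝ} {K : ℕ} {b b' : ℕ → Bool}

lemma cars_zero (b : ℕ → Bool) : cars b 0 = 0 := by simp [cars]

lemma cars_succ (b : ℕ → Bool) (i : ℕ) :
    cars b (i + 1) = cars b i + (if b i then 1 else 0) := by
  unfold cars
  rw [Finset.range_add_one, Finset.filter_insert]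
  split_ifs with h
  · rw [Finset.card_insert_of_notMem (by simp)]
  · simp

lemma cars_mono (b : ℕ → Bool) {i j : ℕ} (h : i ≤ j) : cars b i ≤ cars b j :=
  Finset.card_le_card (Finset.filter_subset_filter _ (Finset.range_subset_range.2 h))

lemma cars_le (b : ℕ → Bool) (i : ℕ) : cars b i ≤ i := by
  have := Finset.card_filter_le (Finset.range i) (fun j => b j = true)
  simpa [cars] using this

lemma cars_congr {i : ℕ} (h : ∀ j < i, b j = b' j) : cars b i = cars b' i := by
  unfold cars
  congr 1
  apply Finset.filter_congr
  intro j hj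
  rw [Finset.mem_range] at hj
  rw [h j hj]

lemma zrun_congr : ∀ {i : ℕ}, (∀ j < i, b j = b' j) → zrun b i = zrun b' i
  | 0, _ => rfl
  | (i+1), h => by
    have h' : ∀ j < i, b j = b' j := fun j hj => h j (hj.trans i.lt_succ_self)
    simp only [zrun, h i i.lt_succ_self, zrun_congr h']

lemma amar_congr {i : ℕ} (h : ∀ j < i, b j = b' j) : amar δ b i = amar δ b' i := by
  unfold amar; rw [cars_congr h]

lemma w_congr {i : ℕ} (h : ∀ j < i, b j = b' j) : w δ K b i = w δ K b' i := by
  unfold w wA wB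
  rw [cars_congr h, zrun_congr h, amar_congr h]

lemma P_congr : ∀ i : ℕ, (∀ j < i, b j = b' j) → P δ K b i = P δ K b' i
  | 0, _ => rfl
  | (i+1), h => by
    have h' : ∀ j < i, b j = b' j := fun j hj => h j (hj.trans i.lt_succ_self)
    simp only [P, P_congr i h', w_congr h']

lemma amar_succ (δ : ℝ) (b : ℕ → Bool) (i : ℕ) :
    amar δ b (i + 1) = amar δ b i + δ - (if b i then 1 else 0) := by
  unfold amar
  rw [cars_succ]
  push_cast
  split_ifs <;> ring

end basic


section pos

variable {δ : ℝ} {K : ℕ} {b b' : ℕ → Bool}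
variable (hδ0 : 0 < δ) (hδ1 : δ < 1) (hK : 1 < K)

include hδ0 hδ1 in
lemma rho_pos : 0 < rho δ := div_pos hδ0 (by linarith)

include hδ0 hδ1 in
lemma one_le_pow_rho (n : ℕ) : 1 ≤ (1 + rho δ) ^ n :=
  one_le_pow₀ (by nlinarith [rho_pos hδ0 hδ1])

include hδ0 hK in
lemma Ecap_pos : 0 < Ecap δ K := by
  apply div_pos hδ0
  have : (0:ℝ) < K := by exact_mod_cast lt_trans Nat.zero_lt_one hK
  positivity

include hK in
lemma bet_pos : 0 < bet K := by
  have : (0:ℝ) < K := by exact_mod_cast lt_trans Nat.zero_lt_one hK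
  unfold bet; positivity

include hδ0 hδ1 hK in
lemma epsB_pos : 0 < epsB δ K := by
  have h1 := bet_pos (K := K) hK
  have : (0:ℝ) < 1 - δ := by linarith
  unfold epsB
  positivity

include hδ0 hδ1 hK in
lemma qF_pos : 0 < qF δ K := by
  have : (0:ℝ) < K := by exact_mod_cast lt_trans Nat.zero_lt_one hK
  have h1 : (0:ℝ) < 1 - δ := by linarith
  unfold qF; positivity

include hδ0 hδ1 hK in
lemma wA_nonneg (i : ℕ) : 0 ≤ wA δ K b i := by
  unfold wA
  split_ifs
  · have h1 := Ecap_pos (δ := δ) (K := K) hδ0 hK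
    have h2 := one_le_pow_rho (δ := δ) hδ0 hδ1 (zrun b i)
    nlinarith
  · exact le_refl _

include hK in
lemma wB_nonneg (i : ℕ) : 0 ≤ wB δ K b i := by
  have := bet_pos (K := K) hK
  unfold wB
  positivity

include hδ0 hδ1 hK in
lemma w_nonneg (i : ℕ) : 0 ≤ w δ K b i := by
  have h1 := wA_nonneg (δ := δ) (K := K) (b := b) hδ0 hδ1 hK i
  have h2 := wB_nonneg (δ := δ) (K := K) (b := b) hK i
  have h3 := qF_pos (δ := δ) (K := K) hδ0 hδ1 hK
  unfold w; linarith

include hδ0 hδ1 hK in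
lemma P_bounds (i : ℕ) : 0 ≤ P δ K b i ∧ P δ K b i ≤ 1 := by
  induction i with
  | zero => simp [P]
  | succ i ih =>
    obtain ⟨h0, h1⟩ := ih
    have hw := w_nonneg (δ := δ) (K := K) (b := b) hδ0 hδ1 hK i
    constructor
    · show 0 ≤ P δ K b i + min (w δ K b i) (1 - P δ K b i)
      have : 0 ≤ min (w δ K b i) (1 - P δ K b i) := le_min hw (by linarith)
      linarith
    · show P δ K b i + min (w δ K b i) (1 - P δ K b i) ≤ 1
      have : min (w δ K b i) (1 - P δ K b i) ≤ 1 - P δ K b i := min_le_right _ _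
      linarith

include hδ0 hδ1 hK in
lemma pibet_nonneg (i : ℕ) : 0 ≤ pibet δ K b i := by
  have hw := w_nonneg (δ := δ) (K := K) (b := b) hδ0 hδ1 hK i
  have h1 := (P_bounds (δ := δ) (K := K) (b := b) hδ0 hδ1 hK i).2
  exact le_min hw (by linarith)

lemma P_eq_sum_pibet (n : ℕ) : P δ K b n = ∑ i ∈ Finset.range n, pibet δ K b i := by
  induction n with
  | zero => simp [P]
  | succ n ih => rw [Finset.sum_range_succ, ← ih]; rfl

include hδ0 hδ1 hK in
lemma P_eq_min (n : ℕ) : P δ K b n = min (∑ i ∈ Finset.range n, w δ K b i) 1 := by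
  induction n with
  | zero => simp [P]
  | succ n ih =>
    have hw := w_nonneg (δ := δ) (K := K) (b := b) hδ0 hδ1 hK n
    rw [Finset.sum_range_succ]
    show P δ K b n + min (w δ K b n) (1 - P δ K b n) = _
    rcases le_or_gt (∑ i ∈ Finset.range n, w δ K b i) 1 with h | h
    · rw [min_eq_left h] at ih
      rw [ih]
      rcases le_or_gt (∑ i ∈ Finset.range n, w δ K b i + w δ K b n) 1 with h2 | h2
      · rw [min_eq_left h2, min_eq_left (by linarith)]
      · rw [min_eq_right h2.le, min_eq_right (by linarith)]
        ring
    · rw [min_eq_right h.le] at ih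
      rw [ih]
      rw [min_eq_right (by linarith), min_eq_right (by linarith)]
      ring

end pos


section steps

variable {δ : ℝ} {K : ℕ} {b : ℕ → Bool}
variable (hδ0 : 0 < δ) (hδ1 : δ < 1) (hK : 1 < K)

lemma zrun_succ_true {j : ℕ} (hb : b j = true) : zrun b (j+1) = 0 := by
  simp [zrun, hb]

lemma zrun_succ_false {j : ℕ} (hb : b j = false) : zrun b (j+1) = zrun b j + 1 := by
  simp [zrun, hb]

lemma cars_succ_true {j : ℕ} (hb : b j = true) : cars b (j+1) = cars b j + 1 := by
  rw [cars_succ, if_pos hb]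

lemma cars_succ_false {j : ℕ} (hb : b j = false) : cars b (j+1) = cars b j := by
  rw [cars_succ, hb]; simp

include hδ0 hK in
lemma GA_one {j : ℕ} (hb : b j = true) :
    GA δ K b (j+1) + wA δ K b j ≤ GA δ K b j := by
  have hc := cars_succ_true (b := b) hb
  have hz := zrun_succ_true (b := b) hb
  have hE := Ecap_pos (δ := δ) (K := K) hδ0 hK
  unfold GA wA
  rw [hc, hz]
  rcases le_or_gt (cars b j + 1) (mbar δ K) with h1 | h1
  · rw [if_pos h1, if_pos (by omega), if_pos (by omega)]
    apply le_of_eq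
    push_cast
    ring
  · rw [if_neg (by omega)]
    rcases le_or_gt (cars b j) (mbar δ K) with h2 | h2
    · have hEq : cars b j = mbar δ K := by omega
      rw [if_pos h2, if_pos h2, hEq]
      apply le_of_eq
      push_cast
      ring
    · rw [if_neg (by omega), if_neg (by omega)]
      simp

include hδ0 hδ1 hK in
lemma GA_zero {j : ℕ} (hb : b j = false) :
    GA δ K b (j+1) ≤ GA δ K b j + rho δ * wA δ K b j := by
  have hc := cars_succ_false (b := b) hb
  have hz := zrun_succ_false (b := b) hb
  unfold GA wA
  rw [hc, hz]
  rcases le_or_gt (cars b j) (mbar δ K) with h1 | h1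
  · rw [if_pos h1, if_pos h1, if_pos h1]
    apply le_of_eq
    rw [pow_succ]
    ring
  · rw [if_neg (by omega), if_neg (by omega), if_neg (by omega)]
    simp

include hK in
lemma Kmj_cast {j : ℕ} (hj : j < K) : ((K - (j+1) : ℕ) : ℝ) = ((K - j : ℕ) : ℝ) - 1 := by
  have h : (K - j : ℕ) = (K - (j+1)) + 1 := by omega
  rw [h]
  push_cast
  ring

lemma max_sq_mono {x y : ℝ} (h : x ≤ y) : (max x 0) ^ 2 ≤ (max y 0) ^ 2 :=
  pow_le_pow_left₀ (le_max_right x 0) (max_le_max h le_rfl) 2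

include hδ0 hδ1 hK in
lemma GB_one {j : ℕ} (hj : j < K) (hb : b j = true) :
    GB δ K b (j+1) + wB δ K b j ≤ GB δ K b j := by
  have ha : amar δ b (j+1) = amar δ b j + δ - 1 := by
    rw [amar_succ, if_pos hb]
  have hcast := Kmj_cast (K := K) hK hj
  have hB := bet_pos (K := K) hK
  have hE := epsB_pos (δ := δ) (K := K) hδ0 hδ1 hK
  have h1δ : (0:ℝ) < 1 - δ := by linarith
  unfold GB wB
  rw [ha, hcast]
  set a := amar δ b j with hadef
  rcases le_or_gt a 1 with h | h
  · have hm : max (a - 1) 0 = 0 := max_eq_right (by linarith)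
    have hmono : (max (a + δ - 1) 0) ^ 2 ≤ (max a 0) ^ 2 := max_sq_mono (by linarith)
    rw [hm]
    have hco : 0 < bet K / (2 * (1 - δ)) := by positivity
    nlinarith [mul_le_mul_of_nonneg_left hmono hco.le]
  · have hm1 : max (a - 1) 0 = a - 1 := max_eq_left (by linarith)
    have hm2 : max a 0 = a := max_eq_left (by linarith)
    have hm3 : max (a + δ - 1) 0 = a + δ - 1 := max_eq_left (by linarith)
    rw [hm1, hm2, hm3]
    have key : bet K / (2 * (1 - δ)) * (a ^ 2 - (a + δ - 1) ^ 2)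
        = bet K * (2 * a + δ - 1) / 2 := by
      field_simp
      ring
    nlinarith [key]

include hδ0 hδ1 hK in
lemma GB_zero {j : ℕ} (hj : j < K) (hb : b j = false) :
    GB δ K b (j+1) ≤ GB δ K b j + rho δ * wB δ K b j := by
  have ha : amar δ b (j+1) = amar δ b j + δ := by
    rw [amar_succ, hb]; simp
  have hcast := Kmj_cast (K := K) hK hj
  have hB := bet_pos (K := K) hK
  have h1δ : (0:ℝ) < 1 - δ := by linarith
  unfold GB wB
  rw [ha, hcast]
  set a := amar δ b j with hadef
  have hsq : (max (a + δ) 0) ^ 2 ≤ (max a 0) ^ 2 + 2 * δ * (max (a + δ) 0) := by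
    rcases le_or_gt (a + δ) 0 with h | h
    · rw [max_eq_right h]
      nlinarith [sq_nonneg (max a 0)]
    · rw [max_eq_left h.le]
      rcases le_or_gt a 0 with h2 | h2
      · rw [max_eq_right h2]
        nlinarith
      · rw [max_eq_left h2.le]
        nlinarith
  have hmax2 : max (a + δ) 0 ≤ 2 + max (a - 1) 0 := by
    rcases le_or_gt a 1 with h | h
    · have : max (a - 1) 0 = 0 := max_eq_right (by linarith)
      rw [this]
      exact max_le (by linarith) (by linarith)
    · have : max (a - 1) 0 = a - 1 := max_eq_left (by linarith)
      rw [this]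
      exact max_le (by linarith) (by linarith)
  have hrho : rho δ * bet K = bet K * δ / (1 - δ) := by
    unfold rho
    field_simp
  have hepsB : epsB δ K = 2 * bet K * δ / (1 - δ) := rfl
  have hco : 0 < bet K / (2 * (1 - δ)) := by positivity
  have step1 : bet K / (2 * (1 - δ)) * (max (a + δ) 0) ^ 2
      ≤ bet K / (2 * (1 - δ)) * ((max a 0) ^ 2 + 2 * δ * (max (a + δ) 0)) :=
    mul_le_mul_of_nonneg_left hsq hco.le
  rw [mul_add] at step1
  have step2 : bet K / (2 * (1 - δ)) * (2 * δ * (max (a + δ) 0))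
      ≤ bet K / (2 * (1 - δ)) * (2 * δ * (2 + max (a - 1) 0)) := by
    apply mul_le_mul_of_nonneg_left _ hco.le
    nlinarith
  have step3 : bet K / (2 * (1 - δ)) * (2 * δ * (2 + max (a - 1) 0))
      = epsB δ K + rho δ * (bet K * max (a - 1) 0) := by
    rw [hepsB]
    unfold rho
    field_simp
  linarith [step1, step2, step3]

end steps

section gcomb

variable {δ : ℝ} {K : ℕ} {b : ℕ → Bool}
variable (hδ0 : 0 < δ) (hδ1 : δ < 1) (hK : 1 < K)

include hδ0 hδ1 hK in
lemma GF_one {j : ℕ} (hj : j < K) : GF δ K (j+1) + qF δ K ≤ GF δ K j := by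
  unfold GF
  rw [Kmj_cast (K := K) hK hj]
  apply le_of_eq
  ring

include hδ0 hδ1 hK in
lemma GF_zero {j : ℕ} (hj : j < K) : GF δ K (j+1) ≤ GF δ K j + rho δ * qF δ K := by
  have h1 := qF_pos (δ := δ) (K := K) hδ0 hδ1 hK
  have h2 := rho_pos (δ := δ) hδ0 hδ1
  unfold GF
  rw [Kmj_cast (K := K) hK hj]
  nlinarith

include hδ0 hδ1 hK in
lemma G_one {j : ℕ} (hj : j < K) (hb : b j = true) :
    G δ K b (j+1) + w δ K b j ≤ G δ K b j := by
  have h1 := GA_one (δ := δ) (K := K) (b := b) hδ0 hK hb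
  have h2 := GB_one (δ := δ) (K := K) (b := b) hδ0 hδ1 hK hj hb
  have h3 := GF_one (δ := δ) (K := K) hδ0 hδ1 hK hj
  unfold G w
  linarith

include hδ0 hδ1 hK in
lemma G_zero_step {j : ℕ} (hj : j < K) (hb : b j = false) :
    G δ K b (j+1) ≤ G δ K b j + rho δ * w δ K b j := by
  have h1 := GA_zero (δ := δ) (K := K) (b := b) hδ0 hδ1 hK hb
  have h2 := GB_zero (δ := δ) (K := K) (b := b) hδ0 hδ1 hK hj hb
  have h3 := GF_zero (δ := δ) (K := K) hδ0 hδ1 hK hj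
  have hdist : rho δ * w δ K b j
      = rho δ * wA δ K b j + rho δ * wB δ K b j + rho δ * qF δ K := by
    unfold w; ring
  unfold G
  rw [hdist]
  linarith

include hδ0 hδ1 hK in
lemma G_nonneg (j : ℕ) : 0 ≤ G δ K b j := by
  have hE := Ecap_pos (δ := δ) (K := K) hδ0 hK
  have hB := bet_pos (K := K) hK
  have hq := qF_pos (δ := δ) (K := K) hδ0 hδ1 hK
  have he := epsB_pos (δ := δ) (K := K) hδ0 hδ1 hK
  have h1δ : (0:ℝ) < 1 - δ := by linarith
  have hGA : 0 ≤ GA δ K b j := by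
    unfold GA
    split_ifs with h
    · have hc : (cars b j : ℝ) ≤ (mbar δ K : ℝ) := by exact_mod_cast h
      have hp := one_le_pow_rho (δ := δ) hδ0 hδ1 (zrun b j)
      nlinarith
    · exact le_refl _
  have hGB : 0 ≤ GB δ K b j := by
    unfold GB
    positivity
  have hGF : 0 ≤ GF δ K j := by
    unfold GF
    positivity
  unfold G
  linarith

include hδ0 hδ1 hK in
lemma G_budget : G δ K b 0 ≤ δ / ((1 - δ) * K) := by
  have hKR : (2:ℝ) ≤ K := by exact_mod_cast hK
  have hK0 : (0:ℝ) < K := by linarith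
  have h1δ : (0:ℝ) < 1 - δ := by linarith
  have hM1 : (0:ℝ) < (mbar δ K : ℝ) + 1 := by positivity
  have hGA : GA δ K b 0 = δ / (2 * K) := by
    have h0 : cars b 0 = 0 := cars_zero b
    unfold GA
    rw [h0, if_pos (Nat.zero_le _)]
    have hz : zrun b 0 = 0 := rfl
    rw [hz, pow_zero]
    unfold Ecap
    push_cast
    field_simp
    ring
  have hGB : GB δ K b 0 = (K:ℝ) * epsB δ K := by
    unfold GB
    have ha : amar δ b 0 = 0 := by
      unfold amar
      rw [cars_zero]
      simp
    rw [ha]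
    simp
  have hGF : GF δ K 0 = (K:ℝ) * qF δ K := by
    unfold GF
    simp
  have he : (K:ℝ) * epsB δ K = δ / (4 * (1 - δ) * K) := by
    unfold epsB bet
    field_simp
    ring
  have hq : (K:ℝ) * qF δ K = δ / (4 * (1 - δ) * K) := by
    unfold qF
    field_simp
  have hKn : (K:ℝ) ≠ 0 := ne_of_gt hK0
  have h1n : (1 - δ) ≠ 0 := ne_of_gt h1δ
  unfold G
  rw [hGA, hGB, hGF, he, hq]
  rw [div_add_div _ _ (by positivity) (by positivity),
      div_add_div _ _ (by positivity) (by positivity),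
      div_le_div_iff₀ (by positivity) (by positivity)]
  nlinarith [mul_pos hδ0 hK0, mul_pos h1δ hK0, mul_pos (mul_pos hδ0 h1δ) hK0,
    mul_pos (mul_pos hδ0 hδ0) hK0, sq_nonneg ((K:ℝ)), mul_pos hK0 hK0,
    mul_pos (mul_pos hδ0 hK0) hK0, mul_pos (mul_pos (mul_pos hδ0 hδ0) hK0) hK0,
    mul_pos (mul_pos (mul_pos hδ0 h1δ) hK0) hK0]

end gcomb

section invariant

variable {δ : ℝ} {K : ℕ} {b : ℕ → Bool}
variable (hδ0 : 0 < δ) (hδ1 : δ < 1) (hK : 1 < K)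

noncomputable def DmS (δ : ℝ) (K : ℕ) (b : ℕ → Bool) (j : ℕ) : ℝ :=
  ∑ i ∈ Finset.range j,
    (if b i = true then pibet δ K b i else -(rho δ * pibet δ K b i))

include hδ0 hδ1 hK in
lemma DmS_invariant : ∀ j : ℕ, j ≤ K →
    DmS δ K b j ≤ G δ K b 0 - (if P δ K b j < 1 then G δ K b j else 0) := by
  intro j
  induction j with
  | zero =>
    intro _
    simp only [DmS, Finset.range_zero, Finset.sum_empty]
    have : P δ K b 0 = 0 := rfl
    rw [this, if_pos (by norm_num)]
    simp
  | succ j ih =>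
    intro hj1
    have hj : j < K := by omega
    have ihj := ih (by omega)
    have hw := w_nonneg (δ := δ) (K := K) (b := b) hδ0 hδ1 hK j
    have hPb := P_bounds (δ := δ) (K := K) (b := b) hδ0 hδ1 hK j
    have hsucc : P δ K b (j+1) = P δ K b j + pibet δ K b j := rfl
    have hDS : DmS δ K b (j+1) = DmS δ K b j
        + (if b j = true then pibet δ K b j else -(rho δ * pibet δ K b j)) := by
      unfold DmS
      rw [Finset.sum_range_succ]
    have hGnn := G_nonneg (δ := δ) (K := K) (b := b) hδ0 hδ1 hK (j+1)
    have hrho := rho_pos (δ := δ) hδ0 hδ1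
    have hpnn := pibet_nonneg (δ := δ) (K := K) (b := b) hδ0 hδ1 hK j
    have hGnnj := G_nonneg (δ := δ) (K := K) (b := b) hδ0 hδ1 hK j
    rcases lt_or_ge (P δ K b j) 1 with hPlt | hPge
    · rw [if_pos hPlt] at ihj
      rcases lt_or_ge (P δ K b j + w δ K b j) 1 with hs | hs
      · -- no saturation
        have hpi : pibet δ K b j = w δ K b j := min_eq_left (by linarith)
        have hP1 : P δ K b (j+1) < 1 := by rw [hsucc, hpi]; linarith
        rw [if_pos hP1]
        rcases hbj : b j with _ | _
        · have h2 := G_zero_step (δ := δ) (K := K) (b := b) hδ0 hδ1 hK hj hbj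
          rw [hDS, if_neg (by simp [hbj]), hpi]
          linarith
        · have h2 := G_one (δ := δ) (K := K) (b := b) hδ0 hδ1 hK hj hbj
          rw [hDS, if_pos (by simp [hbj]), hpi]
          linarith
      · -- saturating step
        have hpi : pibet δ K b j = 1 - P δ K b j := min_eq_right (by linarith)
        have hP1 : P δ K b (j+1) = 1 := by rw [hsucc, hpi]; ring
        rw [hP1, if_neg (by norm_num)]
        rcases hbj : b j with _ | _
        · rw [hDS, if_neg (by simp [hbj])]
          nlinarith [mul_nonneg hrho.le hpnn]
        · have h2 := G_one (δ := δ) (K := K) (b := b) hδ0 hδ1 hK hj hbj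
          rw [hDS, if_pos (by simp [hbj])]
          have hple : pibet δ K b j ≤ w δ K b j := min_le_left _ _
          linarith
    · -- already saturated
      have hP1 : P δ K b j = 1 := le_antisymm hPb.2 hPge
      have hpi : pibet δ K b j = 0 := by
        unfold pibet
        rw [hP1]
        simp [min_eq_right hw]
      rw [if_neg (by rw [hP1]; norm_num)] at ihj
      have hP1' : ¬ (P δ K b (j+1) < 1) := by
        rw [hsucc, hpi, hP1]
        norm_num
      rw [if_neg hP1', hDS, hpi]
      simp only [mul_zero, neg_zero, ite_self]
      linarith

include hδ0 hδ1 hK in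
lemma DmS_final : DmS δ K b K ≤ δ / ((1 - δ) * K) := by
  have h1 := DmS_invariant (δ := δ) (K := K) (b := b) hδ0 hδ1 hK K le_rfl
  have h2 := G_budget (δ := δ) (K := K) (b := b) hδ0 hδ1 hK
  have h3 := G_nonneg (δ := δ) (K := K) (b := b) hδ0 hδ1 hK K
  split_ifs at h1 <;> linarith

lemma DmS_split : DmS δ K b K
    = (∑ i ∈ Finset.range K, if b i = true then pibet δ K b i else 0)
      - rho δ * (∑ i ∈ Finset.range K, if b i = false then pibet δ K b i else 0) := by
  unfold DmS
  rw [Finset.mul_sum, ← Finset.sum_sub_distrib]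
  apply Finset.sum_congr rfl
  intro i _
  rcases hbi : b i with _ | _ <;> simp [hbi]

end invariant

section volume

variable {δ : ℝ} {K : ℕ} {b : ℕ → Bool}
variable (hδ0 : 0 < δ) (hδ1 : δ < 1) (hK : 1 < K)

lemma cars_cast_sum (b : ℕ → Bool) (n : ℕ) :
    (cars b n : ℝ) = ∑ i ∈ Finset.range n, (if b i = true then (1:ℝ) else 0) := by
  unfold cars
  rw [Finset.card_filter]
  push_cast
  rfl

include hδ0 hδ1 in
lemma sq_telescope (b : ℕ → Bool) (n : ℕ) :
    (max (amar δ b n) 0) ^ 2 ≤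
      ∑ i ∈ Finset.range n,
        (if b i = true then 0 else 2 * δ * max (amar δ b i) 0 + δ ^ 2) := by
  induction n with
  | zero =>
    have : amar δ b 0 = 0 := by unfold amar; rw [cars_zero]; simp
    rw [this]
    simp
  | succ n ih =>
    rw [Finset.sum_range_succ]
    have hstep : (max (amar δ b (n+1)) 0) ^ 2 ≤ (max (amar δ b n) 0) ^ 2
        + (if b n = true then 0 else 2 * δ * max (amar δ b n) 0 + δ ^ 2) := by
      rcases hbn : b n with _ | _
      · have ha : amar δ b (n+1) = amar δ b n + δ := by
          rw [amar_succ, hbn]; simp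
        rw [ha, if_neg (by simp)]
        set a := amar δ b n
        rcases le_or_gt a 0 with h | h
        · rw [max_eq_right h]
          rcases le_or_gt (a + δ) 0 with h2 | h2
          · rw [max_eq_right h2]
            nlinarith
          · rw [max_eq_left h2.le]
            nlinarith
        · rw [max_eq_left h.le, max_eq_left (by linarith)]
          nlinarith
      · have ha : amar δ b (n+1) = amar δ b n + δ - 1 := by
          rw [amar_succ, hbn]; simp
        rw [ha, if_pos rfl]
        have := max_sq_mono (y := amar δ b n) (x := amar δ b n + δ - 1) (by linarith)
        linarith
    linarith

set_option maxHeartbeats 1600000 in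
include hδ0 hδ1 hK in
lemma volume_lb (δ' : ℝ) (h0' : 0 ≤ δ') (hδ' : δ' < δ)
    (hm : (cars b (K-1) : ℝ) ≤ δ' * ((K:ℝ) - 1)) :
    (1/1024) * (δ - δ') ^ 2 / δ ≤ ∑ i ∈ Finset.range K, w δ K b i := by
  set n : ℕ := K - 1 with hndef
  have hn : (n:ℝ) = (K:ℝ) - 1 := by
    have h1 : (1:ℕ) ≤ K := hK.le
    rw [hndef]
    push_cast [Nat.cast_sub h1]
    ring
  have hKR : (2:ℝ) ≤ K := by exact_mod_cast hK
  have hK0 : (0:ℝ) < K := by linarith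
  have h1δ : (0:ℝ) < 1 - δ := by linarith
  have hkm1 : (K:ℝ)/2 ≤ (K:ℝ) - 1 := by linarith
  have hkm1' : (1:ℝ) ≤ (K:ℝ) - 1 := by linarith
  set A : ℝ := (δ - δ') * ((K:ℝ) - 1) with hAdef
  have hApos : 0 < A := by
    rw [hAdef]
    apply mul_pos (by linarith) (by linarith)
  have hwnn : ∀ i, 0 ≤ w δ K b i := w_nonneg hδ0 hδ1 hK
  have hwAnn : ∀ i, 0 ≤ wA δ K b i := wA_nonneg hδ0 hδ1 hK
  have hwBnn : ∀ i, 0 ≤ wB δ K b i := wB_nonneg hK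
  have hqF := qF_pos (δ := δ) (K := K) hδ0 hδ1 hK
  have hE := Ecap_pos (δ := δ) (K := K) hδ0 hK
  have hbet := bet_pos (K := K) hK
  rcases le_or_gt (4 * δ * K) (A ^ 2) with hbig | hsmall
  · -- Case 1 : use component B
    have hfin : A ≤ amar δ b n := by
      unfold amar
      rw [hn, hAdef]
      nlinarith [hm]
    have hM2 : A ^ 2 ≤ (max (amar δ b n) 0) ^ 2 :=
      pow_le_pow_left₀ hApos.le (le_trans hfin (le_max_left _ _)) 2
    have htel := sq_telescope (δ := δ) (b := b) hδ0 hδ1 n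
    set S1 : ℝ := ∑ i ∈ Finset.range n, (if b i = true then 0 else max (amar δ b i) 0)
      with hS1def
    have hS1 : ∑ i ∈ Finset.range n,
        (if b i = true then 0 else 2 * δ * max (amar δ b i) 0 + δ ^ 2)
        ≤ 2 * δ * S1 + δ ^ 2 * n := by
      have hterm : ∀ i ∈ Finset.range n,
          (if b i = true then (0:ℝ) else 2 * δ * max (amar δ b i) 0 + δ ^ 2)
          ≤ 2 * δ * (if b i = true then 0 else max (amar δ b i) 0) + δ ^ 2 := by
        intro i _
        by_cases hbi : b i = true
        · rw [if_pos hbi, if_pos hbi]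
          nlinarith
        · rw [if_neg hbi, if_neg hbi]
      calc _ ≤ ∑ i ∈ Finset.range n,
            (2 * δ * (if b i = true then 0 else max (amar δ b i) 0) + δ ^ 2) :=
          Finset.sum_le_sum hterm
        _ = 2 * δ * S1 + δ ^ 2 * n := by
          rw [Finset.sum_add_distrib, ← Finset.mul_sum, Finset.sum_const,
            Finset.card_range, hS1def]
          ring
    have hsum1 : ∑ i ∈ Finset.range n, wB δ K b i ≤ ∑ i ∈ Finset.range K, w δ K b i := by
      calc ∑ i ∈ Finset.range n, wB δ K b i
          ≤ ∑ i ∈ Finset.range K, wB δ K b i := by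
            apply Finset.sum_le_sum_of_subset_of_nonneg
            · apply Finset.range_subset_range.2; omega
            · intro i _ _; exact hwBnn i
        _ ≤ ∑ i ∈ Finset.range K, w δ K b i := by
            apply Finset.sum_le_sum
            intro i _
            unfold w
            have := hwAnn i
            linarith
    have hsum2 : bet K * (S1 - n) ≤ ∑ i ∈ Finset.range n, wB δ K b i := by
      have hterm : ∀ i ∈ Finset.range n,
          bet K * ((if b i = true then 0 else max (amar δ b i) 0) - 1) ≤ wB δ K b i := by
        intro i _
        unfold wB
        by_cases hbi : b i = true
        · rw [if_pos hbi]
          nlinarith [le_max_right (amar δ b i - 1) (0:ℝ)]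
        · rw [if_neg hbi]
          apply mul_le_mul_of_nonneg_left _ hbet.le
          rcases le_or_gt (amar δ b i) 1 with h | h
          · have h1 : max (amar δ b i) 0 ≤ 1 := max_le h (by norm_num)
            have h2 : (0:ℝ) ≤ max (amar δ b i - 1) 0 := le_max_right _ _
            linarith
          · rw [max_eq_left (by linarith), max_eq_left (by linarith)]
      calc bet K * (S1 - n)
          = ∑ i ∈ Finset.range n,
              bet K * ((if b i = true then 0 else max (amar δ b i) 0) - 1) := by
            rw [← Finset.mul_sum]
            congr 1
            rw [Finset.sum_sub_distrib, Finset.sum_const, Finset.card_range, hS1def]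
            simp
        _ ≤ _ := Finset.sum_le_sum hterm
    have hnK : (n:ℝ) ≤ K := by rw [hn]; linarith
    have hfinal : A ^ 2 / (8 * δ) ≤ S1 - n := by
      rw [div_le_iff₀ (by positivity)]
      nlinarith [hbig, hδ1.le, hδ0, hnK, htel, hS1]
    have hchain : bet K * (A ^ 2 / (8 * δ)) ≤ ∑ i ∈ Finset.range K, w δ K b i := by
      calc bet K * (A ^ 2 / (8 * δ)) ≤ bet K * (S1 - n) :=
          mul_le_mul_of_nonneg_left hfinal hbet.le
        _ ≤ _ := le_trans hsum2 hsum1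
    refine le_trans ?_ hchain
    have hrhs : bet K * (A ^ 2 / (8 * δ)) = A ^ 2 / (64 * (K:ℝ)^2 * δ) := by
      unfold bet
      field_simp
      ring
    rw [hrhs, hAdef, div_le_div_iff₀ hδ0 (by positivity)]
    have hsq : (K:ℝ)^2 ≤ 16*((K:ℝ)-1)^2 := by nlinarith
    have hnn : (0:ℝ) ≤ (δ - δ')^2 * δ := by positivity
    linarith [mul_le_mul_of_nonneg_left hsq hnn]
  · -- Case 2
    have htsmall : (1/1024) * (δ - δ') ^ 2 / δ ≤ 1 / (64 * K) := by
      rw [div_le_div_iff₀ hδ0 (by positivity)]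
      have hsq : (K:ℝ)^2 ≤ 4*((K:ℝ)-1)^2 := by nlinarith
      have h1 : (δ - δ')^2 * ((K:ℝ)^2/4) ≤ (δ - δ')^2 * ((K:ℝ)-1)^2 := by
        apply mul_le_mul_of_nonneg_left _ (sq_nonneg _)
        nlinarith
      rw [hAdef] at hsmall
      nlinarith [hsmall, sq_nonneg (δ - δ'), h1]
    rcases Nat.eq_zero_or_pos (mbar δ K) with hm0 | hm1
    · -- 2a : mbar = 0, so no cars at all on relevant paths
      have hδK1 : δ * ((K:ℝ) - 1) < 1 := by
        have h2 := Nat.floor_eq_zero.mp hm0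
        exact h2
      have hmz : cars b n = 0 := by
        have h1 : (cars b n : ℝ) < 1 := by nlinarith [hm]
        have : cars b n < 1 := by exact_mod_cast h1
        omega
      have hsum : (K:ℝ) * Ecap δ K ≤ ∑ i ∈ Finset.range K, w δ K b i := by
        have hterm : ∀ i ∈ Finset.range K, Ecap δ K ≤ w δ K b i := by
          intro i hi
          rw [Finset.mem_range] at hi
          have hci : cars b i = 0 := by
            have := cars_mono b (show i ≤ n by omega)
            omega
          have halive : cars b i ≤ mbar δ K := by omega
          have hwa : Ecap δ K ≤ wA δ K b i := by
            unfold wA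
            rw [if_pos halive]
            nlinarith [one_le_pow_rho (δ := δ) hδ0 hδ1 (zrun b i)]
          unfold w
          have := hwBnn i
          linarith
        calc (K:ℝ) * Ecap δ K = ∑ _i ∈ Finset.range K, Ecap δ K := by
              rw [Finset.sum_const, Finset.card_range]; ring
          _ ≤ _ := Finset.sum_le_sum hterm
      have hEcap : (K:ℝ) * Ecap δ K = δ / 2 := by
        unfold Ecap
        rw [hm0]
        push_cast
        field_simp
        ring
      refine le_trans ?_ hsum
      rw [hEcap, div_le_div_iff₀ hδ0 (by norm_num)]
      nlinarith [sq_nonneg (δ - δ'), h0', hδ'.le, hδ0]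
    · rcases le_or_gt δ (1/2) with hhalf | hhalf
      · -- 2b : mbar ≥ 1, δ ≤ 1/2 : flat part of component A
        have hfl : (mbar δ K : ℝ) ≤ δ * ((K:ℝ) - 1) :=
          Nat.floor_le (by positivity)
        have hm1R : (1:ℝ) ≤ (mbar δ K : ℝ) := by exact_mod_cast hm1
        have hmmb : cars b n ≤ mbar δ K := by
          apply Nat.le_floor
          nlinarith [hm]
        have hZsum : ∑ i ∈ Finset.range n, (if b i = true then (0:ℝ) else 1)
            = (n:ℝ) - cars b n := by
          have hterm : ∀ i ∈ Finset.range n, (if b i = true then (0:ℝ) else 1)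
              = 1 - (if b i = true then (1:ℝ) else 0) := by
            intro i _
            by_cases hbi : b i = true <;> simp [hbi]
          rw [Finset.sum_congr rfl hterm, Finset.sum_sub_distrib, Finset.sum_const,
            Finset.card_range, ← cars_cast_sum]
          simp
        have hsum : Ecap δ K * ((n:ℝ) - cars b n) ≤ ∑ i ∈ Finset.range K, w δ K b i := by
          have h1 : ∑ i ∈ Finset.range n, (if b i = true then (0:ℝ) else Ecap δ K)
              ≤ ∑ i ∈ Finset.range K, w δ K b i := by
            calc ∑ i ∈ Finset.range n, (if b i = true then (0:ℝ) else Ecap δ K)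
                ≤ ∑ i ∈ Finset.range n, w δ K b i := by
                  apply Finset.sum_le_sum
                  intro i hi
                  rw [Finset.mem_range] at hi
                  have halive : cars b i ≤ mbar δ K :=
                    le_trans (cars_mono b (show i ≤ n by omega)) hmmb
                  have hwa : Ecap δ K ≤ wA δ K b i := by
                    unfold wA
                    rw [if_pos halive]
                    nlinarith [one_le_pow_rho (δ := δ) hδ0 hδ1 (zrun b i)]
                  have h2 : (0:ℝ) ≤ w δ K b i := hwnn i
                  by_cases hbi : b i = true
                  · rw [if_pos hbi]; exact h2
                  · rw [if_neg hbi]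
                    unfold w
                    have := hwBnn i
                    linarith
              _ ≤ ∑ i ∈ Finset.range K, w δ K b i := by
                  apply Finset.sum_le_sum_of_subset_of_nonneg
                  · apply Finset.range_subset_range.2; omega
                  · intro i _ _; exact hwnn i
          have h2 : ∑ i ∈ Finset.range n, (if b i = true then (0:ℝ) else Ecap δ K)
              = Ecap δ K * ((n:ℝ) - cars b n) := by
            rw [← hZsum, Finset.mul_sum]
            apply Finset.sum_congr rfl
            intro i _
            by_cases hbi : b i = true <;> simp [hbi]
          rw [← h2]
          exact h1
        have hZlb : ((K:ℝ) - 1) / 2 ≤ (n:ℝ) - cars b n := by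
          nlinarith [hm, hn]
        have hElb : 1 / (4 * (K:ℝ) * ((K:ℝ) - 1)) ≤ Ecap δ K := by
          unfold Ecap
          rw [div_le_div_iff₀ (by positivity) (by positivity)]
          nlinarith [hfl, hm1R, hδ0]
        have hfinal : 1 / (8 * (K:ℝ)) ≤ Ecap δ K * ((n:ℝ) - cars b n) := by
          have := mul_le_mul hElb hZlb (by positivity) hE.le
          calc 1 / (8 * (K:ℝ)) = 1 / (4 * (K:ℝ) * ((K:ℝ) - 1)) * (((K:ℝ) - 1) / 2) := by
                field_simp
                ring
            _ ≤ _ := this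
        refine le_trans (le_trans htsmall ?_) (le_trans hfinal hsum)
        rw [div_le_div_iff₀ (by positivity) (by positivity)]
        linarith
      · -- 2c : δ > 1/2 : flat component F
        have hsum : (K:ℝ) * qF δ K ≤ ∑ i ∈ Finset.range K, w δ K b i := by
          have hterm : ∀ i ∈ Finset.range K, qF δ K ≤ w δ K b i := by
            intro i _
            unfold w
            have := hwAnn i
            have := hwBnn i
            linarith
          calc (K:ℝ) * qF δ K = ∑ _i ∈ Finset.range K, qF δ K := by
                rw [Finset.sum_const, Finset.card_range]; ring
            _ ≤ _ := Finset.sum_le_sum hterm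
        have hq : (K:ℝ) * qF δ K = δ / (4 * (1 - δ) * K) := by
          unfold qF
          field_simp
        refine le_trans (le_trans htsmall ?_) hsum
        rw [hq, div_le_div_iff₀ (by positivity) (by positivity)]
        nlinarith [hK0, h1δ, mul_pos hK0 hK0]

end volume

section strategy

noncomputable def prob (δ : ℝ) (K : ℕ) (b : ℕ → Bool) : Option ℕ → ℝ
  | none => 1 - P δ K b K
  | some i => if i < K then pibet δ K b i else 0

noncomputable def strat (δ : ℝ) (K : ℕ) (hδ0 : 0 < δ) (hδ1 : δ < 1) (hK : 1 < K) :
    FrogStrategy where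
  prob := prob δ K
  nonneg := by
    intro b o
    cases o with
    | none =>
      have h := (P_bounds (δ := δ) (K := K) (b := b) hδ0 hδ1 hK K).2
      show (0:ℝ) ≤ 1 - P δ K b K
      linarith
    | some i =>
      show (0:ℝ) ≤ if i < K then pibet δ K b i else 0
      split_ifs
      · exact pibet_nonneg hδ0 hδ1 hK i
      · exact le_refl _
  total := by
    intro b
    have hsupp : ∀ o : Option ℕ,
        o ∉ insert none ((Finset.range K).image some) → prob δ K b o = 0 := by
      intro o ho
      cases o with
      | none => exact absurd (Finset.mem_insert_self _ _) ho
      | some i =>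
        have hi : i ∉ Finset.range K := by
          intro h
          exact ho (Finset.mem_insert_of_mem (Finset.mem_image_of_mem some h))
        rw [Finset.mem_range] at hi
        show (if i < K then pibet δ K b i else 0) = 0
        rw [if_neg hi]
    rw [tsum_eq_sum hsupp, Finset.sum_insert (by simp),
      Finset.sum_image (fun x _ y _ h => Option.some_injective ℕ h)]
    have hsum : ∑ i ∈ Finset.range K, prob δ K b (some i) = P δ K b K := by
      rw [P_eq_sum_pibet]
      apply Finset.sum_congr rfl
      intro i hi
      rw [Finset.mem_range] at hi
      show (if i < K then pibet δ K b i else 0) = pibet δ K b i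
      rw [if_pos hi]
    rw [hsum]
    show 1 - P δ K b K + P δ K b K = 1
    ring
  adapted := by
    intro b b' i hagree
    show (if i < K then pibet δ K b i else 0) = (if i < K then pibet δ K b' i else 0)
    split_ifs
    · unfold pibet
      rw [w_congr (b := b) (b' := b') hagree, P_congr (b := b) (b' := b') i hagree]
    · rfl

end strategy

end Frog31


/-- Lemma 3.1: there are universal constants `c, C > 0` such that for every `δ ∈ (0,1)`
and integer `K > 1` there is a frog-strategy `T` with, for every `b`:
(i) `T` never crosses at a minute later than `K` (0-indexed: `prob b (some i) = 0` for `i ≥ K`);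
(ii) if the density of 1s among `b_1, …, b_{K-1}` is at most `δ' < δ` then
`π_{T,b}(∞) ≤ 1 - c (δ - δ')² / δ`;
(iii) `DP(T,b) ≤ (δ/(1-δ)) Succ(T,b) + C δ/((1-δ)K)`. -/
theorem finite_interval_lemma :
    ∃ c C : ℝ, 0 < c ∧ 0 < C ∧
      ∀ δ : ℝ, 0 < δ → δ < 1 → ∀ K : ℕ, 1 < K →
        ∃ T : FrogStrategy, ∀ b : ℕ → Bool,
          (∀ i : ℕ, K ≤ i → T.prob b (some i) = 0) ∧
          (∀ δ' : ℝ, (cars b (K - 1) : ℝ) / (K - 1) ≤ δ' → δ' < δ →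
            T.prob b none ≤ 1 - c * (δ - δ') ^ 2 / δ) ∧
          deathProb T b ≤ δ / (1 - δ) * succProb T b + C * δ / ((1 - δ) * K) := by
  classical
  refine ⟨1/1024, 1, by norm_num, by norm_num, ?_⟩
  intro δ hδ0 hδ1 K hK
  refine ⟨Frog31.strat δ K hδ0 hδ1 hK, ?_⟩
  intro b
  have hKR : (2:ℝ) ≤ K := by exact_mod_cast hK
  have h1δ : (0:ℝ) < 1 - δ := by linarith
  have hkm1 : (0:ℝ) < (K:ℝ) - 1 := by linarith
  refine ⟨?_, ?_, ?_⟩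
  · intro i hi
    show (if i < K then Frog31.pibet δ K b i else 0) = 0
    rw [if_neg (by omega)]
  · intro δ' h1 h2
    have h0' : 0 ≤ δ' := le_trans (by positivity) h1
    have hm : (cars b (K-1) : ℝ) ≤ δ' * ((K:ℝ) - 1) := by
      rw [div_le_iff₀ hkm1] at h1
      linarith
    have hvol := Frog31.volume_lb hδ0 hδ1 hK δ' h0' h2 hm
    have hPmin := Frog31.P_eq_min (δ := δ) (K := K) (b := b) hδ0 hδ1 hK K
    have ht1 : (1/1024) * (δ - δ') ^ 2 / δ ≤ 1 := by
      rw [div_le_one hδ0]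
      nlinarith
    have hPK : 1/1024 * (δ - δ') ^ 2 / δ ≤ Frog31.P δ K b K := by
      rw [hPmin]
      exact le_min hvol ht1
    show 1 - Frog31.P δ K b K ≤ 1 - 1/1024 * (δ - δ') ^ 2 / δ
    linarith
  · -- (iii)
    have hDm := Frog31.DmS_final (δ := δ) (K := K) (b := b) hδ0 hδ1 hK
    have hsplit := Frog31.DmS_split (δ := δ) (K := K) (b := b)
    have hdp : deathProb (Frog31.strat δ K hδ0 hδ1 hK) b
        = ∑ i ∈ Finset.range K, (if b i = true then Frog31.pibet δ K b i else 0) := by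
      unfold deathProb
      rw [tsum_eq_sum (s := Finset.range K)]
      · apply Finset.sum_congr rfl
        intro i hi
        rw [Finset.mem_range] at hi
        show (if b i = true then (if i < K then Frog31.pibet δ K b i else 0) else 0) = _
        rw [if_pos hi]
      · intro i hi
        rw [Finset.mem_range] at hi
        show (if b i = true then (if i < K then Frog31.pibet δ K b i else 0) else 0) = 0
        simp [hi]
    have hsp : succProb (Frog31.strat δ K hδ0 hδ1 hK) b
        = ∑ i ∈ Finset.range K, (if b i = false then Frog31.pibet δ K b i else 0) := by
      unfold succProb
      rw [tsum_eq_sum (s := Finset.range K)]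
      · apply Finset.sum_congr rfl
        intro i hi
        rw [Finset.mem_range] at hi
        show (if b i = false then (if i < K then Frog31.pibet δ K b i else 0) else 0) = _
        rw [if_pos hi]
      · intro i hi
        rw [Finset.mem_range] at hi
        show (if b i = false then (if i < K then Frog31.pibet δ K b i else 0) else 0) = 0
        simp [hi]
    have hsum2 : ∑ i ∈ Finset.range K, (if b i = false then Frog31.pibet δ K b i else 0)
        = ∑ i ∈ Finset.range K, (if b i = true then (0:ℝ) else Frog31.pibet δ K b i) := by
      apply Finset.sum_congr rfl
      intro i _
      by_cases hbi : b i = true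
      · rw [if_pos hbi, if_neg (by simp [hbi])]
      · rw [if_neg hbi, if_pos (by simp at hbi; simp [hbi])]
    have hrho : Frog31.rho δ = δ / (1 - δ) := rfl
    rw [hdp, hsp]
    rw [hsplit] at hDm
    have hC : (1:ℝ) * δ / ((1 - δ) * K) = δ / ((1 - δ) * K) := by ring
    rw [hC]
    rw [← hrho]
    linarith [hDm]
end

section
/- Let ε ∈ (0,1) and γ > 0, and let S be any frog-strategy with Succ(S, A_{ε-ws}) > 1 − ε − γ. Then for every b ∈ {0,1}^ω the death probability satisfies DP(S, b) ≤ ε + γ. -/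
lemma summable_prob (S : FrogStrategy) (b : ℕ → Bool) : Summable (S.prob b) := by
  by_contra h
  have := tsum_eq_zero_of_not_summable h
  rw [S.total b] at this
  norm_num at this

lemma summable_some (S : FrogStrategy) (b : ℕ → Bool) :
    Summable (fun i : ℕ => S.prob b (some i)) :=
  (summable_prob S b).comp_injective (Option.some_injective ℕ)

lemma summable_death (S : FrogStrategy) (b : ℕ → Bool) :
    Summable (fun i : ℕ => if b i = true then S.prob b (some i) else 0) := by
  apply Summable.of_nonneg_of_le (fun i => ?_) (fun i => ?_) (summable_some S b)
  · split <;> simp [S.nonneg]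
  · split <;> simp [S.nonneg]

lemma summable_succ (S : FrogStrategy) (b : ℕ → Bool) :
    Summable (fun i : ℕ => if b i = false then S.prob b (some i) else 0) := by
  apply Summable.of_nonneg_of_le (fun i => ?_) (fun i => ?_) (summable_some S b)
  · split <;> simp [S.nonneg]
  · split <;> simp [S.nonneg]

lemma succ_add_death (S : FrogStrategy) (b : ℕ → Bool) :
    succProb S b + deathProb S b ≤ 1 := by
  have h1 : succProb S b + deathProb S b = ∑' i : ℕ, S.prob b (some i) := by
    rw [succProb, deathProb, ← Summable.tsum_add (summable_succ S b) (summable_death S b)]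
    congr 1; funext i; cases hb : b i <;> simp [hb]
  rw [h1, ← S.total b]
  exact Summable.tsum_le_tsum_of_inj _ (Option.some_injective ℕ) (fun o _ => S.nonneg b o)
    (fun i => le_refl _) (summable_some S b) (summable_prob S b)

/-- Safety from uniform success: if a frog-strategy `S` satisfies
`Succ(S, A_{ε-ws}) > 1 - ε - γ`, then `DP(S, b) ≤ ε + γ` for every sequence `b`. -/
theorem safety_of_success (ε γ : ℝ) (hε0 : 0 < ε) (hε1 : ε < 1) (hγ : 0 < γ)
    (S : FrogStrategy)
    (hS : ∃ c : ℝ, 1 - ε - γ < c ∧ ∀ b : ℕ → Bool, epsWeaklySparse ε b → c ≤ succProb S b) :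
    ∀ b : ℕ → Bool, deathProb S b ≤ ε + γ := by
  intro b
  obtain ⟨c, hc, hsucc⟩ := hS
  -- partial sums bounded
  have key : ∀ n : ℕ, ∑ i ∈ Finset.range n,
      (if b i = true then S.prob b (some i) else 0) ≤ ε + γ := by
    intro n
    set b' : ℕ → Bool := fun i => if i < n then b i else false with hb'
    have hagree : ∀ j, j < n → b j = b' j := by
      intro j hj; simp [hb', hj]
    -- b' is weakly sparse
    have hws : epsWeaklySparse ε b' := by
      have htend : Filter.Tendsto (fun t : ℕ => (cars b' t : ℝ) / t) Filter.atTop (nhds 0) := by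
        have hcars : ∀ t : ℕ, (cars b' t : ℝ) ≤ n := by
          intro t
          have : ((Finset.range t).filter (fun i => b' i = true)).card ≤ (Finset.range n).card := by
            apply Finset.card_le_card
            intro i hi
            simp only [Finset.mem_filter, Finset.mem_range] at hi ⊢
            by_contra hcon
            push_neg at hcon
            simp [hb'] at hi
            exact absurd hi.2.1 (not_lt.mpr hcon)
          simpa [cars] using (Nat.cast_le (α := ℝ)).mpr (this.trans_eq (Finset.card_range n))
        have hle : ∀ t : ℕ, (cars b' t : ℝ) / t ≤ (n : ℝ) / t := by
          intro t
          rcases Nat.eq_zero_or_pos t with rfl | ht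
          · simp
          · have ht' : (0:ℝ) < t := by exact_mod_cast ht
            gcongr
            exact_mod_cast hcars t
        exact squeeze_zero (fun t => by positivity) hle
          (tendsto_const_div_atTop_nhds_zero_nat (n : ℝ))
      have := htend.liminf_eq
      rw [epsWeaklySparse, this]
      exact hε0.le
    have hd := succ_add_death S b'
    have hsb' := hsucc b' hws
    have hdeath' : deathProb S b' ≤ 1 - c := by linarith
    have hps : ∑ i ∈ Finset.range n, (if b' i = true then S.prob b' (some i) else 0)
        ≤ deathProb S b' := by
      apply Summable.sum_le_tsum _ (fun i _ => by split <;> simp [S.nonneg]) (summable_death S b')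
    have heq : ∑ i ∈ Finset.range n, (if b i = true then S.prob b (some i) else 0)
        = ∑ i ∈ Finset.range n, (if b' i = true then S.prob b' (some i) else 0) := by
      apply Finset.sum_congr rfl
      intro i hi
      rw [Finset.mem_range] at hi
      rw [← hagree i hi, S.adapted b b' i (fun j hj => hagree j (hj.trans hi))]
    linarith
  by_cases hsum : Summable (fun i : ℕ => if b i = true then S.prob b (some i) else 0)
  · exact Summable.tsum_le_of_sum_range_le hsum key
  · rw [deathProb, tsum_eq_zero_of_not_summable hsum]; positivity
end

section
/- Let ε ∈ (0,1), let ε_1 > ε, let K ≥ 1 be an integer, and partition ℕ = {1,2,…} into consecutive intervals I_1, I_2, … where I_r has length r²·K (so I_1 = {1,…,K}, I_2 = {K+1,…,5K}, etc.). If b ∈ {0,1}^ω is ε-weakly sparse, then for infinitely many r the fraction of 1-entries of b in I_r, namely α_r := (Σ_{i ∈ I_r} b_i)/|I_r|, satisfies α_r ≤ ε_1. -/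
/-- `cumLen K r` is the total length `K·(1² + 2² + ⋯ + r²)` of the first `r` intervals
`I_1, …, I_r`, where `I_j` has length `j²·K`.  The interval `I_{r+1}` thus occupies the
0-indexed positions `[cumLen K r, cumLen K (r+1))`. -/
def cumLen (K r : ℕ) : ℕ := K * ∑ j ∈ Finset.range (r + 1), j ^ 2

lemma sum_sq_lb (n : ℕ) : n ^ 3 ≤ 3 * ∑ j ∈ Finset.range (n + 1), j ^ 2 := by
  induction n with
  | zero => simp
  | succ n ih =>
    rw [Finset.sum_range_succ, Nat.mul_add]
    have e1 : (n+1)^3 = n^3 + 3*n^2 + 3*n + 1 := by ring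
    have e2 : 3*((n+1)^2) = 3*n^2 + 6*n + 3 := by ring
    omega

lemma cumLen_succ (K r : ℕ) : cumLen K (r + 1) = cumLen K r + K * (r + 1) ^ 2 := by
  unfold cumLen
  rw [Finset.sum_range_succ, Nat.mul_add]

lemma le_cumLen (K r : ℕ) (hK : 1 ≤ K) : r ≤ cumLen K r := by
  calc r ≤ r ^ 2 := Nat.le_self_pow two_ne_zero r
  _ ≤ ∑ j ∈ Finset.range (r + 1), j ^ 2 :=
      Finset.single_le_sum (f := fun j => j ^ 2) (fun i _ => Nat.zero_le _) (Finset.self_mem_range_succ r)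
  _ ≤ cumLen K r := Nat.le_mul_of_pos_left _ hK

lemma cumLen_mono (K : ℕ) : Monotone (cumLen K) := by
  apply monotone_nat_of_le_succ
  intro r
  rw [cumLen_succ]
  exact Nat.le_add_right _ _

lemma cars_split (b : ℕ → Bool) {m n : ℕ} (h : m ≤ n) :
    cars b n = cars b m + ((Finset.Ico m n).filter (fun i => b i = true)).card := by
  unfold cars
  rw [Finset.range_eq_Ico, ← Finset.Ico_union_Ico_eq_Ico (Nat.zero_le m) h,
    Finset.filter_union, Finset.card_union_of_disjoint, ← Finset.range_eq_Ico]
  exact Finset.disjoint_filter_filter (Finset.Ico_disjoint_Ico_consecutive 0 m n)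

lemma cars_mono (b : ℕ → Bool) : Monotone (cars b) := by
  intro m n h
  rw [cars_split b h]
  exact Nat.le_add_right _ _

lemma exists_interval (K t r₀ : ℕ) (hK : 1 ≤ K) (htc : cumLen K r₀ ≤ t) :
    ∃ r : ℕ, r₀ ≤ r ∧ cumLen K r ≤ t ∧ t < cumLen K (r + 1) := by
  have hr₀t : r₀ ≤ t := le_trans (le_cumLen K r₀ hK) htc
  refine ⟨Nat.findGreatest (fun s => cumLen K s ≤ t) t,
    Nat.le_findGreatest hr₀t htc,
    Nat.findGreatest_spec (P := fun s => cumLen K s ≤ t) hr₀t htc, ?_⟩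
  by_contra hcl
  push_neg at hcl
  exact Nat.findGreatest_is_greatest (Nat.lt_succ_self _)
    (le_trans (le_cumLen K _ hK) hcl) hcl

set_option maxHeartbeats 1000000 in
/-- Claim 3.2: if `b` is `ε`-weakly sparse and `ε₁ > ε`, then for infinitely many `r`
the fraction `α_r` of 1-entries of `b` in the interval `I_r` (of length `r²K`) is at
most `ε₁`.  (Here `r` ranges over `{1, 2, …}`; below the interval `I_{r+1}` is used, with
`r : ℕ` arbitrary.) -/
theorem infinitely_many_light_intervals (ε ε₁ : ℝ) (hε0 : 0 < ε) (hε1 : ε < 1)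
    (hε₁ : ε < ε₁) (K : ℕ) (hK : 1 ≤ K) (b : ℕ → Bool) (hb : epsWeaklySparse ε b) :
    ∀ R : ℕ, ∃ r : ℕ, R ≤ r ∧
      ((((Finset.Ico (cumLen K r) (cumLen K (r + 1))).filter
          (fun i => b i = true)).card : ℝ) / ((r + 1) ^ 2 * K) ≤ ε₁) := by
  intro R
  by_contra hcon
  push_neg at hcon
  have hK0 : (0:ℝ) < K := by exact_mod_cast hK
  have hε₁0 : (0:ℝ) < ε₁ := lt_trans hε0 hε₁
  set δ : ℝ := (ε + ε₁) / 2 with hδ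
  have hδε : ε < δ := by rw [hδ]; linarith
  have hθ : (0:ℝ) < ε₁ - δ := by rw [hδ]; linarith
  clear_value δ
  set C : ℝ := (cumLen K R : ℝ) with hCdef
  have hC0 : (0:ℝ) ≤ C := by rw [hCdef]; positivity
  clear_value C
  -- per-interval lower bound on the number of ones
  have hcard : ∀ r, R ≤ r → ε₁ * (((r:ℝ)+1)^2 * K) <
      (((Finset.Ico (cumLen K r) (cumLen K (r+1))).filter (fun i => b i = true)).card : ℝ) := by
    intro r hr
    have hy : (0:ℝ) < ((r:ℝ)+1)^2 * K := by positivity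
    have h := hcon r hr
    rwa [lt_div_iff₀ hy] at h
  -- cumulative lower bound
  have hcum : ∀ r, R ≤ r →
      ε₁ * ((cumLen K r : ℝ) - C) ≤ (cars b (cumLen K r) : ℝ) := by
    intro r hr
    induction r, hr using Nat.le_induction with
    | base => simp [hCdef]
    | succ r hr ih =>
      have hsplit := cars_split b (cumLen_mono K (Nat.le_succ r))
      have hc := hcard r hr
      have hs : (cumLen K (r+1) : ℝ) = (cumLen K r : ℝ) + (K:ℝ) * ((r:ℝ)+1)^2 := by
        rw [cumLen_succ]; push_cast; ring
      rw [hsplit]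
      push_cast
      nlinarith [ih, hc, hs]
  -- choose r₀
  obtain ⟨M, hM⟩ := exists_nat_ge ((6*ε₁ + 2*ε₁*C)/(ε₁ - δ))
  set r₀ : ℕ := max (max R 1) M with hr₀def
  have hr₀R : R ≤ r₀ := le_trans (le_max_left _ _) (le_max_left _ _)
  have hr₀1 : 1 ≤ r₀ := le_trans (le_max_right _ _) (le_max_left _ _)
  have hr₀M : M ≤ r₀ := le_max_right _ _
  -- eventual lower bound for cars b t / t
  have hev : ∀ t : ℕ, max 1 (cumLen K r₀) ≤ t → δ ≤ (cars b t : ℝ) / t := by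
    intro t ht
    have ht1 : 1 ≤ t := le_trans (le_max_left _ _) ht
    have htc : cumLen K r₀ ≤ t := le_trans (le_max_right _ _) ht
    obtain ⟨r, hrr₀, hrle, hrlt⟩ := exists_interval K t r₀ hK htc
    have hrR : R ≤ r := le_trans hr₀R hrr₀
    have hcumr := hcum r hrR
    have hmono : (cars b (cumLen K r) : ℝ) ≤ (cars b t : ℝ) := by
      exact_mod_cast cars_mono b hrle
    have ht0 : (0:ℝ) < t := by exact_mod_cast ht1
    have hD0 : (0:ℝ) < (cumLen K (r+1) : ℝ) := by
      have := le_cumLen K (r+1) hK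
      have : (1:ℕ) ≤ cumLen K (r+1) := le_trans (Nat.le_add_left 1 r) this
      exact_mod_cast Nat.lt_of_lt_of_le Nat.zero_lt_one this
    have step1 : ε₁ * ((cumLen K r : ℝ) - C) / (cumLen K (r+1) : ℝ) ≤ (cars b t : ℝ) / t := by
      apply div_le_div₀ (by positivity) (le_trans hcumr hmono) ht0
      exact_mod_cast le_of_lt hrlt
    have step2 : δ ≤ ε₁ * ((cumLen K r : ℝ) - C) / (cumLen K (r+1) : ℝ) := by
      rw [le_div_iff₀ hD0]
      set x : ℝ := (r:ℝ) + 1 with hx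
      set D : ℝ := (cumLen K (r+1) : ℝ) with hDdef
      set L : ℝ := (cumLen K r : ℝ) with hL
      have hx1 : (1:ℝ) ≤ x := by rw [hx]; have : (0:ℝ) ≤ (r:ℝ) := Nat.cast_nonneg r; linarith
      have hDeq : D = L + (K:ℝ) * x^2 := by
        rw [hDdef, hL, hx, cumLen_succ]; push_cast; ring
      have hc3 : (K:ℝ) * x^3 ≤ 3 * D := by
        have h1 : K * (r+1)^3 ≤ 3 * cumLen K (r+1) := by
          have := sum_sq_lb (r+1)
          calc K * (r+1)^3 ≤ K * (3 * ∑ j ∈ Finset.range (r+2), j^2) :=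
                Nat.mul_le_mul_left K this
          _ = 3 * cumLen K (r+1) := by unfold cumLen; ring
        rw [hDdef, hx]
        exact_mod_cast h1
      have hD1 : x ≤ D := by
        rw [hDdef, hx]
        exact_mod_cast le_cumLen K (r+1) hK
      have hbnd : 6*ε₁ + 2*ε₁*C ≤ (ε₁ - δ) * x := by
        have h1 : ((6*ε₁ + 2*ε₁*C)/(ε₁ - δ)) ≤ x := by
          have : (M:ℝ) ≤ x := by
            rw [hx]
            have : (M:ℝ) ≤ (r:ℝ) := by exact_mod_cast le_trans hr₀M hrr₀
            linarith
          linarith [hM]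
        calc 6*ε₁ + 2*ε₁*C = ((6*ε₁ + 2*ε₁*C)/(ε₁ - δ)) * (ε₁ - δ) := by
              field_simp
        _ ≤ x * (ε₁ - δ) := mul_le_mul_of_nonneg_right h1 hθ.le
        _ = (ε₁ - δ) * x := by ring
      clear_value x D L
      have hx2 : (0:ℝ) ≤ (K:ℝ) * x^2 := by positivity
      have hA : ε₁ * ((K:ℝ)*x^2) ≤ (ε₁-δ)/6 * ((K:ℝ)*x^3) := by
        have h6 : 6*ε₁ ≤ (ε₁-δ)*x := by nlinarith
        nlinarith [mul_le_mul_of_nonneg_right h6 hx2]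
      
      have hA2 : (ε₁-δ)/6 * ((K:ℝ)*x^3) ≤ (ε₁-δ)/2 * D := by
        have := mul_le_mul_of_nonneg_left hc3 (by positivity : (0:ℝ) ≤ (ε₁-δ)/6)
        linarith
      have hB : ε₁ * C ≤ (ε₁-δ)/2 * D := by
        have := mul_le_mul_of_nonneg_left hD1 hθ.le
        nlinarith
      have heq : ε₁ * D = ε₁ * L + ε₁ * ((K:ℝ)*x^2) := by rw [hDeq]; ring
      linarith [hA, hA2, hB, heq]
    exact le_trans step2 step1
  -- liminf contradiction
  have hub : ∀ t : ℕ, (cars b t : ℝ) / t ≤ 1 := by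
    intro t
    rcases Nat.eq_zero_or_pos t with h0 | h0
    · simp [h0]
    · rw [div_le_one (by exact_mod_cast h0)]
      exact_mod_cast (Finset.card_filter_le _ _).trans_eq (Finset.card_range t)
  have hcb : Filter.IsCoboundedUnder (· ≥ ·) Filter.atTop (fun t : ℕ => (cars b t : ℝ)/t) := by
    apply Filter.IsBoundedUnder.isCoboundedUnder_ge
    exact ⟨1, Filter.eventually_map.mpr (Filter.Eventually.of_forall hub)⟩
  have hliminf : δ ≤ Filter.liminf (fun t : ℕ => (cars b t : ℝ)/t) Filter.atTop := by
    apply Filter.le_liminf_of_le hcb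
    exact Filter.eventually_atTop.mpr ⟨max 1 (cumLen K r₀), hev⟩
  exact absurd (le_trans hliminf hb) (not_le.mpr hδε)
end

section
/- For every ε ∈ (0,1) and every frog-strategy S, there exists a sequence b ∈ {0,1}^ω such that lim_{t→∞} N_t(b)/t = ε and Succ(S, b) < 1 − ε. Consequently, Theorem 2.2 is optimal: no frog-strategy achieves success probability 1 − ε or more on every ε-weakly sparse sequence. -/
open MeasureTheory Filter Set ProbabilityTheory
open scoped ENNReal


namespace FrogAux

noncomputable def frogT (ε : ℝ) (x : ℝ) : ℝ := if x < ε then x / ε else (x - ε) / (1 - ε)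

noncomputable def frogX (ε : ℝ) (i : ℕ) (x : ℝ) : Bool := decide ((frogT ε)^[i] x < ε)

noncomputable def frogB (ε : ℝ) (x : ℝ) : ℕ → Bool := fun i => frogX ε i x

noncomputable def frogμ : Measure ℝ := volume.restrict (Set.Ico (0:ℝ) 1)

instance : IsProbabilityMeasure frogμ := ⟨by simp [frogμ, Real.volume_Ico]⟩

noncomputable def wt (ε : ℝ) (c : Bool) : ℝ≥0∞ :=
  if c then ENNReal.ofReal ε else ENNReal.ofReal (1 - ε)

noncomputable def W (ε : ℝ) {n : ℕ} (w : Fin n → Bool) : ℝ≥0∞ := ∏ i, wt ε (w i)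

def extend {n : ℕ} (w : Fin n → Bool) : ℕ → Bool := fun j => if h : j < n then w ⟨j, h⟩ else false

def consSeq (c : Bool) (y : ℕ → Bool) : ℕ → Bool := fun i => Nat.casesOn i c y

lemma measurable_frogT (ε : ℝ) : Measurable (frogT ε) := by
  unfold frogT
  exact Measurable.ite measurableSet_Iio (measurable_id.div_const _)
    ((measurable_id.sub_const _).div_const _)

lemma measurable_decide_lt (ε : ℝ) : Measurable (fun r : ℝ => decide (r < ε)) := by
  apply measurable_to_countable'
  intro b
  cases b
  · have : (fun r : ℝ => decide (r < ε)) ⁻¹' {false} = Set.Ici ε := by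
      ext r; simp [decide_eq_false_iff_not, not_lt]
    rw [this]; exact measurableSet_Ici
  · have : (fun r : ℝ => decide (r < ε)) ⁻¹' {true} = Set.Iio ε := by
      ext r; simp
    rw [this]; exact measurableSet_Iio

lemma measurable_frogX (ε : ℝ) (i : ℕ) : Measurable (frogX ε i) :=
  (measurable_decide_lt ε).comp ((measurable_frogT ε).iterate i)

lemma measurable_dep {γ : Type*} [MeasurableSpace γ] (ε : ℝ) (n : ℕ) (F : (ℕ → Bool) → γ)
    (hF : ∀ y y', (∀ k, k < n → y k = y' k) → F y = F y') :
    Measurable fun x => F (frogB ε x) := by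
  have h : (fun x => F (frogB ε x)) =
      (fun w : Fin n → Bool => F (extend w)) ∘ (fun x (k : Fin n) => frogB ε x (k : ℕ)) := by
    funext x
    exact hF _ _ (fun k hk => by simp [extend, hk])
  rw [h]
  exact (measurable_of_countable _).comp (measurable_pi_lambda _ fun k => measurable_frogX ε k)


lemma CV (c d : ℝ) (hc : 0 < c) (H : ℝ → ℝ≥0∞) (hH : Measurable H) :
    ∫⁻ x in Set.Ico d (d + c), H ((x - d) / c) = ENNReal.ofReal c * ∫⁻ y in Set.Ico (0:ℝ) 1, H y := by
  set φ : ℝ → ℝ := fun x => (x - d) / c with hφdef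
  have hφ : Measurable φ := (measurable_id.sub_const _).div_const _
  have hmap : Measure.map φ volume = ENNReal.ofReal c • volume := by
    have h1 : φ = (fun x : ℝ => c⁻¹ * x) ∘ (fun x : ℝ => x + (-d)) := by
      funext x; simp [hφdef, div_eq_inv_mul, sub_eq_add_neg]
    rw [h1, ← Measure.map_map (measurable_const_mul _) (measurable_add_const _)]
    rw [map_add_right_eq_self volume (-d), Real.map_volume_mul_left (inv_ne_zero hc.ne')]
    congr 1
    rw [inv_inv, abs_of_pos hc]
  have hiff : ∀ x : ℝ, (0 ≤ (x - d) / c ∧ (x - d) / c < 1) ↔ (d ≤ x ∧ x < d + c) := by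
    intro x
    rw [le_div_iff₀ hc, zero_mul, sub_nonneg, div_lt_one hc, sub_lt_iff_lt_add']
  have hpre : φ ⁻¹' (Set.Ico (0:ℝ) 1) = Set.Ico d (d + c) := by
    ext x
    simpa [hφdef] using hiff x
  calc ∫⁻ x in Set.Ico d (d + c), H (φ x) ∂volume
      = ∫⁻ x, H (φ x) ∂(volume.restrict (φ ⁻¹' (Set.Ico (0:ℝ) 1))) := by rw [hpre]
    _ = ∫⁻ y, H y ∂(Measure.map φ (volume.restrict (φ ⁻¹' (Set.Ico (0:ℝ) 1)))) :=
        (lintegral_map hH hφ).symm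
    _ = ∫⁻ y, H y ∂((Measure.map φ volume).restrict (Set.Ico (0:ℝ) 1)) := by
        rw [Measure.restrict_map hφ measurableSet_Ico]
    _ = ENNReal.ofReal c * ∫⁻ y in Set.Ico (0:ℝ) 1, H y := by
        rw [hmap, Measure.restrict_smul, lintegral_smul_measure, smul_eq_mul]


lemma consSeq_agree (c : Bool) {n : ℕ} (y y' : ℕ → Bool) (h : ∀ k, k < n → y k = y' k) :
    ∀ k, k < n + 1 → consSeq c y k = consSeq c y' k := by
  intro k hk
  cases k with
  | zero => rfl
  | succ j => exact h j (by omega)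

lemma extend_cons {n : ℕ} (c : Bool) (w : Fin n → Bool) :
    ∀ k, k < n + 1 → extend (Fin.cons c w) k = consSeq c (extend w) k := by
  intro k hk
  cases k with
  | zero => simp [extend, consSeq]
  | succ j =>
    have hj : j < n := by omega
    have h1 : extend (Fin.cons c w) (j+1) = (Fin.cons c w : Fin (n+1) → Bool) ⟨j+1, hk⟩ := by
      simp only [extend]; rw [dif_pos hk]
    have h2 : (⟨j+1, hk⟩ : Fin (n+1)) = Fin.succ ⟨j, hj⟩ := rfl
    rw [h1, h2, Fin.cons_succ]
    show w ⟨j, hj⟩ = extend w j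
    rw [extend, dif_pos hj]

lemma L1 (ε : ℝ) (hε0 : 0 < ε) (hε1 : ε < 1) :
    ∀ (n : ℕ) (F : (ℕ → Bool) → ℝ≥0∞),
      (∀ y y', (∀ k, k < n → y k = y' k) → F y = F y') →
      ∫⁻ x, F (frogB ε x) ∂frogμ = ∑ w : Fin n → Bool, W ε w * F (extend w) := by
  have hprob : IsProbabilityMeasure frogμ := ⟨by simp [frogμ, Real.volume_Ico]⟩
  intro n
  induction n with
  | zero =>
    intro F hF
    have hconst : ∀ y, F y = F (extend (default : Fin 0 → Bool)) := fun y => hF _ _ (by omega)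
    calc ∫⁻ x, F (frogB ε x) ∂frogμ
        = ∫⁻ _x, F (extend (default : Fin 0 → Bool)) ∂frogμ := lintegral_congr fun x => hconst _
      _ = F (extend (default : Fin 0 → Bool)) := by
          rw [lintegral_const, measure_univ, mul_one]
      _ = ∑ w : Fin 0 → Bool, W ε w * F (extend w) := by
          rw [Fintype.sum_unique]
          simp only [W]
          rw [Finset.univ_eq_empty, Finset.prod_empty, one_mul]
          exact hF _ _ (by omega)
  | succ n IH =>
    intro F hF
    -- the two composed functions
    set G : Bool → ℝ → ℝ≥0∞ := fun c u => F (consSeq c (frogB ε u)) with hGdef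
    have hGmeas : ∀ c, Measurable (G c) := by
      intro c
      exact measurable_dep ε n (fun y => F (consSeq c y))
        (fun y y' h => hF _ _ (consSeq_agree c y y' h))
    have hIH : ∀ c : Bool, ∫⁻ u, G c u ∂frogμ
        = ∑ w : Fin n → Bool, W ε w * F (consSeq c (extend w)) :=
      fun c => IH (fun y => F (consSeq c y)) (fun y y' h => hF _ _ (consSeq_agree c y y' h))
    -- splitting the integral
    have hres : frogμ = volume.restrict (Set.Ico 0 ε) + volume.restrict (Set.Ico ε 1) := by
      rw [frogμ, ← Set.Ico_union_Ico_eq_Ico hε0.le hε1.le,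
        Measure.restrict_union (Set.Ico_disjoint_Ico_same) measurableSet_Ico]
    -- true branch
    have htrue : ∀ x ∈ Set.Ico (0:ℝ) ε, F (frogB ε x) = G true ((x - 0) / ε) := by
      intro x hx
      have hb : frogB ε x = consSeq true (frogB ε ((x - 0) / ε)) := by
        funext i
        cases i with
        | zero =>
          show frogX ε 0 x = true
          simp [frogX, hx.2]
        | succ j =>
          show frogX ε (j+1) x = frogX ε j ((x - 0)/ε)
          have hTx : frogT ε x = (x - 0) / ε := by rw [frogT, if_pos hx.2, sub_zero]
          simp only [frogX]
          rw [Function.iterate_succ_apply, hTx]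
      rw [hb]
    have hfalse : ∀ x ∈ Set.Ico ε (1:ℝ), F (frogB ε x) = G false ((x - ε) / (1 - ε)) := by
      intro x hx
      have hb : frogB ε x = consSeq false (frogB ε ((x - ε) / (1 - ε))) := by
        funext i
        cases i with
        | zero =>
          show frogX ε 0 x = false
          simp [frogX, not_lt.2 hx.1]
        | succ j =>
          show frogX ε (j+1) x = frogX ε j ((x - ε)/(1 - ε))
          have hTx : frogT ε x = (x - ε) / (1 - ε) := by rw [frogT, if_neg (not_lt.2 hx.1)]
          simp only [frogX]
          rw [Function.iterate_succ_apply, hTx]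
      rw [hb]
    have e1 : ∫⁻ x in Set.Ico (0:ℝ) ε, F (frogB ε x) ∂volume
        = ENNReal.ofReal ε * ∫⁻ u, G true u ∂frogμ := by
      rw [setLIntegral_congr_fun measurableSet_Ico (fun x hx => htrue x hx)]
      have := CV ε 0 hε0 (G true) (hGmeas true)
      rw [zero_add] at this
      exact this
    have e2 : ∫⁻ x in Set.Ico ε (1:ℝ), F (frogB ε x) ∂volume
        = ENNReal.ofReal (1 - ε) * ∫⁻ u, G false u ∂frogμ := by
      rw [setLIntegral_congr_fun measurableSet_Ico (fun x hx => hfalse x hx)]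
      have := CV (1 - ε) ε (by linarith) (G false) (hGmeas false)
      rw [show ε + (1 - ε) = 1 by ring] at this
      exact this
    -- LHS computation
    have hLHS : ∫⁻ x, F (frogB ε x) ∂frogμ
        = ENNReal.ofReal ε * (∑ w : Fin n → Bool, W ε w * F (consSeq true (extend w)))
          + ENNReal.ofReal (1 - ε) * (∑ w : Fin n → Bool, W ε w * F (consSeq false (extend w))) := by
      rw [hres, lintegral_add_measure, e1, e2, hIH true, hIH false]
    rw [hLHS]
    -- RHS reindexing
    have hre : (∑ w : Fin (n+1) → Bool, W ε w * F (extend w))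
        = ∑ p : Bool × (Fin n → Bool), W ε (Fin.cons p.1 p.2) * F (extend (Fin.cons p.1 p.2)) := by
      rw [← Fintype.sum_equiv (Fin.consEquiv (fun _ => Bool))
        (fun p => W ε (Fin.cons p.1 p.2) * F (extend (Fin.cons p.1 p.2)))
        (fun w => W ε w * F (extend w)) (fun p => rfl)]
    have hterm : ∀ (c : Bool) (w : Fin n → Bool),
        W ε (Fin.cons c w) * F (extend (Fin.cons c w)) = wt ε c * (W ε w * F (consSeq c (extend w))) := by
      intro c w
      have hW : W ε (Fin.cons c w) = wt ε c * W ε w := by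
        rw [W, Fin.prod_univ_succ]
        simp [W]
      have hFe : F (extend (Fin.cons c w)) = F (consSeq c (extend w)) :=
        hF _ _ (extend_cons c w)
      rw [hW, hFe, mul_assoc]
    rw [hre, Fintype.sum_prod_type, Fintype.sum_bool]
    simp only [hterm]
    rw [← Finset.mul_sum, ← Finset.mul_sum]
    simp [wt]


lemma wt_add (ε : ℝ) (hε0 : 0 < ε) (hε1 : ε < 1) : wt ε true + wt ε false = 1 := by
  rw [wt, wt, if_pos rfl, if_neg (by simp), ← ENNReal.ofReal_add hε0.le (by linarith)]
  norm_num

def snocE (n : ℕ) : ((Fin n → Bool) × Bool) ≃ (Fin (n+1) → Bool) where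
  toFun p := Fin.snoc p.1 p.2
  invFun w := (Fin.init w, w (Fin.last n))
  left_inv p := by simp
  right_inv w := by simp

lemma W_snoc (ε : ℝ) {n : ℕ} (w : Fin n → Bool) (c : Bool) :
    W ε (Fin.snoc w c) = W ε w * wt ε c := by
  rw [W, Fin.prod_univ_castSucc]
  simp [W]

lemma extend_snoc_agree {n : ℕ} (w : Fin n → Bool) (c : Bool) :
    ∀ k, k < n → extend (Fin.snoc w c : Fin (n+1) → Bool) k = extend w k := by
  intro k hk
  have hk1 : k < n + 1 := by omega
  have h1 : extend (Fin.snoc w c : Fin (n+1) → Bool) k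
      = (Fin.snoc w c : Fin (n+1) → Bool) ⟨k, hk1⟩ := by
    simp only [extend]; rw [dif_pos hk1]
  have h2 : (⟨k, hk1⟩ : Fin (n+1)) = Fin.castSucc ⟨k, hk⟩ := rfl
  rw [h1, h2, Fin.snoc_castSucc]
  show w ⟨k, hk⟩ = extend w k
  simp only [extend]; rw [dif_pos hk]

lemma extend_snoc_last {n : ℕ} (w : Fin n → Bool) (c : Bool) :
    extend (Fin.snoc w c : Fin (n+1) → Bool) n = c := by
  have hn : n < n + 1 := by omega
  have h1 : extend (Fin.snoc w c : Fin (n+1) → Bool) n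
      = (Fin.snoc w c : Fin (n+1) → Bool) ⟨n, hn⟩ := by
    simp only [extend]; rw [dif_pos hn]
  have h2 : (⟨n, hn⟩ : Fin (n+1)) = Fin.last n := rfl
  rw [h1, h2, Fin.snoc_last]

/-- The key step: a bit is `false` with probability `1 - ε`, independently of the past. -/
lemma stepE (ε : ℝ) (hε0 : 0 < ε) (hε1 : ε < 1) (n : ℕ) (F : (ℕ → Bool) → ℝ≥0∞)
    (hF : ∀ y y', (∀ k, k < n → y k = y' k) → F y = F y') :
    ∫⁻ x, (if frogB ε x n = false then F (frogB ε x) else 0) ∂frogμ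
      = ENNReal.ofReal (1 - ε) * ∫⁻ x, F (frogB ε x) ∂frogμ := by
  have hF2 : ∀ y y', (∀ k, k < n + 1 → y k = y' k) →
      (if y n = false then F y else 0) = (if y' n = false then F y' else 0) := by
    intro y y' h
    rw [h n (by omega), hF y y' (fun k hk => h k (by omega))]
  rw [L1 ε hε0 hε1 (n+1) _ hF2, L1 ε hε0 hε1 n F hF]
  rw [← Fintype.sum_equiv (snocE n)
    (fun p => W ε (Fin.snoc p.1 p.2 : Fin (n+1) → Bool) *
      (if extend (Fin.snoc p.1 p.2 : Fin (n+1) → Bool) n = false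
        then F (extend (Fin.snoc p.1 p.2 : Fin (n+1) → Bool)) else 0))
    (fun w => W ε w * (if extend w n = false then F (extend w) else 0)) (fun p => rfl)]
  rw [Fintype.sum_prod_type]
  have hterm : ∀ w : Fin n → Bool,
      (∑ c : Bool, W ε (Fin.snoc w c : Fin (n+1) → Bool) *
        (if extend (Fin.snoc w c : Fin (n+1) → Bool) n = false
          then F (extend (Fin.snoc w c : Fin (n+1) → Bool)) else 0))
      = ENNReal.ofReal (1 - ε) * (W ε w * F (extend w)) := by
    intro w
    rw [Fintype.sum_bool]
    rw [extend_snoc_last w true, extend_snoc_last w false]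
    simp only [if_neg (by simp : ¬(true = false)), if_pos rfl, mul_zero, zero_add]
    rw [W_snoc, hF _ _ (extend_snoc_agree w false)]
    rw [wt]
    simp only [if_neg (by simp : ¬(false = true)), if_true]
    ring
  rw [Finset.sum_congr rfl (fun w _ => hterm w), ← Finset.mul_sum]

lemma C1 {n : ℕ} (P : Fin n → Bool → ℝ≥0∞) :
    ∑ w : Fin n → Bool, ∏ k, P k (w k) = ∏ k, (P k true + P k false) := by
  classical
  have h2 : ∀ k : Fin n, P k true + P k false = ∑ b : Bool, P k b := fun k => (Fintype.sum_bool _).symm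
  rw [Finset.prod_congr rfl (fun k _ => h2 k), Finset.prod_univ_sum, Fintype.piFinset_univ]

lemma sum_one_constraint (ε : ℝ) (hε0 : 0 < ε) (hε1 : ε < 1) {n : ℕ} (i' : Fin n) (a : Bool) :
    ∑ w : Fin n → Bool, W ε w * (if w i' = a then 1 else 0) = wt ε a := by
  classical
  set P : Fin n → Bool → ℝ≥0∞ :=
    fun k b => if k = i' then (if b = a then wt ε b else 0) else wt ε b with hP
  have hpt : ∀ w : Fin n → Bool, W ε w * (if w i' = a then 1 else 0) = ∏ k, P k (w k) := by
    intro w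
    by_cases h : w i' = a
    · rw [if_pos h, mul_one, W]
      exact Finset.prod_congr rfl fun k _ => by
        by_cases hk : k = i'
        · subst hk; simp [hP, h]
        · simp [hP, hk]
    · rw [if_neg h, mul_zero]
      exact (Finset.prod_eq_zero (Finset.mem_univ i') (by simp [hP, h])).symm
  rw [Finset.sum_congr rfl (fun w _ => hpt w), C1]
  rw [Finset.prod_eq_single i' (fun k _ hk => by simp [hP, hk, wt_add ε hε0 hε1])
    (fun h => absurd (Finset.mem_univ i') h)]
  cases a <;> simp [hP, wt]

lemma sum_two_constraint (ε : ℝ) (hε0 : 0 < ε) (hε1 : ε < 1) {n : ℕ} (i' j' : Fin n)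
    (hij : i' ≠ j') (a b : Bool) :
    ∑ w : Fin n → Bool, W ε w * ((if w i' = a then 1 else 0) * (if w j' = b then 1 else 0))
      = wt ε a * wt ε b := by
  classical
  set P : Fin n → Bool → ℝ≥0∞ :=
    fun k c => if k = i' then (if c = a then wt ε c else 0)
      else if k = j' then (if c = b then wt ε c else 0) else wt ε c with hP
  have hpt : ∀ w : Fin n → Bool,
      W ε w * ((if w i' = a then 1 else 0) * (if w j' = b then 1 else 0)) = ∏ k, P k (w k) := by
    intro w
    by_cases h1 : w i' = a
    · by_cases h2 : w j' = b
      · rw [if_pos h1, if_pos h2, mul_one, mul_one, W]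
        exact Finset.prod_congr rfl fun k _ => by
          by_cases hk : k = i'
          · subst hk; simp [hP, h1]
          · by_cases hk2 : k = j'
            · subst hk2; simp [hP, hk, h2]
            · simp [hP, hk, hk2]
      · rw [if_neg h2, mul_zero, mul_zero]
        exact (Finset.prod_eq_zero (Finset.mem_univ j') (by simp [hP, h2, (Ne.symm hij)])).symm
    · rw [if_neg h1, zero_mul, mul_zero]
      exact (Finset.prod_eq_zero (Finset.mem_univ i') (by simp [hP, h1])).symm
  rw [Finset.sum_congr rfl (fun w _ => hpt w), C1]
  have hval : ∀ k : Fin n, (P k true + P k false)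
      = if k = i' then wt ε a else if k = j' then wt ε b else 1 := by
    intro k
    by_cases hk : k = i'
    · subst hk; cases a <;> simp [hP, wt]
    · by_cases hk2 : k = j'
      · subst hk2; cases b <;> simp [hP, hk, wt]
      · simp [hP, hk, hk2, wt_add ε hε0 hε1]
  rw [Finset.prod_congr rfl (fun k _ => hval k)]
  rw [← Finset.mul_prod_erase Finset.univ _ (Finset.mem_univ i'), if_pos rfl]
  rw [← Finset.mul_prod_erase _ _ (Finset.mem_erase.mpr ⟨Ne.symm hij, Finset.mem_univ j'⟩),
    if_neg (Ne.symm hij), if_pos rfl]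
  rw [Finset.prod_eq_one (fun k hk => by
    rw [Finset.mem_erase, Finset.mem_erase] at hk
    rw [if_neg hk.2.1, if_neg hk.1]), mul_one]


lemma P1 (ε : ℝ) (hε0 : 0 < ε) (hε1 : ε < 1) (i : ℕ) (a : Bool) :
    frogμ (frogX ε i ⁻¹' {a}) = wt ε a := by
  classical
  have hs : MeasurableSet (frogX ε i ⁻¹' {a}) :=
    measurable_frogX ε i (measurableSet_singleton a)
  rw [← lintegral_indicator_one hs]
  have heq : ∀ x, (frogX ε i ⁻¹' {a}).indicator 1 x
      = (fun y : ℕ → Bool => if y i = a then (1:ℝ≥0∞) else 0) (frogB ε x) := by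
    intro x
    rw [Set.indicator_apply]
    simp [frogB, Set.mem_preimage]
    congr 1
  rw [lintegral_congr heq, L1 ε hε0 hε1 (i+1)
    (fun y : ℕ → Bool => if y i = a then (1:ℝ≥0∞) else 0)
    (fun y y' h => by simp only [h i (by omega)])]
  have hext : ∀ w : Fin (i+1) → Bool, extend w i = w ⟨i, Nat.lt_succ_self i⟩ := by
    intro w; show dite _ _ _ = _; rw [dif_pos (Nat.lt_succ_self i)]
  rw [← sum_one_constraint ε hε0 hε1 (⟨i, Nat.lt_succ_self i⟩ : Fin (i+1)) a]
  exact Finset.sum_congr rfl fun w _ => by rw [hext w]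

lemma P2 (ε : ℝ) (hε0 : 0 < ε) (hε1 : ε < 1) (i j : ℕ) (hij : i ≠ j) (a b : Bool) :
    frogμ (frogX ε i ⁻¹' {a} ∩ frogX ε j ⁻¹' {b}) = wt ε a * wt ε b := by
  classical
  have hs : MeasurableSet (frogX ε i ⁻¹' {a} ∩ frogX ε j ⁻¹' {b}) :=
    (measurable_frogX ε i (measurableSet_singleton a)).inter
      (measurable_frogX ε j (measurableSet_singleton b))
  rw [← lintegral_indicator_one hs]
  set n : ℕ := max i j + 1 with hn
  have hin : i < n := by omega
  have hjn : j < n := by omega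
  have heq : ∀ x, (frogX ε i ⁻¹' {a} ∩ frogX ε j ⁻¹' {b}).indicator 1 x
      = (fun y : ℕ → Bool => (if y i = a then (1:ℝ≥0∞) else 0) * (if y j = b then 1 else 0))
          (frogB ε x) := by
    intro x
    rw [Set.indicator_apply]
    by_cases h1 : frogX ε i x = a <;> by_cases h2 : frogX ε j x = b <;>
      simp [frogB, Set.mem_preimage, h1, h2]
  rw [lintegral_congr heq, L1 ε hε0 hε1 n
    (fun y : ℕ → Bool => (if y i = a then (1:ℝ≥0∞) else 0) * (if y j = b then 1 else 0))
    (fun y y' h => by simp only [h i hin, h j hjn])]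
  have hext : ∀ (w : Fin n → Bool) (k : ℕ) (hk : k < n), extend w k = w ⟨k, hk⟩ := by
    intro w k hk; show dite _ _ _ = _; rw [dif_pos hk]
  rw [← sum_two_constraint ε hε0 hε1 (⟨i, hin⟩ : Fin n) (⟨j, hjn⟩ : Fin n)
    (Fin.ne_of_val_ne hij) a b]
  exact Finset.sum_congr rfl fun w _ => by rw [hext w i hin, hext w j hjn]

lemma bool_set_cases (s : Set Bool) : s = ∅ ∨ s = {true} ∨ s = {false} ∨ s = Set.univ := by
  by_cases ht : true ∈ s <;> by_cases hf : false ∈ s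
  · right; right; right
    ext c; cases c <;> simp [ht, hf]
  · right; left
    ext c; cases c <;> simp [ht, hf]
  · right; right; left
    ext c; cases c <;> simp [ht, hf]
  · left
    ext c; cases c <;> simp [ht, hf]

lemma indep_frogX (ε : ℝ) (hε0 : 0 < ε) (hε1 : ε < 1) (i j : ℕ) (hij : i ≠ j) :
    IndepFun (frogX ε i) (frogX ε j) frogμ := by
  rw [indepFun_iff_measure_inter_preimage_eq_mul]
  intro s t _ _
  rcases bool_set_cases s with rfl | rfl | rfl | rfl <;>
    rcases bool_set_cases t with rfl | rfl | rfl | rfl <;>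
    simp only [Set.preimage_univ, Set.preimage_empty, Set.inter_univ, Set.univ_inter,
      Set.inter_empty, Set.empty_inter, measure_empty, measure_univ, one_mul, mul_one,
      zero_mul, mul_zero, P1 ε hε0 hε1, P2 ε hε0 hε1 i j hij]

lemma ident_frogX (ε : ℝ) (hε0 : 0 < ε) (hε1 : ε < 1) (i : ℕ) :
    IdentDistrib (frogX ε i) (frogX ε 0) frogμ frogμ := by
  refine ⟨(measurable_frogX ε i).aemeasurable, (measurable_frogX ε 0).aemeasurable, ?_⟩
  ext s hs
  rw [Measure.map_apply (measurable_frogX ε i) hs, Measure.map_apply (measurable_frogX ε 0) hs]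
  rcases bool_set_cases s with rfl | rfl | rfl | rfl <;>
    simp only [Set.preimage_univ, Set.preimage_empty, measure_empty, measure_univ,
      P1 ε hε0 hε1]

noncomputable def Yb (ε : ℝ) (i : ℕ) (x : ℝ) : ℝ := if frogX ε i x = true then 1 else 0

lemma density_ae (ε : ℝ) (hε0 : 0 < ε) (hε1 : ε < 1) :
    ∀ᵐ x ∂frogμ, Filter.Tendsto (fun t : ℕ => ((cars (frogB ε x) t : ℝ)) / t)
      Filter.atTop (nhds ε) := by
  have hf : Measurable (fun c : Bool => if c = true then (1:ℝ) else 0) :=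
    measurable_of_countable _
  have hYm : ∀ i, Measurable (Yb ε i) := fun i => hf.comp (measurable_frogX ε i)
  have hint : Integrable (Yb ε 0) frogμ := by
    refine (integrable_const (1:ℝ)).mono' (hYm 0).aestronglyMeasurable ?_
    refine Filter.Eventually.of_forall fun x => ?_
    simp only [Yb]
    split <;> simp
  have hindep : Pairwise (Function.onFun (IndepFun · · frogμ) (Yb ε)) := by
    intro i j hij
    exact (indep_frogX ε hε0 hε1 i j hij).comp hf hf
  have hident : ∀ i, IdentDistrib (Yb ε i) (Yb ε 0) frogμ frogμ :=
    fun i => (ident_frogX ε hε0 hε1 i).comp hf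
  have hslln := strong_law_ae_real (Yb ε) hint hindep hident
  have hE : frogμ[Yb ε 0] = ε := by
    classical
    have heq : Yb ε 0 = (frogX ε 0 ⁻¹' {true}).indicator (fun _ => (1:ℝ)) := by
      funext x
      rw [Set.indicator_apply]
      simp [Yb, Set.mem_preimage]
    rw [heq, integral_indicator_const (1:ℝ) (measurable_frogX ε 0 (measurableSet_singleton true))]
    rw [measureReal_def, P1 ε hε0 hε1 0 true]
    rw [show wt ε true = ENNReal.ofReal ε from if_pos rfl]
    rw [ENNReal.toReal_ofReal hε0.le, smul_eq_mul, mul_one]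
  rw [hE] at hslln
  filter_upwards [hslln] with x hx
  have hcars : ∀ t : ℕ, ((cars (frogB ε x) t : ℝ)) = ∑ i ∈ Finset.range t, Yb ε i x := by
    intro t
    rw [cars, Finset.card_filter]
    push_cast
    exact Finset.sum_congr rfl fun i _ => by simp [Yb, frogB]; congr 1
  have : (fun t : ℕ => ((cars (frogB ε x) t : ℝ)) / t)
      = fun t : ℕ => (∑ i ∈ Finset.range t, Yb ε i x) / t := by
    funext t; rw [hcars t]
  rw [this]
  exact hx


lemma density_update (ε : ℝ) (hε0 : 0 < ε) (hε1 : ε < 1) (i0 : ℕ) :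
    ∀ᵐ x ∂frogμ, Filter.Tendsto
      (fun t : ℕ => ((cars (Function.update (frogB ε x) i0 true) t : ℝ)) / t)
      Filter.atTop (nhds ε) := by
  classical
  filter_upwards [density_ae ε hε0 hε1] with x hx
  set b := frogB ε x with hb
  set b' := Function.update b i0 true with hb'
  have hnat : ∀ t : ℕ, i0 < t →
      cars b' t + (if b i0 = true then 1 else 0) = cars b t + 1 := by
    intro t ht
    have hmem : i0 ∈ Finset.range t := Finset.mem_range.mpr ht
    rw [cars, cars, Finset.card_filter, Finset.card_filter,
      ← Finset.sum_erase_add _ _ hmem, ← Finset.sum_erase_add _ _ hmem]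
    have herase : (∑ i ∈ (Finset.range t).erase i0, if b' i = true then 1 else 0)
        = ∑ i ∈ (Finset.range t).erase i0, if b i = true then 1 else 0 :=
      Finset.sum_congr rfl fun i hi => by
        rw [hb', Function.update_of_ne (Finset.ne_of_mem_erase hi)]
    have hi0v : (if b' i0 = true then 1 else 0) = 1 := by
      rw [hb', Function.update_self]
      norm_num
    rw [herase, hi0v]
    ring
  set c : ℝ := 1 - (if b i0 = true then (1:ℝ) else 0) with hc
  have hreal : ∀ t : ℕ, i0 < t → (cars b' t : ℝ) = cars b t + c := by
    intro t ht
    have := congrArg (Nat.cast : ℕ → ℝ) (hnat t ht)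
    push_cast at this
    rw [hc]
    by_cases hbi : b i0 = true
    · rw [if_pos hbi] at this ⊢; linarith
    · rw [if_neg hbi] at this ⊢; linarith
  have h0 : Filter.Tendsto (fun t : ℕ => c / t) Filter.atTop (nhds 0) :=
    tendsto_const_div_atTop_nhds_zero_nat c
  have hadd := hx.add h0
  rw [add_zero] at hadd
  refine Filter.Tendsto.congr' ?_ hadd
  filter_upwards [Filter.eventually_gt_atTop i0] with t ht
  rw [← add_div, ← hreal t ht]


/-! ### Real-side summability facts -/

lemma summable_opt (S : FrogStrategy) (b : ℕ → Bool) :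
    Summable (fun o : Option ℕ => S.prob b o) := by
  by_contra hc
  have := tsum_eq_zero_of_not_summable hc
  rw [S.total b] at this
  norm_num at this

lemma summable_prob (S : FrogStrategy) (b : ℕ → Bool) :
    Summable (fun i : ℕ => S.prob b (some i)) :=
  (summable_opt S b).comp_injective (Option.some_injective ℕ)

lemma tsum_prob_le_one (S : FrogStrategy) (b : ℕ → Bool) :
    ∑' i : ℕ, S.prob b (some i) ≤ 1 := by
  rw [← S.total b]
  exact Summable.tsum_le_tsum_of_inj some (Option.some_injective ℕ) (fun o _ => S.nonneg b o)
    (fun i => le_rfl) (summable_prob S b) (summable_opt S b)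

lemma tsum_ofReal_le (S : FrogStrategy) (b : ℕ → Bool) :
    ∑' i : ℕ, ENNReal.ofReal (S.prob b (some i)) ≤ 1 := by
  calc ∑' i : ℕ, ENNReal.ofReal (S.prob b (some i))
      = ENNReal.ofReal (∑' i : ℕ, S.prob b (some i)) :=
        (ENNReal.ofReal_tsum_of_nonneg (fun i => S.nonneg b _) (summable_prob S b)).symm
    _ ≤ ENNReal.ofReal 1 := ENNReal.ofReal_le_ofReal (tsum_prob_le_one S b)
    _ = 1 := ENNReal.ofReal_one

noncomputable def Fsucc (S : FrogStrategy) (b : ℕ → Bool) : ℝ≥0∞ :=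
  ∑' i : ℕ, if b i = false then ENNReal.ofReal (S.prob b (some i)) else 0

lemma ofReal_succProb (S : FrogStrategy) (b : ℕ → Bool) :
    ENNReal.ofReal (succProb S b) = Fsucc S b := by
  classical
  have hnn : ∀ i : ℕ, 0 ≤ (if b i = false then S.prob b (some i) else 0) := by
    intro i; split
    · exact S.nonneg b _
    · exact le_rfl
  have hsm : Summable (fun i : ℕ => if b i = false then S.prob b (some i) else 0) := by
    refine Summable.of_nonneg_of_le hnn (fun i => ?_) (summable_prob S b)
    split
    · exact le_rfl
    · exact S.nonneg b _
  rw [succProb, ENNReal.ofReal_tsum_of_nonneg hnn hsm, Fsucc]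
  refine tsum_congr fun i => ?_
  split
  · rfl
  · exact ENNReal.ofReal_zero

lemma succProb_nonneg (S : FrogStrategy) (b : ℕ → Bool) : 0 ≤ succProb S b := by
  refine tsum_nonneg fun i => ?_
  split
  · exact S.nonneg b _
  · exact le_rfl

/-! ### Final assembly lemma -/

lemma final_assembly (ε : ℝ) (hε0 : 0 < ε) (hε1 : ε < 1) (S : FrogStrategy)
    (Bfun : ℝ → ℕ → Bool)
    (hdens : ∀ᵐ x ∂frogμ, Filter.Tendsto (fun t : ℕ => ((cars (Bfun x) t : ℝ)) / t)
      Filter.atTop (nhds ε))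
    (hint : ∫⁻ x, Fsucc S (Bfun x) ∂frogμ < ENNReal.ofReal (1 - ε)) :
    ∃ b : ℕ → Bool,
      Filter.Tendsto (fun t : ℕ => (cars b t : ℝ) / t) Filter.atTop (nhds ε) ∧
      succProb S b < 1 - ε := by
  set A := {x | Fsucc S (Bfun x) < ENNReal.ofReal (1 - ε)} with hA
  have hA_ne : frogμ A ≠ 0 := by
    intro h0
    have hae : ∀ᵐ x ∂frogμ, ENNReal.ofReal (1 - ε) ≤ Fsucc S (Bfun x) := by
      rw [ae_iff]
      have : {x | ¬ ENNReal.ofReal (1 - ε) ≤ Fsucc S (Bfun x)} = A := by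
        ext x; simp [hA, not_le]
      rw [this]
      exact h0
    have hge : ENNReal.ofReal (1 - ε) ≤ ∫⁻ x, Fsucc S (Bfun x) ∂frogμ := by
      have := lintegral_mono_ae hae
      rwa [lintegral_const, measure_univ, mul_one] at this
    exact absurd hint (not_lt.mpr hge)
  have hnon : ∃ x, x ∈ A ∧ Filter.Tendsto (fun t : ℕ => ((cars (Bfun x) t : ℝ)) / t)
      Filter.atTop (nhds ε) := by
    by_contra hemp
    push_neg at hemp
    have hsub : A ⊆ {x | ¬ Filter.Tendsto (fun t : ℕ => ((cars (Bfun x) t : ℝ)) / t)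
        Filter.atTop (nhds ε)} := fun x hx => hemp x hx
    have : frogμ A = 0 := le_antisymm (le_trans (measure_mono hsub) (le_of_eq hdens)) (zero_le)
    exact hA_ne this
  obtain ⟨x, hxA, hxT⟩ := hnon
  refine ⟨Bfun x, hxT, ?_⟩
  have : ENNReal.ofReal (succProb S (Bfun x)) < ENNReal.ofReal (1 - ε) := by
    rw [ofReal_succProb]; exact hxA
  exact (ENNReal.ofReal_lt_ofReal_iff_of_nonneg (succProb_nonneg S _)).mp this

/-! ### Case A : strategy never crosses (measure-wise) -/

lemma caseA (ε : ℝ) (hε0 : 0 < ε) (hε1 : ε < 1) (S : FrogStrategy)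
    (h0 : ∀ i, ∫⁻ x, ENNReal.ofReal (S.prob (frogB ε x) (some i)) ∂frogμ = 0) :
    ∫⁻ x, Fsucc S (frogB ε x) ∂frogμ < ENNReal.ofReal (1 - ε) := by
  classical
  have hterm_meas : ∀ i : ℕ, Measurable fun x =>
      (if frogB ε x i = false then ENNReal.ofReal (S.prob (frogB ε x) (some i)) else 0) := by
    intro i
    exact measurable_dep ε (i+1)
      (fun y => if y i = false then ENNReal.ofReal (S.prob y (some i)) else 0)
      (fun y y' h => by
        beta_reduce
        rw [h i (by omega), S.adapted y y' i (fun j hj => h j (by omega))])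
  have hE : ∫⁻ x, Fsucc S (frogB ε x) ∂frogμ
      = ∑' i, ∫⁻ x, (if frogB ε x i = false
          then ENNReal.ofReal (S.prob (frogB ε x) (some i)) else 0) ∂frogμ := by
    simp only [Fsucc]
    exact lintegral_tsum (fun i => (hterm_meas i).aemeasurable)
  have hzero : ∀ i, ∫⁻ x, (if frogB ε x i = false
      then ENNReal.ofReal (S.prob (frogB ε x) (some i)) else 0) ∂frogμ = 0 := by
    intro i
    refine le_antisymm (le_trans (lintegral_mono fun x => ?_) (le_of_eq (h0 i))) (zero_le)
    split
    · exact le_rfl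
    · exact zero_le
  rw [hE, tsum_congr hzero, tsum_zero]
  exact ENNReal.ofReal_pos.mpr (by linarith)

/-! ### Case B : some crossing has positive expected probability -/

lemma caseB (ε : ℝ) (hε0 : 0 < ε) (hε1 : ε < 1) (S : FrogStrategy) (i0 : ℕ)
    (hpos : ∫⁻ x, ENNReal.ofReal (S.prob (frogB ε x) (some i0)) ∂frogμ ≠ 0) :
    ∫⁻ x, Fsucc S (Function.update (frogB ε x) i0 true) ∂frogμ < ENNReal.ofReal (1 - ε) := by
  classical
  set q : ℕ → (ℕ → Bool) → ℝ≥0∞ :=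
    fun i y => ENNReal.ofReal (S.prob (Function.update y i0 true) (some i)) with hq
  have hq_dep : ∀ i (y y' : ℕ → Bool), (∀ k, k < i → y k = y' k) → q i y = q i y' := by
    intro i y y' h
    simp only [hq]
    congr 1
    refine S.adapted _ _ i (fun j hj => ?_)
    by_cases hj0 : j = i0
    · subst hj0; simp [Function.update_self]
    · rw [Function.update_of_ne hj0, Function.update_of_ne hj0]
      exact h j hj
  set f : ℕ → ℝ → ℝ≥0∞ := fun i x =>
    if Function.update (frogB ε x) i0 true i = false then q i (frogB ε x) else 0 with hf
  have hfF : ∀ i : ℕ, f i = fun x =>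
      (fun y : ℕ → Bool => if Function.update y i0 true i = false then q i y else 0)
        (frogB ε x) := fun i => rfl
  have hf_meas : ∀ i, Measurable (f i) := by
    intro i
    rw [hfF i]
    refine measurable_dep ε (i+1)
      (fun y : ℕ → Bool => if Function.update y i0 true i = false then q i y else 0)
      (fun y y' h => ?_)
    beta_reduce
    have h1 : Function.update y i0 true i = Function.update y' i0 true i := by
      by_cases hi0 : i = i0
      · subst hi0; simp [Function.update_self]
      · rw [Function.update_of_ne hi0, Function.update_of_ne hi0]
        exact h i (by omega)
    rw [h1, hq_dep i y y' (fun k hk => h k (by omega))]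
  have hFs : (fun x => Fsucc S (Function.update (frogB ε x) i0 true)) = fun x => ∑' i, f i x :=
    rfl
  have hE : ∫⁻ x, Fsucc S (Function.update (frogB ε x) i0 true) ∂frogμ
      = ∑' i, ∫⁻ x, f i x ∂frogμ := by
    rw [hFs]
    exact lintegral_tsum (fun i => (hf_meas i).aemeasurable)
  set M : ℕ → ℝ≥0∞ := fun i => ∫⁻ x, q i (frogB ε x) ∂frogμ with hM
  have hMi0 : M i0 = ∫⁻ x, ENNReal.ofReal (S.prob (frogB ε x) (some i0)) ∂frogμ := by
    simp only [hM, hq]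
    refine lintegral_congr fun x => ?_
    congr 1
    exact S.adapted _ _ i0 (fun j hj => Function.update_of_ne (by omega) _ _)
  have hD0 : ∫⁻ x, f i0 x ∂frogμ = 0 := by
    have : ∀ x, f i0 x = 0 := by
      intro x
      simp only [hf]
      rw [Function.update_self]
      simp
    simp only [this, lintegral_zero]
  have hDne : ∀ i, i ≠ i0 → ∫⁻ x, f i x ∂frogμ = ENNReal.ofReal (1 - ε) * M i := by
    intro i hi
    have heq : ∀ x, f i x = if frogB ε x i = false then q i (frogB ε x) else 0 := by
      intro x
      simp only [hf]
      rw [Function.update_of_ne hi]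
    rw [lintegral_congr heq]
    exact stepE ε hε0 hε1 i (q i) (hq_dep i)
  have hMsum : ∑' i, M i ≤ 1 := by
    have hq_meas : ∀ i, Measurable fun x => q i (frogB ε x) :=
      fun i => measurable_dep ε i (q i) (hq_dep i)
    have h1 : ∑' i, M i = ∫⁻ x, ∑' i, q i (frogB ε x) ∂frogμ :=
      (lintegral_tsum (fun i => (hq_meas i).aemeasurable)).symm
    rw [h1]
    have h2 : ∀ x, ∑' i, q i (frogB ε x) ≤ 1 := by
      intro x
      exact tsum_ofReal_le S (Function.update (frogB ε x) i0 true)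
    calc ∫⁻ x, ∑' i, q i (frogB ε x) ∂frogμ ≤ ∫⁻ _x, 1 ∂frogμ := lintegral_mono h2
      _ = 1 := by rw [lintegral_const, measure_univ, mul_one]
  -- E = (1-ε) * ∑' (if i = i0 then 0 else M i)
  have hEeq : ∫⁻ x, Fsucc S (Function.update (frogB ε x) i0 true) ∂frogμ
      = ENNReal.ofReal (1 - ε) * ∑' i, (if i = i0 then 0 else M i) := by
    rw [hE, ← ENNReal.tsum_mul_left]
    refine tsum_congr fun i => ?_
    by_cases hi : i = i0
    · subst hi; rw [hD0, if_pos rfl, mul_zero]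
    · rw [hDne i hi, if_neg hi]
  have hkey : (∑' i, (if i = i0 then 0 else M i)) + M i0 ≤ 1 := by
    have hsplit : ∑' i, M i = (∑' i, (if i = i0 then 0 else M i)) + M i0 := by
      have : ∀ i, M i = (if i = i0 then 0 else M i) + (if i = i0 then M i0 else 0) := by
        intro i
        by_cases hi : i = i0
        · subst hi; simp
        · simp [hi]
      rw [tsum_congr this, ENNReal.tsum_add, tsum_ite_eq i0 (fun _ => M i0)]
    rw [← hsplit]
    exact hMsum
  set E := ∫⁻ x, Fsucc S (Function.update (frogB ε x) i0 true) ∂frogμ with hEdef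
  have hc_ne : ENNReal.ofReal (1 - ε) * M i0 ≠ 0 := by
    refine mul_ne_zero ?_ ?_
    · exact (ENNReal.ofReal_pos.mpr (by linarith)).ne'
    · rw [hMi0]; exact hpos
  have hEc : E + ENNReal.ofReal (1 - ε) * M i0 ≤ ENNReal.ofReal (1 - ε) := by
    rw [hEeq, ← mul_add]
    calc ENNReal.ofReal (1 - ε) * ((∑' i, (if i = i0 then 0 else M i)) + M i0)
        ≤ ENNReal.ofReal (1 - ε) * 1 := by
          exact mul_le_mul_right hkey _
      _ = ENNReal.ofReal (1 - ε) := mul_one _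
  have hE_ne_top : E ≠ ∞ :=
    ne_top_of_le_ne_top (ENNReal.ofReal_ne_top (r := 1 - ε)) (le_trans le_self_add hEc)
  calc E < E + ENNReal.ofReal (1 - ε) * M i0 := ENNReal.lt_add_right hE_ne_top hc_ne
    _ ≤ ENNReal.ofReal (1 - ε) := hEc


end FrogAux

/-- Optimality of the main theorem: for every `ε ∈ (0,1)` and every frog-strategy `S`
there is a sequence `b` with `lim_{t→∞} N_t(b)/t = ε` on which `S` succeeds with
probability `< 1 - ε`.  Consequently no frog-strategy succeeds with probability `≥ 1 - ε`
on every `ε`-weakly sparse sequence. -/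
theorem main_theorem_optimal (ε : ℝ) (hε0 : 0 < ε) (hε1 : ε < 1) (S : FrogStrategy) :
    (∃ b : ℕ → Bool,
        Filter.Tendsto (fun t : ℕ => (cars b t : ℝ) / t) Filter.atTop (nhds ε) ∧
        succProb S b < 1 - ε) ∧
    ¬ (∀ b : ℕ → Bool, epsWeaklySparse ε b → 1 - ε ≤ succProb S b) := by
  have hmain : ∃ b : ℕ → Bool,
      Filter.Tendsto (fun t : ℕ => (cars b t : ℝ) / t) Filter.atTop (nhds ε) ∧
      succProb S b < 1 - ε := by
    by_cases hall : ∀ i, (∫⁻ x, ENNReal.ofReal (S.prob (FrogAux.frogB ε x) (some i))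
        ∂FrogAux.frogμ) = 0
    · exact FrogAux.final_assembly ε hε0 hε1 S (FrogAux.frogB ε)
        (FrogAux.density_ae ε hε0 hε1) (FrogAux.caseA ε hε0 hε1 S hall)
    · push_neg at hall
      obtain ⟨i0, hi0⟩ := hall
      exact FrogAux.final_assembly ε hε0 hε1 S
        (fun x => Function.update (FrogAux.frogB ε x) i0 true)
        (FrogAux.density_update ε hε0 hε1 i0) (FrogAux.caseB ε hε0 hε1 S i0 hi0)
  refine ⟨hmain, ?_⟩
  intro H
  obtain ⟨b, hb1, hb2⟩ := hmain
  have hsp : epsWeaklySparse ε b := le_of_eq hb1.liminf_eq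
  exact absurd (H b hsp) (not_le.mpr hb2)
end

section
/- For every δ > 0 there exists a frog-strategy S such that Succ(S, A_{ws}) ≥ 1 − δ, where A_{ws} is the set of weakly sparse sequences. -/
/-- `b` is weakly sparse if `lim_{s→∞} inf_{t ≥ s} N_t(b)/t = 0`. -/
def weaklySparse (b : ℕ → Bool) : Prop :=
  Filter.liminf (fun t : ℕ => (cars b t : ℝ) / t) Filter.atTop = 0

namespace Puzzle3Proof

open Filter Finset

/-- The "seed" bet at minute `i+1`. -/
noncomputable def theta (γ : ℝ) (i : ℕ) : ℝ := γ * (1 / 2) ^ (i + 1)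

/-- State of the frog: remaining mass `R` and bankroll `W`. -/
noncomputable def RW (γ : ℝ) (b : ℕ → Bool) : ℕ → ℝ × ℝ := fun n =>
  Nat.rec ((1 : ℝ), (0 : ℝ))
    (fun i s =>
      (s.1 - min s.1 (theta γ i + γ * s.2),
        if b i then s.2 / 2 else s.2 + min s.1 (theta γ i + γ * s.2))) n

noncomputable def Rf (γ : ℝ) (b : ℕ → Bool) (i : ℕ) : ℝ := (RW γ b i).1
noncomputable def Wf (γ : ℝ) (b : ℕ → Bool) (i : ℕ) : ℝ := (RW γ b i).2

/-- The amount the frog spends (probability of crossing) at minute `i+1`. -/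
noncomputable def pf (γ : ℝ) (b : ℕ → Bool) (i : ℕ) : ℝ :=
  min (Rf γ b i) (theta γ i + γ * Wf γ b i)

variable {γ : ℝ} {b b' : ℕ → Bool}

lemma Rf_zero : Rf γ b 0 = 1 := rfl
lemma Wf_zero : Wf γ b 0 = 0 := rfl
lemma Rf_succ (i : ℕ) : Rf γ b (i + 1) = Rf γ b i - pf γ b i := rfl
lemma Wf_succ (i : ℕ) :
    Wf γ b (i + 1) = if b i then Wf γ b i / 2 else Wf γ b i + pf γ b i := rfl

lemma theta_pos (hγ : 0 < γ) (i : ℕ) : 0 < theta γ i := by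
  have : (0:ℝ) < (1/2)^(i+1) := by positivity
  exact mul_pos hγ this

lemma theta_nonneg (hγ : 0 < γ) (i : ℕ) : 0 ≤ theta γ i := (theta_pos hγ i).le

lemma RW_nonneg (hγ : 0 < γ) : ∀ i, 0 ≤ Rf γ b i ∧ 0 ≤ Wf γ b i := by
  intro i
  induction i with
  | zero => exact ⟨by norm_num [Rf_zero], by norm_num [Wf_zero]⟩
  | succ i ih =>
    have hx : 0 ≤ theta γ i + γ * Wf γ b i :=
      add_nonneg (theta_nonneg hγ i) (mul_nonneg hγ.le ih.2)
    have hp : 0 ≤ pf γ b i := le_min ih.1 hx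
    constructor
    · rw [Rf_succ]
      have : pf γ b i ≤ Rf γ b i := min_le_left _ _
      linarith
    · rw [Wf_succ]
      by_cases hb : b i <;> simp [hb] <;> linarith [ih.2]

lemma Rf_nonneg (hγ : 0 < γ) (i : ℕ) : 0 ≤ Rf γ b i := (RW_nonneg hγ i).1
lemma Wf_nonneg (hγ : 0 < γ) (i : ℕ) : 0 ≤ Wf γ b i := (RW_nonneg hγ i).2

lemma pf_nonneg (hγ : 0 < γ) (i : ℕ) : 0 ≤ pf γ b i :=
  le_min (Rf_nonneg hγ i)
    (add_nonneg (theta_nonneg hγ i) (mul_nonneg hγ.le (Wf_nonneg hγ i)))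

lemma pf_le_Rf (i : ℕ) : pf γ b i ≤ Rf γ b i := min_le_left _ _

lemma pf_le_theta (i : ℕ) : pf γ b i ≤ theta γ i + γ * Wf γ b i := min_le_right _ _

lemma Rf_le_one (hγ : 0 < γ) (i : ℕ) : Rf γ b i ≤ 1 := by
  induction i with
  | zero => simp [Rf_zero]
  | succ i ih =>
    rw [Rf_succ]
    have := pf_nonneg (b := b) hγ i
    linarith

lemma sum_range_pf (hγ : 0 < γ) (t : ℕ) :
    ∑ j ∈ Finset.range t, pf γ b j = 1 - Rf γ b t := by
  induction t with
  | zero => simp [Rf_zero]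
  | succ t ih =>
    rw [Finset.sum_range_succ, ih, Rf_succ]
    ring

lemma summable_pf (hγ : 0 < γ) : Summable (pf γ b) := by
  apply summable_of_sum_range_le (c := 1) (fun n => pf_nonneg hγ n)
  intro n
  rw [sum_range_pf hγ]
  have := Rf_nonneg (b := b) hγ n
  linarith

lemma tsum_pf_le_one (hγ : 0 < γ) : ∑' i, pf γ b i ≤ 1 := by
  apply Summable.tsum_le_of_sum_range_le (summable_pf hγ)
  intro n
  rw [sum_range_pf hγ]
  have := Rf_nonneg (b := b) hγ n
  linarith

lemma RW_congr : ∀ i, (∀ j, j < i → b j = b' j) → RW γ b i = RW γ b' i := by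
  intro i
  induction i with
  | zero => intro _; rfl
  | succ i ih =>
    intro h
    have hi : RW γ b i = RW γ b' i := ih (fun j hj => h j (hj.trans (Nat.lt_succ_self i)))
    have hbi : b i = b' i := h i (Nat.lt_succ_self i)
    have e1 : RW γ b (i+1) =
        (Rf γ b i - pf γ b i, if b i then Wf γ b i / 2 else Wf γ b i + pf γ b i) := rfl
    have e2 : RW γ b' (i+1) =
        (Rf γ b' i - pf γ b' i, if b' i then Wf γ b' i / 2 else Wf γ b' i + pf γ b' i) := rfl
    rw [e1, e2]
    unfold pf Rf Wf
    rw [hi, hbi]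

lemma pf_congr (i : ℕ) (h : ∀ j, j < i → b j = b' j) : pf γ b i = pf γ b' i := by
  unfold pf Rf Wf
  rw [RW_congr i h]

/-- Partial sums of the geometric seeds. -/
lemma sum_theta_le (hγ : 0 < γ) (t : ℕ) : ∑ j ∈ Finset.range t, theta γ j ≤ γ := by
  have key : ∀ t : ℕ, ∑ j ∈ Finset.range t, ((1:ℝ)/2) ^ (j+1) = 1 - (1/2)^t := by
    intro t
    induction t with
    | zero => simp
    | succ t ih => rw [Finset.sum_range_succ, ih]; ring
  unfold theta
  rw [← Finset.mul_sum, key]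
  have : (0:ℝ) ≤ (1/2)^t := by positivity
  nlinarith

/-- The key accounting invariant: deaths are controlled by seeds plus banked success. -/
lemma invariant (hγ : 0 < γ) (t : ℕ) :
    (∑ j ∈ Finset.range t, if b j = true then pf γ b j else 0) + 2 * γ * Wf γ b t ≤
      (∑ j ∈ Finset.range t, theta γ j) +
        2 * γ * (∑ j ∈ Finset.range t, if b j = false then pf γ b j else 0) := by
  induction t with
  | zero => simp [Wf_zero]
  | succ t ih =>
    rw [Finset.sum_range_succ, Finset.sum_range_succ, Finset.sum_range_succ, Wf_succ]
    have hple := pf_le_theta (γ := γ) (b := b) t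
    have hW := Wf_nonneg (b := b) hγ t
    have hθ := theta_nonneg (γ := γ) hγ t
    cases hb : b t with
    | true => simp only [hb]; norm_num; linarith
    | false => simp only [hb]; norm_num; linarith

lemma death_partial_le (hγ : 0 < γ) (t : ℕ) :
    (∑ j ∈ Finset.range t, if b j = true then pf γ b j else 0) ≤ 3 * γ := by
  have h1 := invariant (b := b) hγ t
  have h2 := sum_theta_le hγ t
  have hW := Wf_nonneg (b := b) hγ t
  have h3 : (∑ j ∈ Finset.range t, if b j = false then pf γ b j else 0) ≤ 1 := by
    calc (∑ j ∈ Finset.range t, if b j = false then pf γ b j else 0)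
        ≤ ∑ j ∈ Finset.range t, pf γ b j := by
          apply Finset.sum_le_sum
          intro j _
          by_cases hb : b j <;> simp [hb, pf_nonneg (b := b) hγ j]
      _ = 1 - Rf γ b t := sum_range_pf hγ t
      _ ≤ 1 := by have := Rf_nonneg (b := b) hγ t; linarith
  nlinarith

lemma summable_death (hγ : 0 < γ) :
    Summable (fun j => if b j = true then pf γ b j else 0) := by
  apply Summable.of_nonneg_of_le (f := pf γ b) _ _ (summable_pf hγ)
  · intro j; by_cases hb : b j <;> simp [hb, pf_nonneg (b := b) hγ j]
  · intro j; by_cases hb : b j <;> simp [hb, pf_nonneg (b := b) hγ j]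

lemma summable_succ (hγ : 0 < γ) :
    Summable (fun j => if b j = false then pf γ b j else 0) := by
  apply Summable.of_nonneg_of_le (f := pf γ b) _ _ (summable_pf hγ)
  · intro j; by_cases hb : b j <;> simp [hb, pf_nonneg (b := b) hγ j]
  · intro j; by_cases hb : b j <;> simp [hb, pf_nonneg (b := b) hγ j]

lemma death_le (hγ : 0 < γ) :
    (∑' j, if b j = true then pf γ b j else 0) ≤ 3 * γ :=
  Summable.tsum_le_of_sum_range_le (summable_death hγ) (fun t => death_partial_le hγ t)

lemma cars_succ (t : ℕ) : cars b (t + 1) = cars b t + (if b t then 1 else 0) := by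
  unfold cars
  rw [Finset.range_add_one, Finset.filter_insert]
  by_cases hb : b t
  · rw [if_pos hb, if_pos hb, Finset.card_insert_of_notMem (by simp)]
  · simp [hb]

lemma cars_le (t : ℕ) : cars b t ≤ t := by
  calc cars b t ≤ (Finset.range t).card := Finset.card_filter_le _ _
    _ = t := Finset.card_range t

/-- Extraction of density dips from weak sparsity. -/
lemma dips (hb : weaklySparse b) {ε : ℝ} (hε : 0 < ε) (T : ℕ) :
    ∃ t, T ≤ t ∧ 1 ≤ t ∧ (cars b t : ℝ) < ε * t := by
  have hcob : Filter.IsCoboundedUnder (· ≥ ·) Filter.atTop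
      (fun t : ℕ => (cars b t : ℝ) / t) := by
    apply Filter.isCoboundedUnder_ge_of_le Filter.atTop (x := 1)
    intro t
    rcases Nat.eq_zero_or_pos t with h0 | h1
    · simp [h0]
    · rw [div_le_one (by exact_mod_cast h1)]
      exact_mod_cast cars_le t
  have hlt : Filter.liminf (fun t : ℕ => (cars b t : ℝ) / t) Filter.atTop < ε := by
    rw [hb]; exact hε
  have hfreq := Filter.frequently_lt_of_liminf_lt hcob hlt
  rw [Filter.frequently_atTop] at hfreq
  obtain ⟨t, ht, hlt'⟩ := hfreq (max T 1)
  refine ⟨t, le_trans (le_max_left _ _) ht, le_trans (le_max_right _ _) ht, ?_⟩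
  have ht0 : (0:ℝ) < t := by
    have : 1 ≤ t := le_trans (le_max_right _ _) ht
    exact_mod_cast this
  exact (div_lt_iff₀ ht0).mp hlt'

/-- On weakly sparse streams, the frog spends everything. -/
lemma tsum_pf_eq_one (hγ : 0 < γ) (hγ2 : γ ≤ 1) (hb : weaklySparse b) :
    ∑' i, pf γ b i = 1 := by
  by_contra hne
  have hT : ∑' i, pf γ b i < 1 := lt_of_le_of_ne (tsum_pf_le_one hγ) hne
  set T := ∑' i, pf γ b i with hTdef
  have hRlb : ∀ t, 1 - T ≤ Rf γ b t := by
    intro t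
    have hpart : ∑ j ∈ Finset.range t, pf γ b j ≤ T :=
      Summable.sum_le_tsum _ (fun j _ => pf_nonneg hγ j) (summable_pf hγ)
    rw [sum_range_pf hγ] at hpart
    linarith
  have hr : (0:ℝ) < 1 - T := by linarith
  -- the cap is never hit, so `pf` has the uncapped form
  have H : ∀ i, pf γ b i = theta γ i + γ * Wf γ b i := by
    intro i
    rcases le_total (Rf γ b i) (theta γ i + γ * Wf γ b i) with h | h
    · exfalso
      have h0 : Rf γ b (i+1) = 0 := by
        rw [Rf_succ]
        unfold pf
        rw [min_eq_left h]
        ring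
      have h1 := hRlb (i+1)
      rw [h0] at h1
      linarith
    · exact min_eq_right h
  -- the bankroll is uniformly bounded
  have hWub : ∀ i, Wf γ b i ≤ 1 / γ := by
    intro i
    have h1 : theta γ i + γ * Wf γ b i ≤ Rf γ b i := by
      rcases le_total (Rf γ b i) (theta γ i + γ * Wf γ b i) with h | h
      · exfalso
        have h0 : Rf γ b (i+1) = 0 := by
          rw [Rf_succ]
          unfold pf
          rw [min_eq_left h]
          ring
        have h2 := hRlb (i+1)
        rw [h0] at h2
        linarith
      · exact h
    have h2 : γ * Wf γ b i ≤ 1 := by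
      have := Rf_le_one (b := b) hγ i
      have := theta_nonneg (γ := γ) hγ i
      linarith
    rw [le_div_iff₀ hγ, mul_comm]
    exact h2
  -- there is a carless minute i₀
  set L := Real.log (1 + γ) with hLdef
  set M := Real.log (2 + 2 * γ) with hMdef
  have h1γ : (0:ℝ) < 1 + γ := by linarith
  have hL : 0 < L := Real.log_pos (by linarith)
  have hM : 0 < M := Real.log_pos (by linarith)
  have hLM : L ≤ M := Real.log_le_log h1γ (by linarith)
  set ε := L / (2 * M) with hεdef
  have hε : 0 < ε := by positivity
  have hε1 : ε < 1 := by
    rw [hεdef, div_lt_one (by positivity)]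
    linarith
  obtain ⟨t₁, _, ht₁1, hcars₁⟩ := dips hb hε 0
  have hzero : ∃ i₀, b i₀ = false := by
    by_contra hall
    push_neg at hall
    have hone : ∀ i, b i = true := fun i => by
      cases hbi : b i
      · exact absurd hbi (hall i)
      · rfl
    have : cars b t₁ = t₁ := by
      unfold cars
      rw [Finset.filter_true_of_mem (fun i _ => hone i), Finset.card_range]
    rw [this] at hcars₁
    have ht₁0 : (0:ℝ) < t₁ := by exact_mod_cast ht₁1
    nlinarith
  obtain ⟨i₀, hi₀⟩ := hzero
  -- growth of the bankroll
  set c0 := theta γ i₀ / (1 + γ) ^ (i₀ + 1) with hc0def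
  have hc0 : 0 < c0 := div_pos (theta_pos hγ i₀) (by positivity)
  have growth : ∀ s : ℕ,
      c0 * (1 + γ) ^ (i₀ + 1 + s - cars b (i₀ + 1 + s)) *
        (1 / 2) ^ (cars b (i₀ + 1 + s)) ≤ Wf γ b (i₀ + 1 + s) := by
    intro s
    induction s with
    | zero =>
      have hW1 : theta γ i₀ ≤ Wf γ b (i₀ + 1) := by
        rw [Wf_succ, hi₀]
        simp only [Bool.false_eq_true, if_false]
        have := Wf_nonneg (b := b) hγ i₀
        rw [H i₀]
        have := mul_nonneg hγ.le (Wf_nonneg (b := b) hγ i₀)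
        linarith
      have hle1 : (1 + γ) ^ (i₀ + 1 + 0 - cars b (i₀ + 1 + 0)) ≤ (1 + γ) ^ (i₀ + 1) := by
        apply pow_le_pow_right₀ (by linarith)
        omega
      have hle2 : ((1:ℝ) / 2) ^ (cars b (i₀ + 1 + 0)) ≤ 1 :=
        pow_le_one₀ (by norm_num) (by norm_num)
      calc c0 * (1 + γ) ^ (i₀ + 1 + 0 - cars b (i₀ + 1 + 0)) * (1 / 2) ^ (cars b (i₀ + 1 + 0))
          ≤ c0 * (1 + γ) ^ (i₀ + 1) * 1 := by
            apply mul_le_mul (by exact mul_le_mul_of_nonneg_left hle1 hc0.le) hle2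
              (by positivity) (by positivity)
        _ = theta γ i₀ := by
            rw [hc0def]
            field_simp
        _ ≤ Wf γ b (i₀ + 1) := hW1
    | succ s ih =>
      set t := i₀ + 1 + s with htdef
      have hcle : cars b t ≤ t := cars_le t
      have hts : i₀ + 1 + (s + 1) = t + 1 := by omega
      rw [hts]
      by_cases hbt : b t
      · have hc : cars b (t+1) = cars b t + 1 := by rw [cars_succ, if_pos hbt]
        have hexp : t + 1 - cars b (t+1) = t - cars b t := by omega
        rw [Wf_succ, if_pos hbt, hexp, hc, pow_succ]
        calc c0 * (1 + γ) ^ (t - cars b t) * ((1/2) ^ (cars b t) * (1/2))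
            = (c0 * (1 + γ) ^ (t - cars b t) * (1/2) ^ (cars b t)) / 2 := by ring
          _ ≤ Wf γ b t / 2 := by linarith
      · have hc : cars b (t+1) = cars b t := by simp [cars_succ, hbt]
        have hexp : t + 1 - cars b (t+1) = (t - cars b t) + 1 := by omega
        rw [Wf_succ, if_neg hbt, hexp, hc, pow_succ]
        have hWt := Wf_nonneg (b := b) hγ t
        have hgrow : (1 + γ) * Wf γ b t ≤ Wf γ b t + pf γ b t := by
          rw [H t]
          have := theta_nonneg (γ := γ) hγ t
          nlinarith
        calc c0 * ((1 + γ) ^ (t - cars b t) * (1 + γ)) * (1/2) ^ (cars b t)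
            = (1 + γ) * (c0 * (1 + γ) ^ (t - cars b t) * (1/2) ^ (cars b t)) := by ring
          _ ≤ (1 + γ) * Wf γ b t := by
              apply mul_le_mul_of_nonneg_left ih (by linarith)
          _ ≤ Wf γ b t + pf γ b t := hgrow
  -- convert the bound into exponential form and derive a contradiction
  have hexp1 : (1 + γ) = Real.exp L := (Real.exp_log h1γ).symm
  have hhalf : ((1:ℝ)/2) = Real.exp (- Real.log 2) := by
    rw [Real.exp_neg, Real.exp_log (by norm_num : (0:ℝ) < 2)]
    norm_num
  have hMsplit : M = Real.log 2 + L := by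
    rw [hMdef, hLdef, show (2:ℝ) + 2*γ = 2 * (1+γ) by ring,
      Real.log_mul (by norm_num) (by linarith)]
  -- find a threshold beyond which the bankroll would be too big
  have htend : Filter.Tendsto (fun t : ℕ => c0 * Real.exp ((t : ℝ) * L / 2))
      Filter.atTop Filter.atTop := by
    apply Filter.Tendsto.const_mul_atTop hc0
    apply Real.tendsto_exp_atTop.comp
    have h2 : Filter.Tendsto (fun t : ℕ => (t:ℝ)) Filter.atTop Filter.atTop :=
      tendsto_natCast_atTop_atTop
    have := h2.atTop_mul_const (show (0:ℝ) < L / 2 by positivity)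
    simpa [mul_div_assoc] using this
  obtain ⟨t₀, ht₀⟩ := (htend.eventually_gt_atTop (1/γ)).exists_forall_of_atTop
  -- take a deep dip
  obtain ⟨t, htT, ht1, hcars⟩ := dips hb hε (max t₀ (i₀ + 1))
  have hti₀ : i₀ + 1 ≤ t := le_trans (le_max_right _ _) htT
  have htt₀ : t₀ ≤ t := le_trans (le_max_left _ _) htT
  have hWt := growth (t - (i₀ + 1))
  rw [show i₀ + 1 + (t - (i₀ + 1)) = t by omega] at hWt
  -- exponential lower bound
  set N := cars b t with hNdef
  have hNle : N ≤ t := cars_le t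
  have hNreal : (N:ℝ) < ε * t := hcars
  have hpow : (1 + γ) ^ (t - N) * ((1:ℝ)/2) ^ N =
      Real.exp (((t:ℝ) - N) * L - N * Real.log 2) := by
    rw [hexp1, hhalf, ← Real.exp_nat_mul, ← Real.exp_nat_mul, ← Real.exp_add]
    congr 1
    have : ((t - N : ℕ) : ℝ) = (t:ℝ) - N := by
      rw [Nat.cast_sub hNle]
    rw [this]
    ring
  have hexparg : (t:ℝ) * L / 2 ≤ ((t:ℝ) - N) * L - N * Real.log 2 := by
    have h1 : ((t:ℝ) - N) * L - N * Real.log 2 = (t:ℝ) * L - N * M := by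
      rw [hMsplit]; ring
    rw [h1]
    have h2 : (N:ℝ) * M ≤ ε * t * M := by
      apply mul_le_mul_of_nonneg_right hNreal.le hM.le
    have h3 : ε * t * M = (t:ℝ) * L / 2 := by
      rw [hεdef]
      field_simp
    linarith
  have hfinal : 1 / γ < Wf γ b t := by
    calc 1 / γ < c0 * Real.exp ((t:ℝ) * L / 2) := ht₀ t htt₀
      _ ≤ c0 * Real.exp (((t:ℝ) - N) * L - N * Real.log 2) := by
          apply mul_le_mul_of_nonneg_left (Real.exp_le_exp.mpr hexparg) hc0.le
      _ = c0 * ((1 + γ) ^ (t - N) * ((1:ℝ)/2) ^ N) := by rw [hpow]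
      _ = c0 * (1 + γ) ^ (t - N) * ((1:ℝ)/2) ^ N := by ring
      _ ≤ Wf γ b t := hWt
  have := hWub t
  linarith

end Puzzle3Proof

open Puzzle3Proof in
/-- Puzzle 3: for every `δ > 0` there is a frog-strategy succeeding with probability
`≥ 1 - δ` on every weakly sparse car-stream, i.e. `Succ(S, A_{ws}) ≥ 1 - δ`. -/
theorem puzzle3 (δ : ℝ) (hδ : 0 < δ) :
    ∃ S : FrogStrategy, ∀ b : ℕ → Bool, weaklySparse b → 1 - δ ≤ succProb S b := by
  set γ := min δ 1 / 3 with hγdef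
  have hγ : 0 < γ := by
    have := lt_min hδ one_pos
    rw [hγdef]
    linarith
  have hγ2 : γ ≤ 1 := by
    have := min_le_right δ 1
    rw [hγdef]
    linarith
  have hγ3 : 3 * γ ≤ δ := by
    have := min_le_left δ 1
    rw [hγdef]
    linarith
  refine ⟨{
    prob := fun b o => match o with
      | some i => pf γ b i
      | none => 1 - ∑' i, pf γ b i
    nonneg := ?_
    total := ?_
    adapted := ?_ }, ?_⟩
  · intro b o
    match o with
    | some i => exact pf_nonneg hγ i
    | none =>
      have := tsum_pf_le_one (b := b) hγ
      simp only
      linarith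
  · intro b
    set f : Option ℕ → ℝ := fun o => match o with
      | some i => pf γ b i
      | none => 1 - ∑' i, pf γ b i with hf
    show ∑' o : Option ℕ, f o = 1
    set T := ∑' i, pf γ b i with hT
    have hsum : HasSum (pf γ b) T := (summable_pf hγ).hasSum
    -- split f as point mass at none plus the some-part
    set f1 : Option ℕ → ℝ := fun o => if o = none then 1 - T else 0 with hf1
    set f2 : Option ℕ → ℝ := fun o => match o with
      | some i => pf γ b i
      | none => 0 with hf2
    have hfeq : f = fun o => f1 o + f2 o := by
      funext o
      match o with
      | some i => simp [hf, hf1, hf2]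
      | none => simp [hf, hf1, hf2]
    have h1 : HasSum f1 (1 - T) := hasSum_ite_eq none (1 - T)
    have h2 : HasSum f2 T := by
      have hinj : Function.Injective (some : ℕ → Option ℕ) := Option.some_injective ℕ
      have hzero : ∀ o, o ∉ Set.range (some : ℕ → Option ℕ) → f2 o = 0 := by
        intro o ho
        match o with
        | some i => exact absurd ⟨i, rfl⟩ ho
        | none => rfl
      exact (hinj.hasSum_iff hzero).mp hsum
    have : HasSum f 1 := by
      rw [hfeq]
      have := h1.add h2
      simpa using this
    exact this.tsum_eq
  · intro b b' i h
    exact pf_congr i h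
  · intro b hb
    have htot : ∑' i, pf γ b i = 1 := tsum_pf_eq_one hγ hγ2 hb
    show 1 - δ ≤ ∑' i : ℕ, if b i = false then pf γ b i else 0
    have hsplit : ∀ i, (if b i = false then pf γ b i else 0) +
        (if b i = true then pf γ b i else 0) = pf γ b i := by
      intro i
      by_cases hbi : b i <;> simp [hbi]
    have hadd : (∑' i, if b i = false then pf γ b i else 0) +
        (∑' i, if b i = true then pf γ b i else 0) = ∑' i, pf γ b i := by
      rw [← Summable.tsum_add (summable_succ hγ) (summable_death hγ)]
      exact tsum_congr hsplit
    have hdeath := death_le (b := b) hγ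
    have : (∑' i, if b i = false then pf γ b i else 0) = 1 - (∑' i, if b i = true then pf γ b i else 0) := by
      rw [← htot, ← hadd]; ring
    rw [this]
    linarith
end
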